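/- arXiv:2001.00274 — 6 statements merged into one kernel-verified Lean document; each statement's English description precedes it below -/
import Mathlib

section
/- Let G be a simple undirected graph on a vertex set W and let S ⊆ W be a bipartition class, i.e., every edge of G has exactly one endpoint in S. Let Ω(G) be the set of bijections π : W → W such that π(x) is adjacent to x in G for every x ∈ W. Then the map sending π to the pair (M₁, M₂), where M₁ = {{v, π(v)} : v ∈ S} and M₂ = {{u, π(u)} : u ∈ W \ S}, is a bijection from Ω(G) onto the set of pairs of perfect matchings of G. -/
/-- A perfect matching of a simple undirected graph: a set of edges of the graph
such that every vertex belongs to exactly one edge of the set. -/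
def IsPerfectMatching {W : Type*} (G : SimpleGraph W) (M : Set (Sym2 W)) : Prop :=
  M ⊆ G.edgeSet ∧ ∀ v : W, ∃! e, e ∈ M ∧ v ∈ e

section Aux

variable {W : Type*} {G : SimpleGraph W} {M : Set (Sym2 W)}

/-- The partner of a vertex in a perfect matching. -/
noncomputable def pmPartner (h : IsPerfectMatching G M) (v : W) : W :=
  Sym2.Mem.other (h.2 v).exists.choose_spec.2

lemma pmPartner_edge (h : IsPerfectMatching G M) (v : W) :
    s(v, pmPartner h v) ∈ M := by
  have hsp := (h.2 v).exists.choose_spec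
  rw [pmPartner, Sym2.other_spec hsp.2]
  exact hsp.1

lemma pmPartner_adj (h : IsPerfectMatching G M) (v : W) :
    G.Adj v (pmPartner h v) :=
  (SimpleGraph.mem_edgeSet G).mp (h.1 (pmPartner_edge h v))

lemma pmPartner_unique (h : IsPerfectMatching G M) {v w : W}
    (hw : s(v, w) ∈ M) : w = pmPartner h v := by
  have h1 : s(v, w) = s(v, pmPartner h v) :=
    (h.2 v).unique ⟨hw, Sym2.mem_mk_left v w⟩
      ⟨pmPartner_edge h v, Sym2.mem_mk_left _ _⟩
  exact Sym2.congr_right.mp h1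

/-- The edge set produced from a restricted permutation on one side of the
bipartition is a perfect matching. -/
lemma matching_of_perm {S : Set W}
    (hS : ∀ v u : W, G.Adj v u → (v ∈ S ↔ u ∉ S)) (π : W → W)
    (hb : Function.Bijective π) (hr : ∀ x : W, G.Adj x (π x)) :
    IsPerfectMatching G {e | ∃ v ∈ S, e = s(v, π v)} := by
  constructor
  · rintro e ⟨v, hv, rfl⟩
    exact (SimpleGraph.mem_edgeSet G).mpr (hr v)
  · intro x
    by_cases hx : x ∈ S
    · refine ⟨s(x, π x), ⟨⟨x, hx, rfl⟩, Sym2.mem_mk_left _ _⟩, ?_⟩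
      rintro e ⟨⟨v, hv, rfl⟩, hxe⟩
      rcases Sym2.mem_iff.mp hxe with rfl | rfl
      · rfl
      · exact absurd hx ((hS v (π v) (hr v)).mp hv)
    · obtain ⟨v, rfl⟩ := hb.2 x
      have hv : v ∈ S := (hS v (π v) (hr v)).mpr hx
      refine ⟨s(v, π v), ⟨⟨v, hv, rfl⟩, Sym2.mem_mk_right _ _⟩, ?_⟩
      rintro e ⟨⟨u, hu, rfl⟩, hxe⟩
      rcases Sym2.mem_iff.mp hxe with h | h
      · exact absurd (h ▸ hx) (fun hc => hc hu)
      · rw [hb.1 h]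

end Aux

/-- for a simple graph `G` with bipartition class `S`, the map
`π ↦ (M₁, M₂)`, with `M₁ = {{v, π v} : v ∈ S}` and `M₂ = {{u, π u} : u ∉ S}`,
is a bijection from the set of `G`-restricted permutations onto the set of pairs
of perfect matchings of `G`. -/
theorem bipartite_restricted_permutations_equiv_pairs_of_matchings
    {W : Type*} (G : SimpleGraph W) (S : Set W)
    (hS : ∀ v u : W, G.Adj v u → (v ∈ S ↔ u ∉ S)) :
    Set.BijOn
      (fun π : W → W =>
        (({e | ∃ v ∈ S, e = s(v, π v)} : Set (Sym2 W)),
         ({e | ∃ u ∈ Sᶜ, e = s(u, π u)} : Set (Sym2 W))))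
      {π : W → W | Function.Bijective π ∧ ∀ x : W, G.Adj x (π x)}
      {p : Set (Sym2 W) × Set (Sym2 W) |
        IsPerfectMatching G p.1 ∧ IsPerfectMatching G p.2} := by
  classical
  have hS' : ∀ v u : W, G.Adj v u → (v ∈ Sᶜ ↔ u ∉ Sᶜ) := by
    intro v u h
    have := hS v u h
    simp only [Set.mem_compl_iff]
    tauto
  refine ⟨?_, ?_, ?_⟩
  · -- MapsTo
    rintro π ⟨hb, hr⟩
    exact ⟨matching_of_perm hS π hb hr, matching_of_perm hS' π hb hr⟩
  · -- InjOn
    rintro π ⟨hb, hr⟩ π' ⟨hb', hr'⟩ heq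
    simp only [Prod.mk.injEq] at heq
    obtain ⟨h1, h2⟩ := heq
    funext x
    by_cases hx : x ∈ S
    · have hmem : s(x, π x) ∈ {e | ∃ v ∈ S, e = s(v, π' v)} := by
        rw [← h1]; exact ⟨x, hx, rfl⟩
      obtain ⟨v, hv, he⟩ := hmem
      rcases Sym2.eq_iff.mp he with ⟨rfl, h⟩ | ⟨h3, h4⟩
      · exact h
      · exact absurd (h3 ▸ hx) ((hS v (π' v) (hr' v)).mp hv)
    · have hmem : s(x, π x) ∈ {e | ∃ u ∈ Sᶜ, e = s(u, π' u)} := by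
        rw [← h2]; exact ⟨x, hx, rfl⟩
      obtain ⟨v, hv, he⟩ := hmem
      rcases Sym2.eq_iff.mp he with ⟨rfl, h⟩ | ⟨h3, h4⟩
      · exact h
      · exact absurd (h3 ▸ hx) (fun hc => ((hS' v (π' v) (hr' v)).mp hv) hc)
  · -- SurjOn
    rintro p ⟨h1, h2⟩
    set π : W → W := fun x => if x ∈ S then pmPartner h1 x else pmPartner h2 x
      with hπdef
    have hπS : ∀ x ∈ S, π x = pmPartner h1 x := fun x hx => by
      simp [hπdef, hx]
    have hπSc : ∀ x, x ∉ S → π x = pmPartner h2 x := fun x hx => by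
      simp [hπdef, hx]
    have hadj : ∀ x, G.Adj x (π x) := by
      intro x
      by_cases hx : x ∈ S
      · rw [hπS x hx]; exact pmPartner_adj h1 x
      · rw [hπSc x hx]; exact pmPartner_adj h2 x
    have hside1 : ∀ x ∈ S, π x ∉ S := fun x hx =>
      (hS x (π x) (hadj x)).mp hx
    have hside2 : ∀ x, x ∉ S → π x ∈ S := fun x hx => by
      by_contra hc
      exact hx ((hS x (π x) (hadj x)).mpr hc)
    have hinj : Function.Injective π := by
      intro a b hab
      by_cases ha : a ∈ S <;> by_cases hb : b ∈ S
      · rw [hπS a ha, hπS b hb] at hab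
        have hma : s(a, pmPartner h1 a) ∈ p.1 := pmPartner_edge h1 a
        have hmb : s(b, pmPartner h1 a) ∈ p.1 := hab ▸ pmPartner_edge h1 b
        have heq : s(a, pmPartner h1 a) = s(b, pmPartner h1 a) :=
          (h1.2 (pmPartner h1 a)).unique ⟨hma, Sym2.mem_mk_right _ _⟩
            ⟨hmb, Sym2.mem_mk_right _ _⟩
        rcases Sym2.eq_iff.mp heq with ⟨h, _⟩ | ⟨h3, h4⟩
        · exact h
        · exact absurd h3 (pmPartner_adj h1 a).ne
      · exfalso
        apply hside1 a ha
        rw [hab]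
        exact hside2 b hb
      · exfalso
        apply hside1 b hb
        rw [← hab]
        exact hside2 a ha
      · rw [hπSc a ha, hπSc b hb] at hab
        have hma : s(a, pmPartner h2 a) ∈ p.2 := pmPartner_edge h2 a
        have hmb : s(b, pmPartner h2 a) ∈ p.2 := hab ▸ pmPartner_edge h2 b
        have heq : s(a, pmPartner h2 a) = s(b, pmPartner h2 a) :=
          (h2.2 (pmPartner h2 a)).unique ⟨hma, Sym2.mem_mk_right _ _⟩
            ⟨hmb, Sym2.mem_mk_right _ _⟩
        rcases Sym2.eq_iff.mp heq with ⟨h, _⟩ | ⟨h3, h4⟩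
        · exact h
        · exact absurd h3 (pmPartner_adj h2 a).ne
    have hsurj : Function.Surjective π := by
      intro y
      by_cases hy : y ∈ S
      · -- use M₂ : partner of y lies outside S
        refine ⟨pmPartner h2 y, ?_⟩
        have hz : pmPartner h2 y ∉ S := by
          intro hc
          exact (hS y (pmPartner h2 y) (pmPartner_adj h2 y)).mp hy hc
        rw [hπSc _ hz]
        have : s(pmPartner h2 y, y) ∈ p.2 := by
          rw [Sym2.eq_swap]; exact pmPartner_edge h2 y
        exact (pmPartner_unique h2 this).symm
      · refine ⟨pmPartner h1 y, ?_⟩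
        have hz : pmPartner h1 y ∈ S := by
          by_contra hc
          exact hy ((hS y (pmPartner h1 y) (pmPartner_adj h1 y)).mpr hc)
        rw [hπS _ hz]
        have : s(pmPartner h1 y, y) ∈ p.1 := by
          rw [Sym2.eq_swap]; exact pmPartner_edge h1 y
        exact (pmPartner_unique h1 this).symm
    refine ⟨π, ⟨⟨hinj, hsurj⟩, hadj⟩, ?_⟩
    have e1 : {e | ∃ v ∈ S, e = s(v, π v)} = p.1 := by
      apply Set.eq_of_subset_of_subset
      · rintro e ⟨v, hv, rfl⟩
        rw [hπS v hv]
        exact pmPartner_edge h1 v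
      · intro e he
        induction e using Sym2.ind with
        | _ a b =>
          have hab : G.Adj a b := (SimpleGraph.mem_edgeSet G).mp (h1.1 he)
          by_cases ha : a ∈ S
          · refine ⟨a, ha, ?_⟩
            rw [hπS a ha, ← pmPartner_unique h1 he]
          · have hb : b ∈ S := by
              by_contra hc
              exact ha ((hS a b hab).mpr hc)
            refine ⟨b, hb, ?_⟩
            have hba : s(b, a) ∈ p.1 := by rw [Sym2.eq_swap]; exact he
            rw [hπS b hb, Sym2.eq_swap]
            exact Sym2.congr_right.mpr (pmPartner_unique h1 hba)
    have e2 : {e | ∃ u ∈ Sᶜ, e = s(u, π u)} = p.2 := by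
      apply Set.eq_of_subset_of_subset
      · rintro e ⟨v, hv, rfl⟩
        rw [hπSc v hv]
        exact pmPartner_edge h2 v
      · intro e he
        induction e using Sym2.ind with
        | _ a b =>
          have hab : G.Adj a b := (SimpleGraph.mem_edgeSet G).mp (h2.1 he)
          by_cases ha : a ∈ S
          · have hb : b ∉ S := (hS a b hab).mp ha
            refine ⟨b, hb, ?_⟩
            have hba : s(b, a) ∈ p.2 := by rw [Sym2.eq_swap]; exact he
            rw [hπSc b hb, Sym2.eq_swap]
            exact Sym2.congr_right.mpr (pmPartner_unique h2 hba)
          · refine ⟨a, ha, ?_⟩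
            rw [hπSc a ha, ← pmPartner_unique h2 he]
    have : p = (p.1, p.2) := rfl
    rw [this]
    simp only [Prod.mk.injEq]
    exact ⟨e1, e2⟩
end

section
/- Let W be a set, S ⊆ W, and E ⊆ W × W a directed graph such that every edge (x, y) ∈ E has exactly one of its two endpoints in S (i.e., the directed graph is bipartite with parts S and W \ S). Let G̃ be the simple undirected graph on W in which x is adjacent to y if and only if (x, y) ∈ E or (y, x) ∈ E. Then for every bijection π : W → W with (x, π(x)) ∈ E for all x ∈ W, the edge sets M¹_π = {{v, π(v)} : v ∈ S} and M²_π = {{u, π(u)} : u ∈ W \ S} are perfect matchings of G̃, and the map π ↦ (M¹_π, M²_π) is injective on the set of all such bijections π. -/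
/-- for a directed bipartite graph `E` on `W` with parts `S` and `Sᶜ`
and its undirected version `G`, every `E`-restricted permutation `π` yields a pair of
perfect matchings `M¹_π = {{v, π v} : v ∈ S}` and `M²_π = {{u, π u} : u ∉ S}` of `G`,
and `π ↦ (M¹_π, M²_π)` is injective on the set of `E`-restricted permutations. -/
theorem bipartite_directed_restricted_permutations_embed_in_matching_pairs
    {W : Type*} (S : Set W) (E : Set (W × W))
    (hE : ∀ p ∈ E, (p.1 ∈ S ↔ p.2 ∉ S))
    (G : SimpleGraph W)
    (hG : ∀ x y : W, G.Adj x y ↔ ((x, y) ∈ E ∨ (y, x) ∈ E)) :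
    (∀ π : W → W, Function.Bijective π → (∀ x : W, (x, π x) ∈ E) →
      IsPerfectMatching G ({e | ∃ v ∈ S, e = s(v, π v)} : Set (Sym2 W)) ∧
      IsPerfectMatching G ({e | ∃ u ∈ Sᶜ, e = s(u, π u)} : Set (Sym2 W))) ∧
    Set.InjOn
      (fun π : W → W =>
        (({e | ∃ v ∈ S, e = s(v, π v)} : Set (Sym2 W)),
         ({e | ∃ u ∈ Sᶜ, e = s(u, π u)} : Set (Sym2 W))))
      {π : W → W | Function.Bijective π ∧ ∀ x : W, (x, π x) ∈ E} := by
  have key : ∀ π : W → W, Function.Bijective π → (∀ x : W, (x, π x) ∈ E) →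
      ∀ T : Set W, (∀ x, x ∈ T ↔ π x ∉ T) →
      IsPerfectMatching G {e | ∃ v ∈ T, e = s(v, π v)} := by
    intro π hbij hres T hT
    constructor
    · rintro e ⟨v, hv, rfl⟩
      rw [SimpleGraph.mem_edgeSet, hG]
      exact Or.inl (hres v)
    · intro w
      by_cases hw : w ∈ T
      · refine ⟨s(w, π w), ⟨⟨w, hw, rfl⟩, by simp⟩, ?_⟩
        rintro e ⟨⟨v, hv, rfl⟩, hwe⟩
        rcases Sym2.mem_iff.mp hwe with rfl | rfl
        · rfl
        · exact absurd hw ((hT v).mp hv)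
      · obtain ⟨v, rfl⟩ := hbij.surjective w
        have hv : v ∈ T := (hT v).mpr hw
        refine ⟨s(v, π v), ⟨⟨v, hv, rfl⟩, by simp⟩, ?_⟩
        rintro e ⟨⟨v', hv', rfl⟩, hwe⟩
        rcases Sym2.mem_iff.mp hwe with h | h
        · exact absurd (h ▸ hw) (fun hh => hh hv')
        · rw [hbij.injective h]
  constructor
  · intro π hbij hres
    have hiff : ∀ x, x ∈ S ↔ π x ∉ S := fun x => hE _ (hres x)
    refine ⟨key π hbij hres S hiff, key π hbij hres Sᶜ fun x => ?_⟩
    simp only [Set.mem_compl_iff, not_not]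
    exact not_iff_comm.mp (hiff x).symm
  · intro π hπ σ hσ heq
    obtain ⟨hπb, hπr⟩ := hπ
    obtain ⟨hσb, hσr⟩ := hσ
    have hiffπ : ∀ x, x ∈ S ↔ π x ∉ S := fun x => hE _ (hπr x)
    have hiffσ : ∀ x, x ∈ S ↔ σ x ∉ S := fun x => hE _ (hσr x)
    have h1 : ({e | ∃ v ∈ S, e = s(v, π v)} : Set (Sym2 W)) =
        {e | ∃ v ∈ S, e = s(v, σ v)} := congrArg Prod.fst heq
    have h2 : ({e | ∃ u ∈ Sᶜ, e = s(u, π u)} : Set (Sym2 W)) =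
        {e | ∃ u ∈ Sᶜ, e = s(u, σ u)} := congrArg Prod.snd heq
    funext x
    by_cases hx : x ∈ S
    · have : s(x, π x) ∈ ({e | ∃ v ∈ S, e = s(v, σ v)} : Set (Sym2 W)) :=
        h1 ▸ ⟨x, hx, rfl⟩
      obtain ⟨v, hv, he⟩ := this
      rcases Sym2.eq_iff.mp he with ⟨rfl, h⟩ | ⟨h, h'⟩
      · exact h
      · exact absurd (h ▸ hx) ((hiffσ v).mp hv)
    · have : s(x, π x) ∈ ({e | ∃ u ∈ Sᶜ, e = s(u, σ u)} : Set (Sym2 W)) :=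
        h2 ▸ ⟨x, hx, rfl⟩
      obtain ⟨v, hv, he⟩ := this
      rcases Sym2.eq_iff.mp he with ⟨rfl, h⟩ | ⟨h, h'⟩
      · exact h
      · have : σ v ∈ S := not_not.mp (fun hh => hv ((hiffσ v).mpr hh))
        exact absurd (h ▸ this) hx
end

section
/- Let n ≥ 4 be an even integer and let T_n be the simple graph on the vertex set (ℤ/nℤ)² in which x is adjacent to y if and only if x − y lies in the image of {(1,0),(−1,0),(0,1),(0,−1)} modulo n (the n×n torus grid graph). Then the number of permutations g of (ℤ/nℤ)² with g(x) − x in the image of {(1,0),(−1,0),(0,1),(0,−1)} modulo n for all x equals the square of the number of perfect matchings of T_n. -/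
/-- The restricting set `A_+ = {(1,0),(−1,0),(0,1),(0,−1)} ⊆ ℤ²`. -/
def A_plus : Set (ℤ × ℤ) := {(1, 0), (-1, 0), (0, 1), (0, -1)}

/-- `F_+(n)`: the number of permutations `g` of the discrete torus `(ℤ/nℤ)²` with
`g x − x` in the image of `A_+` modulo `n` for all `x`. -/
noncomputable def Fplus (n : ℕ) : ℕ :=
  Set.ncard {g : Equiv.Perm (ZMod n × ZMod n) |
    ∀ x : ZMod n × ZMod n,
      g x - x ∈ (fun p : ℤ × ℤ => ((p.1 : ZMod n), (p.2 : ZMod n))) '' A_plus}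

/-- In a perfect matching, each vertex has a unique partner. -/
lemma partner_exu {W : Type*} {G : SimpleGraph W} {M : Set (Sym2 W)}
    (hM : IsPerfectMatching G M) (v : W) : ∃! w, s(v, w) ∈ M := by
  obtain ⟨e, ⟨heM, hve⟩, huniq⟩ := hM.2 v
  obtain ⟨b, rfl⟩ := Sym2.mem_iff_exists.mp hve
  refine ⟨b, heM, fun w hw => ?_⟩
  exact Sym2.congr_right.mp (huniq s(v, w) ⟨hw, Sym2.mem_mk_left v w⟩)

/-- for even `n ≥ 4`, the number of `A_+`-restricted permutations of the
discrete torus `(ℤ/nℤ)²` equals the square of the number of perfect matchings of the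
`n×n` torus grid graph `T_n`. -/
theorem torus_restricted_permutations_eq_sq_torus_matchings
    (n : ℕ) (hn : 4 ≤ n) (hev : Even n)
    (T : SimpleGraph (ZMod n × ZMod n))
    (hT : ∀ x y : ZMod n × ZMod n, T.Adj x y ↔
      x - y ∈ (fun p : ℤ × ℤ => ((p.1 : ZMod n), (p.2 : ZMod n))) '' A_plus) :
    Fplus n =
      (Set.ncard {M : Set (Sym2 (ZMod n × ZMod n)) | IsPerfectMatching T M}) ^ 2 := by
  classical
  unfold Fplus
  set D : Set (ZMod n × ZMod n) :=
    (fun p : ℤ × ℤ => ((p.1 : ZMod n), (p.2 : ZMod n))) '' A_plus with hD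
  have h2 : (2 : ℕ) ∣ n := hev.two_dvd
  -- parity function
  let χ : ZMod n →+* ZMod 2 := ZMod.castHom h2 (ZMod 2)
  let ε : ZMod n × ZMod n → ZMod 2 := fun x => χ x.1 + χ x.2
  have hεsub : ∀ x y : ZMod n × ZMod n, ε (x - y) = ε x - ε y := by
    intro x y
    show χ (x.1 - y.1) + χ (x.2 - y.2) = (χ x.1 + χ x.2) - (χ y.1 + χ y.2)
    rw [map_sub, map_sub]; ring
  have hεD : ∀ d ∈ D, ε d = 1 := by
    rintro d ⟨p, hp, rfl⟩
    simp only [A_plus, Set.mem_insert_iff, Set.mem_singleton_iff] at hp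
    rcases hp with rfl | rfl | rfl | rfl <;>
      · show χ _ + χ _ = 1
        push_cast
        simp [map_one, map_zero, map_neg]
        try decide
  have hDsymm : ∀ d ∈ D, -d ∈ D := by
    rintro d ⟨p, hp, rfl⟩
    simp only [A_plus, Set.mem_insert_iff, Set.mem_singleton_iff] at hp
    rcases hp with rfl | rfl | rfl | rfl
    · exact ⟨(-1, 0), by simp [A_plus], by simp [Prod.ext_iff]⟩
    · exact ⟨(1, 0), by simp [A_plus], by simp [Prod.ext_iff]⟩
    · exact ⟨(0, -1), by simp [A_plus], by simp [Prod.ext_iff]⟩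
    · exact ⟨(0, 1), by simp [A_plus], by simp [Prod.ext_iff]⟩
  -- small ZMod 2 facts
  have z2a : ∀ a c : ZMod 2, a ≠ c → a = c + 1 := by decide
  have z2b : ∀ c : ZMod 2, c + 1 ≠ c := by decide
  have z2c : ∀ a b : ZMod 2, a - b = 1 → b = a + 1 := by decide
  have z2d : ∀ a c : ZMod 2, a + 1 = c + 1 → a = c := by decide
  have z2e : ∀ a : ZMod 2, ¬ a = 1 → a = 0 := by decide
  -- displacement implies parity flip
  have hflipD : ∀ x y : ZMod n × ZMod n, x - y ∈ D → ε y = ε x + 1 := by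
    intro x y hxy
    exact z2c _ _ (by rw [← hεsub]; exact hεD _ hxy)
  have hadjflip : ∀ x y : ZMod n × ZMod n, T.Adj x y → ε y = ε x + 1 := by
    intro x y hxy; exact hflipD x y ((hT x y).mp hxy)
  -- the class-c matching associated to a restricted permutation
  let Mc : ZMod 2 → Equiv.Perm (ZMod n × ZMod n) → Set (Sym2 (ZMod n × ZMod n)) :=
    fun c g => {e | ∃ x, ε x = c ∧ e = s(x, g x)}
  have hgflip : ∀ (g : Equiv.Perm (ZMod n × ZMod n)), (∀ x, g x - x ∈ D) →
      ∀ x, ε (g x) = ε x + 1 := by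
    intro g hg x; exact hflipD x (g x) (by rw [← neg_sub]; exact hDsymm _ (hg x))
  have hgadj : ∀ (g : Equiv.Perm (ZMod n × ZMod n)), (∀ x, g x - x ∈ D) →
      ∀ x, T.Adj x (g x) := by
    intro g hg x
    exact (hT x (g x)).mpr (by rw [← neg_sub]; exact hDsymm _ (hg x))
  have hMc : ∀ (c : ZMod 2) (g : Equiv.Perm (ZMod n × ZMod n)), (∀ x, g x - x ∈ D) →
      IsPerfectMatching T (Mc c g) := by
    intro c g hg
    constructor
    · rintro e ⟨x, hx, rfl⟩
      exact (T.mem_edgeSet).mpr (hgadj g hg x)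
    · intro v
      by_cases hv : ε v = c
      · refine ⟨s(v, g v), ⟨⟨v, hv, rfl⟩, Sym2.mem_mk_left v (g v)⟩, ?_⟩
        rintro e ⟨⟨x, hx, rfl⟩, hve⟩
        rcases Sym2.mem_iff.mp hve with rfl | rfl
        · rfl
        · exfalso
          have hgx : ε (g x) = c + 1 := by rw [hgflip g hg x, hx]
          rw [hv] at hgx
          exact z2b c hgx.symm
      · have hx0 : ε (g.symm v) = c := by
          have h1 : ε (g (g.symm v)) = ε (g.symm v) + 1 := hgflip g hg _
          rw [g.apply_symm_apply] at h1
          have h2 : ε v = c + 1 := z2a _ _ hv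
          exact z2d _ _ (by rw [← h1]; exact h2)
        refine ⟨s(g.symm v, v), ⟨⟨g.symm v, hx0, by rw [g.apply_symm_apply]⟩,
          Sym2.mem_mk_right _ v⟩, ?_⟩
        rintro e ⟨⟨x, hx, rfl⟩, hve⟩
        rcases Sym2.mem_iff.mp hve with rfl | hvg
        · exact absurd hx hv
        · have hx' : x = g.symm v := by rw [hvg, g.symm_apply_apply]
          subst hx'
          rw [g.apply_symm_apply]
  -- uniqueness of partners in Mc
  have hcover : ∀ (c : ZMod 2) (g : Equiv.Perm (ZMod n × ZMod n)), (∀ x, g x - x ∈ D) →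
      ∀ v w, ε v = c → s(v, w) ∈ Mc c g → w = g v := by
    rintro c g hg v w hv ⟨x, hx, heq⟩
    rcases Sym2.eq_iff.mp heq with ⟨rfl, rfl⟩ | ⟨rfl, rfl⟩
    · rfl
    · exfalso
      have hgw : ε (g w) = c + 1 := by rw [hgflip g hg w, hx]
      rw [hv] at hgw
      exact z2b c hgw.symm
  -- the forward map
  let F : {g : Equiv.Perm (ZMod n × ZMod n) // ∀ x, g x - x ∈ D} →
      {M : Set (Sym2 (ZMod n × ZMod n)) // IsPerfectMatching T M} ×
      {M : Set (Sym2 (ZMod n × ZMod n)) // IsPerfectMatching T M} :=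
    fun g => (⟨Mc 0 g.1, hMc 0 g.1 g.2⟩, ⟨Mc 1 g.1, hMc 1 g.1 g.2⟩)
  have Finj : Function.Injective F := by
    rintro ⟨g, hg⟩ ⟨g', hg'⟩ hFg
    have h0 : Mc 0 g = Mc 0 g' := congrArg (fun p => (Prod.fst p : _).1) hFg
    have h1 : Mc 1 g = Mc 1 g' := congrArg (fun p => (Prod.snd p : _).1) hFg
    refine Subtype.ext (Equiv.ext fun v => ?_)
    by_cases hv : ε v = 0
    · have : s(v, g v) ∈ Mc 0 g' := h0 ▸ ⟨v, hv, rfl⟩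
      exact hcover 0 g' hg' v (g v) hv this
    · have hv1 : ε v = 1 := by have := z2a _ _ hv; simpa using this
      have : s(v, g v) ∈ Mc 1 g' := h1 ▸ ⟨v, hv1, rfl⟩
      exact hcover 1 g' hg' v (g v) hv1 this
  have Fsurj : Function.Surjective F := by
    rintro ⟨⟨M1, hM1⟩, ⟨M2, hM2⟩⟩
    choose p1 hp1x hq1x using fun v => partner_exu hM1 v
    choose p2 hp2x hq2x using fun v => partner_exu hM2 v
    have hp1 : ∀ v, s(v, p1 v) ∈ M1 := hp1x
    have hq1 : ∀ v y, s(v, y) ∈ M1 → y = p1 v := hq1x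
    have hp2 : ∀ v, s(v, p2 v) ∈ M2 := hp2x
    have hq2 : ∀ v y, s(v, y) ∈ M2 → y = p2 v := hq2x
    have hpp1 : ∀ v, p1 (p1 v) = v :=
      fun v => (hq1 (p1 v) v (by rw [Sym2.eq_swap]; exact hp1 v)).symm
    have hpp2 : ∀ v, p2 (p2 v) = v :=
      fun v => (hq2 (p2 v) v (by rw [Sym2.eq_swap]; exact hp2 v)).symm
    have hadj1 : ∀ v, T.Adj v (p1 v) := fun v => (T.mem_edgeSet).mp (hM1.1 (hp1 v))
    have hadj2 : ∀ v, T.Adj v (p2 v) := fun v => (T.mem_edgeSet).mp (hM2.1 (hp2 v))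
    have hf1 : ∀ v, ε (p1 v) = ε v + 1 := fun v => hadjflip v (p1 v) (hadj1 v)
    have hf2 : ∀ v, ε (p2 v) = ε v + 1 := fun v => hadjflip v (p2 v) (hadj2 v)
    let gfun : ZMod n × ZMod n → ZMod n × ZMod n := fun v => if ε v = 0 then p1 v else p2 v
    let ginv : ZMod n × ZMod n → ZMod n × ZMod n := fun v => if ε v = 0 then p2 v else p1 v
    have hgf0 : ∀ v, ε v = 0 → gfun v = p1 v := fun v hv => if_pos hv
    have hgf1 : ∀ v, ¬ ε v = 0 → gfun v = p2 v := fun v hv => if_neg hv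
    have hgi0 : ∀ v, ε v = 0 → ginv v = p2 v := fun v hv => if_pos hv
    have hgi1 : ∀ v, ¬ ε v = 0 → ginv v = p1 v := fun v hv => if_neg hv
    have hleft : Function.LeftInverse ginv gfun := by
      intro v
      by_cases hv : ε v = 0
      · rw [hgf0 v hv, hgi1 _ (by rw [hf1 v, hv]; decide)]
        exact hpp1 v
      · have hv1 : ε v = 1 := by simpa using z2a _ _ hv
        rw [hgf1 v hv, hgi0 _ (by rw [hf2 v, hv1]; decide)]
        exact hpp2 v
    have hright : Function.RightInverse ginv gfun := by
      intro v
      by_cases hv : ε v = 0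
      · rw [hgi0 v hv, hgf1 _ (by rw [hf2 v, hv]; decide)]
        exact hpp2 v
      · have hv1 : ε v = 1 := by simpa using z2a _ _ hv
        rw [hgi1 v hv, hgf0 _ (by rw [hf1 v, hv1]; decide)]
        exact hpp1 v
    let g : Equiv.Perm (ZMod n × ZMod n) := ⟨gfun, ginv, hleft, hright⟩
    have hgp : ∀ x, g x = gfun x := fun _ => rfl
    have hg : ∀ x, g x - x ∈ D := by
      intro x
      rw [hgp x]
      by_cases hx : ε x = 0
      · rw [hgf0 x hx, ← neg_sub]
        exact hDsymm _ ((hT x (p1 x)).mp (hadj1 x))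
      · rw [hgf1 x hx, ← neg_sub]
        exact hDsymm _ ((hT x (p2 x)).mp (hadj2 x))
    refine ⟨⟨g, hg⟩, ?_⟩
    have key1 : Mc 0 g = M1 := by
      ext e
      constructor
      · rintro ⟨x, hx, rfl⟩
        rw [hgp x, hgf0 x hx]
        exact hp1 x
      · intro he
        induction e using Sym2.ind with
        | _ a b =>
          have hab : T.Adj a b := (T.mem_edgeSet).mp (hM1.1 he)
          by_cases ha : ε a = 0
          · have hb : p1 a = b := (hq1 a b he).symm
            exact ⟨a, ha, by rw [hgp a, hgf0 a ha, hb]⟩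
          · have hb : ε b = 0 := by
              have h1 := hadjflip a b hab
              have h2 : ε a = 1 := by simpa using z2a _ _ ha
              rw [h2] at h1; exact h1.trans (by decide)
            have hba : s(b, a) ∈ M1 := by rw [Sym2.eq_swap]; exact he
            have hc : p1 b = a := (hq1 b a hba).symm
            exact ⟨b, hb, by rw [hgp b, hgf0 b hb, hc, Sym2.eq_swap]⟩
    have key2 : Mc 1 g = M2 := by
      ext e
      constructor
      · rintro ⟨x, hx, rfl⟩
        have hx0 : ¬ ε x = 0 := by rw [hx]; decide
        rw [hgp x, hgf1 x hx0]
        exact hp2 x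
      · intro he
        induction e using Sym2.ind with
        | _ a b =>
          have hab : T.Adj a b := (T.mem_edgeSet).mp (hM2.1 he)
          by_cases ha : ε a = 1
          · have ha0 : ¬ ε a = 0 := by rw [ha]; decide
            have hb : p2 a = b := (hq2 a b he).symm
            exact ⟨a, ha, by rw [hgp a, hgf1 a ha0, hb]⟩
          · have h2 : ε a = 0 := z2e _ ha
            have hb : ε b = 1 := by
              have h1 := hadjflip a b hab
              rw [h2] at h1; simpa using h1
            have hb0 : ¬ ε b = 0 := by rw [hb]; decide
            have hba : s(b, a) ∈ M2 := by rw [Sym2.eq_swap]; exact he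
            have hc : p2 b = a := (hq2 b a hba).symm
            exact ⟨b, hb, by rw [hgp b, hgf1 b hb0, hc, Sym2.eq_swap]⟩
    refine Prod.ext ?_ ?_
    · exact Subtype.ext key1
    · exact Subtype.ext key2
  have hbij : Function.Bijective F := ⟨Finj, Fsurj⟩
  have hcard := Nat.card_eq_of_bijective F hbij
  rw [Nat.card_prod] at hcard
  have e1 : Set.ncard {g : Equiv.Perm (ZMod n × ZMod n) | ∀ x, g x - x ∈ D}
      = Nat.card {g : Equiv.Perm (ZMod n × ZMod n) // ∀ x, g x - x ∈ D} :=
    (Nat.card_coe_set_eq _).symm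
  have e2 : Nat.card {M : Set (Sym2 (ZMod n × ZMod n)) // IsPerfectMatching T M}
      = Set.ncard {M : Set (Sym2 (ZMod n × ZMod n)) | IsPerfectMatching T M} :=
    Nat.card_coe_set_eq _
  rw [e1, hcard, e2, ← pow_two]
end

section
/- Let d ≥ 1, let A ⊆ ℤ^d be a finite set, and let M : ℤ^d → ℤ^d be an injective additive group endomorphism (equivalently, given by an integer d×d matrix with nonzero determinant). Let k be the (finite) index of the subgroup M(ℤ^d) in ℤ^d. Then there exists a bijection Φ : Ω(M(A)) → Ω(A)^k such that for every π ∈ Ω(M(A)), every m ∈ ℤ^d, and every index i ∈ {1,…,k}, Φ(τ_{Mm} ∘ π ∘ τ_{Mm}⁻¹)_i = τ_m ∘ Φ(π)_i ∘ τ_m⁻¹, where τ_v denotes the translation x ↦ x + v of ℤ^d and M(A) is the image of A under M. In particular h(Ω(A)) = h(Ω(M(A))). -/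
open Filter

/-- `ℤ^d`. -/
abbrev Zd (d : ℕ) := Fin d → ℤ

/-- `Ω(A)`: bijections `π : ℤ^d → ℤ^d` with `π x − x ∈ A` for all `x`. -/
def Omega (d : ℕ) (A : Set (Zd d)) : Set (Zd d → Zd d) :=
  {π | Function.Bijective π ∧ ∀ x : Zd d, π x - x ∈ A}

/-- The box `{0,…,n−1}^d ⊆ ℤ^d`. -/
def box (d n : ℕ) : Set (Zd d) := {x | ∀ i : Fin d, 0 ≤ x i ∧ x i < (n : ℤ)}

/-- `B_{(n,…,n)}(Ω(A))`: restrictions of elements of `Ω(A)` to the box. -/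
def patterns (d : ℕ) (A : Set (Zd d)) (n : ℕ) : Set (↥(box d n) → Zd d) :=
  {p | ∃ π ∈ Omega d A, ∀ x : ↥(box d n), p x = π x.val}

/-- The topological entropy `h(Ω(A)) = limsup_n log|B_{(n,…,n)}(Ω(A))| / n^d`. -/
noncomputable def entropy (d : ℕ) (A : Set (Zd d)) : ℝ :=
  limsup (fun n : ℕ => Real.log ((patterns d A n).ncard : ℝ) / (n : ℝ) ^ d) atTop

namespace EPerm

noncomputable section

variable {d : ℕ}

/-- The set of restrictions of elements of `Ω(A)` to a window `W`. -/
def pat (d : ℕ) (A : Set (Zd d)) (W : Set (Zd d)) : Set (↥W → Zd d) :=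
  (fun π (x : ↥W) => π x.val) '' Omega d A

/-- The number of patterns of `Ω(A)` on the window `W`. -/
def npat (d : ℕ) (A : Set (Zd d)) (W : Set (Zd d)) : ℕ := (pat d A W).ncard

lemma patterns_eq (A : Set (Zd d)) (n : ℕ) : patterns d A n = pat d A (box d n) := by
  ext p
  constructor
  · rintro ⟨π, hπ, h⟩
    exact ⟨π, hπ, (funext fun x => (h x).symm)⟩
  · rintro ⟨π, hπ, rfl⟩
    exact ⟨π, hπ, fun x => rfl⟩

lemma pat_finite {A W : Set (Zd d)} (hA : A.Finite) (hW : W.Finite) : (pat d A W).Finite := by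
  haveI : Finite ↥W := hW
  apply Set.Finite.subset (Set.Finite.pi (t := fun x : ↥W => (x.val + ·) '' A) fun x => hA.image _)
  rintro p ⟨π, hπ, rfl⟩
  intro x _
  exact ⟨π x.val - x.val, hπ.2 x.val, by ring⟩

lemma ncard_of_bijOn {α β : Type*} {s : Set α} {t : Set β} {f : α → β} (h : Set.BijOn f s t) :
    s.ncard = t.ncard := by
  rw [← Nat.card_coe_set_eq, ← Nat.card_coe_set_eq]
  exact Nat.card_congr (Set.BijOn.equiv f h)

lemma ncard_univ_pi {ι : Type*} [Fintype ι] {α : Type*} (t : ι → Set α) :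
    (Set.univ.pi t).ncard = ∏ i, (t i).ncard := by
  rw [← Nat.card_coe_set_eq, Nat.card_congr (Equiv.Set.univPi t), Nat.card_pi]
  exact Finset.prod_congr rfl fun i _ => Nat.card_coe_set_eq (t i)

lemma ncard_prod {α β : Type*} (s : Set α) (t : Set β) :
    (s ×ˢ t).ncard = s.ncard * t.ncard := by
  rw [← Nat.card_coe_set_eq, ← Nat.card_coe_set_eq, ← Nat.card_coe_set_eq,
    Nat.card_congr (Equiv.Set.prod s t), Nat.card_prod]

lemma npat_mono (A : Set (Zd d)) {W W' : Set (Zd d)} (hA : A.Finite) (hW' : W'.Finite)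
    (h : W ⊆ W') : npat d A W ≤ npat d A W' := by
  have himg : pat d A W = (fun (p : ↥W' → Zd d) (x : ↥W) => p (Set.inclusion h x)) '' pat d A W' := by
    ext p
    constructor
    · rintro ⟨π, hπ, rfl⟩
      exact ⟨fun x : ↥W' => π x.val, ⟨π, hπ, rfl⟩, rfl⟩
    · rintro ⟨q, ⟨π, hπ, rfl⟩, rfl⟩
      exact ⟨π, hπ, rfl⟩
  rw [npat, himg]
  exact Set.ncard_image_le (pat_finite hA hW')

lemma npat_union_le (A : Set (Zd d)) (W W' : Set (Zd d)) (hA : A.Finite) (hW : W.Finite)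
    (hW' : W'.Finite) : npat d A (W ∪ W') ≤ npat d A W * npat d A W' := by
  classical
  set F : (↥(W ∪ W') → Zd d) → (↥W → Zd d) × (↥W' → Zd d) := fun p =>
    (fun x : ↥W => p (Set.inclusion Set.subset_union_left x),
     fun x : ↥W' => p (Set.inclusion Set.subset_union_right x)) with hF
  have hinj : Function.Injective F := by
    intro p q h
    funext x
    rcases x.2 with hx | hx
    · have := congr_fun (congrArg Prod.fst h) ⟨x.val, hx⟩
      simpa [hF] using this
    · have := congr_fun (congrArg Prod.snd h) ⟨x.val, hx⟩
      simpa [hF] using this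
  have hsub : F '' pat d A (W ∪ W') ⊆ pat d A W ×ˢ pat d A W' := by
    rintro _ ⟨p, ⟨π, hπ, rfl⟩, rfl⟩
    exact ⟨⟨π, hπ, rfl⟩, ⟨π, hπ, rfl⟩⟩
  calc npat d A (W ∪ W') = (F '' pat d A (W ∪ W')).ncard :=
        (Set.ncard_image_of_injOn hinj.injOn).symm
    _ ≤ (pat d A W ×ˢ pat d A W').ncard :=
        Set.ncard_le_ncard hsub ((pat_finite hA hW).prod (pat_finite hA hW'))
    _ = npat d A W * npat d A W' := ncard_prod _ _

lemma npat_biUnion_le {ι : Type*} (A : Set (Zd d)) (hA : A.Finite) (T : Finset ι)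
    (S : ι → Set (Zd d)) (hS : ∀ t, (S t).Finite) :
    npat d A (⋃ t ∈ T, S t) ≤ ∏ t ∈ T, npat d A (S t) := by
  classical
  induction T using Finset.induction with
  | empty =>
    simp only [Finset.notMem_empty, Set.iUnion_of_empty, Set.iUnion_empty, Finset.prod_empty]
    have hsub : (pat d A (∅ : Set (Zd d))).Subsingleton := by
      intro p _ q _
      funext x
      exact absurd x.2 (Set.notMem_empty _)
    exact (Set.ncard_le_one hsub.finite).mpr fun a ha b hb => hsub ha hb
  | @insert a T ha ih =>
    rw [Finset.set_biUnion_insert, Finset.prod_insert ha]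
    calc npat d A (S a ∪ ⋃ t ∈ T, S t) ≤ npat d A (S a) * npat d A (⋃ t ∈ T, S t) :=
          npat_union_le A _ _ hA (hS a) (Set.Finite.biUnion T.finite_toSet fun t _ => hS t)
      _ ≤ npat d A (S a) * ∏ t ∈ T, npat d A (S t) := Nat.mul_le_mul_left _ ih

lemma omega_shift {A : Set (Zd d)} {π : Zd d → Zd d} (hπ : π ∈ Omega d A) (v : Zd d) :
    (fun x => π (x - v) + v) ∈ Omega d A := by
  obtain ⟨⟨hinj, hsurj⟩, hdiff⟩ := hπ
  refine ⟨⟨?_, ?_⟩, ?_⟩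
  · intro a b h
    have h1 : π (a - v) = π (b - v) := by
      have := add_right_cancel h
      exact this
    have := hinj h1
    exact sub_left_inj.mp this
  · intro z
    obtain ⟨u, hu⟩ := hsurj (z - v)
    refine ⟨u + v, ?_⟩
    simp only [add_sub_cancel_right, hu, sub_add_cancel]
  · intro x
    have h1 : π (x - v) + v - x = π (x - v) - (x - v) := by abel
    rw [h1]
    exact hdiff (x - v)

lemma npat_translate (A W : Set (Zd d)) (v : Zd d) :
    npat d A ((fun u => u + v) '' W) = npat d A W := by
  have key : ∀ u : Zd d, u ∈ (fun u => u + v) '' W → u - v ∈ W := by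
    rintro _ ⟨w, hw, rfl⟩
    simpa using hw
  set G : (↥W → Zd d) → (↥((fun u => u + v) '' W) → Zd d) := fun p x =>
    p ⟨x.val - v, key x.val x.2⟩ + v with hG
  have hbij : Set.BijOn G (pat d A W) (pat d A ((fun u => u + v) '' W)) := by
    refine ⟨?_, ?_, ?_⟩
    · rintro p ⟨π, hπ, rfl⟩
      exact ⟨fun u => π (u - v) + v, omega_shift hπ v, rfl⟩
    · intro p _ q _ h
      funext x
      have hmem : x.val + v ∈ (fun u => u + v) '' W := ⟨x.val, x.2, rfl⟩
      have hx : (⟨x.val + v - v, key _ hmem⟩ : ↥W) = x := Subtype.ext (add_sub_cancel_right _ _)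
      have := congr_fun h ⟨x.val + v, hmem⟩
      simp only [hG] at this
      rw [hx] at this
      exact add_right_cancel this
    · rintro q ⟨σ, hσ, rfl⟩
      refine ⟨fun x : ↥W => σ (x.val + v) - v, ⟨fun u => σ (u + v) - v, ?_, rfl⟩, ?_⟩
      · have := omega_shift hσ (-v)
        simpa only [sub_neg_eq_add, ← sub_eq_add_neg] using this
      · funext x
        simp only [hG, sub_add_cancel]
  exact (ncard_of_bijOn hbij).symm

lemma npat_le_pow {A W : Set (Zd d)} (hA : A.Finite) (hW : W.Finite) :
    npat d A W ≤ A.ncard ^ W.ncard := by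
  haveI : Finite ↥W := hW
  haveI : Fintype ↥W := Fintype.ofFinite _
  have hpi : (Set.univ.pi fun _ : ↥W => A).Finite := Set.Finite.pi fun _ => hA
  have hsub : (fun (p : ↥W → Zd d) (x : ↥W) => p x - x.val) '' pat d A W ⊆
      Set.univ.pi fun _ : ↥W => A := by
    rintro _ ⟨p, ⟨π, hπ, rfl⟩, rfl⟩ x _
    exact hπ.2 x.val
  have hinj : Function.Injective (fun (p : ↥W → Zd d) (x : ↥W) => p x - x.val) := by
    intro p q h
    funext x
    have := congr_fun h x
    simpa [sub_left_inj] using this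
  calc npat d A W = ((fun (p : ↥W → Zd d) (x : ↥W) => p x - x.val) '' pat d A W).ncard :=
        (Set.ncard_image_of_injOn hinj.injOn).symm
    _ ≤ (Set.univ.pi fun _ : ↥W => A).ncard := Set.ncard_le_ncard hsub hpi
    _ = ∏ _x : ↥W, A.ncard := ncard_univ_pi _
    _ = A.ncard ^ W.ncard := by
        rw [Finset.prod_const, Finset.card_univ, ← Nat.card_eq_fintype_card,
          Nat.card_coe_set_eq]

lemma box_eq_pi (n : ℕ) : box d n = Set.univ.pi fun _ : Fin d => Set.Ico (0:ℤ) n := by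
  ext x
  simp [box, Set.mem_pi]

lemma box_finite (n : ℕ) : (box d n).Finite := by
  rw [box_eq_pi]
  exact Set.Finite.pi fun _ => Set.finite_Ico _ _

lemma box_ncard (n : ℕ) : (box d n).ncard = n ^ d := by
  rw [box_eq_pi, ncard_univ_pi]
  have h : ∀ _i : Fin d, (Set.Ico (0:ℤ) n).ncard = n := fun _ => by
    rw [← Finset.coe_Ico, Set.ncard_coe_finset, Int.card_Ico]
    simp
  rw [Finset.prod_congr rfl fun i _ => h i, Finset.prod_const, Finset.card_univ, Fintype.card_fin]

end

end EPerm

namespace EPerm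

noncomputable section

variable {d : ℕ}

/-- The maps on cosets induced by `π ∈ Ω(M(A))`. -/
def Phi (M : Zd d →+ Zd d) (K : ℕ) (c : Fin K → Zd d) (π : Zd d → Zd d) :
    Fin K → Zd d → Zd d :=
  fun i y => Function.invFun ⇑M (π (M y + c i) - c i)

/-- The coset-representative map. -/
def repsMap (M : Zd d →+ Zd d) (K : ℕ) (c : Fin K → Zd d) : Fin K → Zd d ⧸ M.range :=
  fun i => QuotientAddGroup.mk (c i)

/-- Index of the coset of `x`. -/
def qidx (M : Zd d →+ Zd d) (K : ℕ) [Nonempty (Fin K)] (c : Fin K → Zd d) (x : Zd d) : Fin K :=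
  Function.invFun (repsMap M K c) (QuotientAddGroup.mk x)

/-- The inverse of `Phi`. -/
def Psi (M : Zd d →+ Zd d) (K : ℕ) [Nonempty (Fin K)] (c : Fin K → Zd d) (f : Fin K → Zd d → Zd d) :
    Zd d → Zd d :=
  fun x => M (f (qidx M K c x) (Function.invFun ⇑M (x - c (qidx M K c x)))) + c (qidx M K c x)

variable {M : Zd d →+ Zd d} {K : ℕ} {c : Fin K → Zd d} {A : Set (Zd d)}

lemma reps_nonempty (hc : Function.Bijective (repsMap M K c)) : Nonempty (Fin K) := by
  obtain ⟨i, -⟩ := hc.2 (QuotientAddGroup.mk 0)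
  exact ⟨i⟩

lemma invFun_M_eq {u : Zd d} (h : u ∈ M.range) : M (Function.invFun ⇑M u) = u :=
  Function.invFun_eq (AddMonoidHom.mem_range.mp h)

lemma diff_mem_range {π : Zd d → Zd d} (hπ : π ∈ Omega d (⇑M '' A)) (x : Zd d) :
    ∃ a ∈ A, π x - x = M a := by
  obtain ⟨a, ha, h⟩ := hπ.2 x
  exact ⟨a, ha, h.symm⟩

lemma phi_add (hM : Function.Injective ⇑M) {π : Zd d → Zd d}
    (hπ : π ∈ Omega d (⇑M '' A)) (i : Fin K) (y : Zd d) :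
    ∃ a ∈ A, Phi M K c π i y = y + a ∧ π (M y + c i) = M (y + a) + c i := by
  obtain ⟨a, ha, hax⟩ := diff_mem_range hπ (M y + c i)
  have h2 : π (M y + c i) = M (y + a) + c i := by
    rw [map_add]
    have h3 : π (M y + c i) = M a + (M y + c i) := by rw [← hax]; abel
    rw [h3]; abel
  refine ⟨a, ha, ?_, h2⟩
  show Function.invFun ⇑M (π (M y + c i) - c i) = y + a
  rw [h2, add_sub_cancel_right, Function.leftInverse_invFun hM]

lemma phi_spec (hM : Function.Injective ⇑M) {π : Zd d → Zd d}
    (hπ : π ∈ Omega d (⇑M '' A)) (i : Fin K) (y : Zd d) :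
    M (Phi M K c π i y) = π (M y + c i) - c i := by
  obtain ⟨a, _, h1, h2⟩ := phi_add hM hπ i y
  rw [h1, h2, add_sub_cancel_right]

lemma phi_mem (hM : Function.Injective ⇑M) {π : Zd d → Zd d}
    (hπ : π ∈ Omega d (⇑M '' A)) (i : Fin K) :
    Phi M K c π i ∈ Omega d A := by
  refine ⟨⟨?_, ?_⟩, ?_⟩
  · intro y y' h
    have h1 := phi_spec (c := c) hM hπ i y
    have h2 := phi_spec (c := c) hM hπ i y'
    rw [h] at h1
    have h3 : π (M y + c i) - c i = π (M y' + c i) - c i := by rw [← h1, ← h2]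
    have h4 : M y + c i = M y' + c i := hπ.1.1 (sub_left_inj.mp h3)
    exact hM (add_right_cancel h4)
  · intro z
    obtain ⟨x, hx⟩ := hπ.1.2 (M z + c i)
    obtain ⟨a, ha, hax⟩ := diff_mem_range hπ x
    have hx' : x = M (z - a) + c i := by
      rw [map_sub]
      have h5 : x = π x - M a := by rw [← hax]; abel
      rw [h5, hx]; abel
    refine ⟨z - a, hM ?_⟩
    rw [phi_spec hM hπ i (z - a), ← hx', hx]
    abel
  · intro y
    obtain ⟨a, ha, h1, _⟩ := phi_add hM hπ i y
    rw [h1]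
    simpa using ha

lemma phi_equivariant (hM : Function.Injective ⇑M) {π : Zd d → Zd d}
    (hπ : π ∈ Omega d (⇑M '' A)) (m : Zd d) (i : Fin K) :
    Phi M K c (fun x => π (x - M m) + M m) i = fun x => Phi M K c π i (x - m) + m := by
  funext y
  obtain ⟨a, ha, h1, h2⟩ := phi_add hM hπ i (y - m)
  show Function.invFun ⇑M (π (M y + c i - M m) + M m - c i) = Phi M K c π i (y - m) + m
  have harg : π (M y + c i - M m) + M m - c i = M (y - m + a + m) := by
    have hy : M y + c i - M m = M (y - m) + c i := by rw [map_sub]; abel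
    rw [hy, h2]
    simp only [map_add, map_sub]
    abel
  rw [harg, Function.leftInverse_invFun hM, h1]

lemma qidx_spec [Nonempty (Fin K)] (hc : Function.Bijective (repsMap M K c)) (x : Zd d) :
    (QuotientAddGroup.mk (c (qidx M K c x)) : Zd d ⧸ M.range) = QuotientAddGroup.mk x :=
  Function.rightInverse_invFun hc.2 (QuotientAddGroup.mk x)

lemma qidx_eq [Nonempty (Fin K)] (hc : Function.Bijective (repsMap M K c)) {x : Zd d} {i : Fin K}
    (h : (QuotientAddGroup.mk x : Zd d ⧸ M.range) = QuotientAddGroup.mk (c i)) :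
    qidx M K c x = i := by
  have h2 : qidx M K c x = Function.invFun (repsMap M K c) (repsMap M K c i) := by
    rw [qidx, h]; rfl
  rw [h2, Function.leftInverse_invFun hc.1]

lemma sub_c_mem [Nonempty (Fin K)] (hc : Function.Bijective (repsMap M K c)) (x : Zd d) :
    x - c (qidx M K c x) ∈ M.range :=
  (QuotientAddGroup.eq_iff_sub_mem).mp (qidx_spec hc x).symm

lemma psi_mem [Nonempty (Fin K)] (hM : Function.Injective ⇑M) (hc : Function.Bijective (repsMap M K c))
    {f : Fin K → Zd d → Zd d} (hf : ∀ i, f i ∈ Omega d A) :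
    Psi M K c f ∈ Omega d (⇑M '' A) := by
  have hMy : ∀ x : Zd d, M (Function.invFun ⇑M (x - c (qidx M K c x))) = x - c (qidx M K c x) :=
    fun x => invFun_M_eq (sub_c_mem hc x)
  have hquot : ∀ x : Zd d,
      (QuotientAddGroup.mk (Psi M K c f x) : Zd d ⧸ M.range) = QuotientAddGroup.mk x := by
    intro x
    have h1 : Psi M K c f x - c (qidx M K c x) ∈ M.range := by
      show M _ + c _ - c _ ∈ _
      rw [add_sub_cancel_right]
      exact ⟨_, rfl⟩
    have h2 := (QuotientAddGroup.eq_iff_sub_mem).mpr h1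
    rw [h2]
    exact qidx_spec hc x
  refine ⟨⟨?_, ?_⟩, ?_⟩
  · intro x x' h
    have hqq : (QuotientAddGroup.mk x : Zd d ⧸ M.range) = QuotientAddGroup.mk x' := by
      rw [← hquot x, h, hquot x']
    have hq : qidx M K c x = qidx M K c x' := by
      unfold qidx
      rw [hqq]
    have h2 : M (f (qidx M K c x) (Function.invFun ⇑M (x - c (qidx M K c x)))) + c (qidx M K c x)
        = M (f (qidx M K c x) (Function.invFun ⇑M (x' - c (qidx M K c x)))) + c (qidx M K c x) := by
      have := h
      unfold Psi at this
      rw [← hq] at this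
      exact this
    have h3 := hM (add_right_cancel h2)
    have h4 := (hf (qidx M K c x)).1.1 h3
    have h5 : x - c (qidx M K c x) = x' - c (qidx M K c x') := by
      rw [← hMy x, h4, hq, hMy x']
    rw [hq] at h5
    exact sub_left_inj.mp h5
  · intro z
    obtain ⟨y, hy⟩ := (hf (qidx M K c z)).1.2 (Function.invFun ⇑M (z - c (qidx M K c z)))
    refine ⟨M y + c (qidx M K c z), ?_⟩
    have hqi : qidx M K c (M y + c (qidx M K c z)) = qidx M K c z :=
      qidx_eq hc ((QuotientAddGroup.eq_iff_sub_mem).mpr (by rw [add_sub_cancel_right]; exact ⟨y, rfl⟩))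
    show M (f _ (Function.invFun ⇑M (M y + c _ - c _))) + c _ = z
    rw [hqi, add_sub_cancel_right, Function.leftInverse_invFun hM, hy, hMy z, sub_add_cancel]
  · intro x
    refine ⟨f (qidx M K c x) (Function.invFun ⇑M (x - c (qidx M K c x)))
      - Function.invFun ⇑M (x - c (qidx M K c x)), (hf _).2 _, ?_⟩
    show M _ = Psi M K c f x - x
    rw [map_sub, hMy x]
    show _ = M _ + c _ - x
    abel

end

end EPerm

namespace EPerm

noncomputable section

variable {d : ℕ} {M : Zd d →+ Zd d} {K : ℕ} {c : Fin K → Zd d} {A : Set (Zd d)}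

lemma phi_psi [Nonempty (Fin K)] (hM : Function.Injective ⇑M)
    (hc : Function.Bijective (repsMap M K c))
    {f : Fin K → Zd d → Zd d} (hf : ∀ i, f i ∈ Omega d A) :
    Phi M K c (Psi M K c f) = f := by
  funext i y
  have hqi : qidx M K c (M y + c i) = i :=
    qidx_eq hc ((QuotientAddGroup.eq_iff_sub_mem).mpr
      (by rw [add_sub_cancel_right]; exact ⟨y, rfl⟩))
  show Function.invFun ⇑M (Psi M K c f (M y + c i) - c i) = f i y
  have h1 : Psi M K c f (M y + c i) = M (f i y) + c i := by
    show M _ + c _ = _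
    rw [hqi, add_sub_cancel_right, Function.leftInverse_invFun hM]
  rw [h1, add_sub_cancel_right, Function.leftInverse_invFun hM]

lemma psi_phi [Nonempty (Fin K)] (hM : Function.Injective ⇑M)
    (hc : Function.Bijective (repsMap M K c))
    {π : Zd d → Zd d} (hπ : π ∈ Omega d (⇑M '' A)) :
    Psi M K c (Phi M K c π) = π := by
  funext x
  have hMy : M (Function.invFun ⇑M (x - c (qidx M K c x))) = x - c (qidx M K c x) :=
    invFun_M_eq (sub_c_mem hc x)
  show M (Phi M K c π (qidx M K c x) (Function.invFun ⇑M (x - c (qidx M K c x))))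
      + c (qidx M K c x) = π x
  rw [phi_spec hM hπ, hMy, sub_add_cancel, sub_add_cancel]

lemma bijOn_phi (hM : Function.Injective ⇑M) (hc : Function.Bijective (repsMap M K c)) :
    Set.BijOn (Phi M K c) (Omega d (⇑M '' A))
      {f : Fin K → Zd d → Zd d | ∀ i, f i ∈ Omega d A} := by
  haveI : Nonempty (Fin K) := reps_nonempty hc
  refine ⟨fun π hπ i => phi_mem hM hπ i, ?_, ?_⟩
  · intro π hπ π' hπ' h
    rw [← psi_phi hM hc hπ, ← psi_phi hM hc hπ', h]
  · intro f hf
    exact ⟨Psi M K c f, psi_mem hM hc hf, phi_psi hM hc hf⟩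

lemma npat_prod (M : Zd d →+ Zd d) (A B : Set (Zd d)) (hA : A.Finite) (hB : B.Finite)
    {K : ℕ} {c : Fin K → Zd d}
    (hM : Function.Injective ⇑M) (hc : Function.Bijective (repsMap M K c)) :
    npat d (⇑M '' A) (⋃ i, (fun y => M y + c i) '' B) = npat d A B ^ K := by
  classical
  haveI : Nonempty (Fin K) := reps_nonempty hc
  set W := ⋃ i, (fun y => M y + c i) '' B with hW
  have hmemW : ∀ (i : Fin K) (y : Zd d), y ∈ B → M y + c i ∈ W := fun i y hy =>
    Set.mem_iUnion.mpr ⟨i, ⟨y, hy, rfl⟩⟩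
  set G : (↥W → Zd d) → (Fin K → (↥B → Zd d)) := fun p i y =>
    Function.invFun ⇑M (p ⟨M y.val + c i, hmemW i y.val y.2⟩ - c i) with hG
  have hbij : Set.BijOn G (pat d (⇑M '' A) W) (Set.univ.pi fun _ : Fin K => pat d A B) := by
    refine ⟨?_, ?_, ?_⟩
    · rintro p ⟨π, hπ, rfl⟩ i _
      exact ⟨Phi M K c π i, phi_mem hM hπ i, rfl⟩
    · rintro p ⟨π, hπ, rfl⟩ p' ⟨π', hπ', rfl⟩ h
      funext x
      obtain ⟨i, y, hyB, hyx⟩ : ∃ i y, y ∈ B ∧ M y + c i = x.val := by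
        obtain ⟨i, hi⟩ := Set.mem_iUnion.mp
          (show (x : Zd d) ∈ ⋃ i, (fun y => M y + c i) '' B from x.2)
        obtain ⟨y, hyB, hyx⟩ := hi
        exact ⟨i, y, hyB, hyx⟩
      have key : ∀ σ : Zd d → Zd d, σ ∈ Omega d (⇑M '' A) →
          σ x.val = M (G (fun z : ↥W => σ z.val) i ⟨y, hyB⟩) + c i := by
        intro σ hσ
        have h1 : G (fun z : ↥W => σ z.val) i ⟨y, hyB⟩ = Phi M K c σ i y := by
          simp only [hG, Phi, hyx]
        rw [h1, phi_spec hM hσ, hyx, sub_add_cancel]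
      have h2 := key π hπ
      have h3 := key π' hπ'
      show π x.val = π' x.val
      rw [h2, h3, congr_fun (congr_fun h i) ⟨y, hyB⟩]
    · intro f hf
      have hfi : ∀ i, f i ∈ pat d A B := fun i => Set.mem_univ_pi.mp hf i
      choose σ hσΩ hσeq using hfi
      refine ⟨fun z : ↥W => Psi M K c σ z.val, ⟨Psi M K c σ, psi_mem hM hc hσΩ, rfl⟩, ?_⟩
      funext i y
      have h1 : G (fun z : ↥W => Psi M K c σ z.val) i y
          = Phi M K c (Psi M K c σ) i y.val := rfl
      rw [h1, phi_psi hM hc hσΩ]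
      exact congr_fun (hσeq i) y
  have h1 : npat d (⇑M '' A) W = (Set.univ.pi fun _ : Fin K => pat d A B).ncard :=
    ncard_of_bijOn hbij
  rw [h1, ncard_univ_pi, Finset.prod_const, Finset.card_univ, Fintype.card_fin]
  rfl

end

end EPerm

namespace EPerm

noncomputable section

variable {d : ℕ}

/-- The normalized log-pattern-count sequence. -/
def avals (A : Set (Zd d)) (n : ℕ) : ℝ := Real.log (npat d A (box d n)) / (n : ℝ) ^ d

lemma entropy_eq (A : Set (Zd d)) : entropy d A = limsup (avals A) atTop := by
  unfold entropy
  apply Filter.limsup_congr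
  apply Filter.Eventually.of_forall
  intro n
  rw [patterns_eq]
  rfl

lemma log_nat_nonneg (n : ℕ) : 0 ≤ Real.log n := by
  rcases Nat.eq_zero_or_pos n with h | h
  · simp [h]
  · exact Real.log_nonneg (by exact_mod_cast h)

lemma log_nat_mono {a b : ℕ} (h : a ≤ b) : Real.log a ≤ Real.log b := by
  rcases Nat.eq_zero_or_pos a with h0 | h0
  · rw [h0]
    simpa using log_nat_nonneg b
  · exact Real.log_le_log (by exact_mod_cast h0) (by exact_mod_cast h)

lemma avals_nonneg (A : Set (Zd d)) (n : ℕ) : 0 ≤ avals A n :=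
  div_nonneg (log_nat_nonneg _) (by positivity)

lemma avals_le_log (hd : 1 ≤ d) (A : Set (Zd d)) (hA : A.Finite) (n : ℕ) :
    avals A n ≤ Real.log A.ncard := by
  rcases Nat.eq_zero_or_pos n with h0 | h0
  · subst h0
    unfold avals
    rw [Nat.cast_zero, zero_pow (by omega), div_zero]
    exact log_nat_nonneg _
  · have hb : npat d A (box d n) ≤ A.ncard ^ n ^ d := by
      have h := npat_le_pow (A := A) (W := box d n) hA (box_finite n)
      rwa [box_ncard] at h
    have hlog : Real.log (npat d A (box d n)) ≤ ((n : ℝ) ^ d) * Real.log A.ncard := by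
      calc Real.log (npat d A (box d n)) ≤ Real.log ((A.ncard ^ n ^ d : ℕ)) := log_nat_mono hb
        _ = ((n : ℝ) ^ d) * Real.log A.ncard := by
            push_cast
            rw [Real.log_pow]
            push_cast
            ring
    unfold avals
    rw [div_le_iff₀ (by positivity)]
    calc Real.log (npat d A (box d n)) ≤ ((n : ℝ) ^ d) * Real.log A.ncard := hlog
      _ = Real.log A.ncard * (n : ℝ) ^ d := by ring

lemma avals_bdd (hd : 1 ≤ d) (A : Set (Zd d)) (hA : A.Finite) :
    Filter.IsBoundedUnder (· ≤ ·) atTop (avals A) :=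
  Filter.isBoundedUnder_of ⟨Real.log A.ncard, fun n => avals_le_log hd A hA n⟩

/-- multiplication by `q` as an endomorphism of `ℤ^d` -/
def Mq (d q : ℕ) : Zd d →+ Zd d := AddMonoidHom.mk' (fun x => q • x) fun a b => smul_add q a b

lemma Mq_apply (q : ℕ) (x : Zd d) (j : Fin d) : (Mq d q x) j = (q : ℤ) * x j := by
  show (q • x) j = _
  simp [nsmul_eq_mul]

lemma Mq_inj {q : ℕ} (hq : 0 < q) : Function.Injective ⇑(Mq d q) := by
  intro a b h
  funext j
  have h1 := congr_fun h j
  rw [Mq_apply, Mq_apply] at h1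
  exact mul_left_cancel₀ (by exact_mod_cast hq.ne' : (q : ℤ) ≠ 0) h1

lemma int_eq_zero_of_mul_bounds {m z w : ℤ} (hm : 0 < m) (h : m * z = w) (h1 : -m < w)
    (h2 : w < m) : z = 0 := by
  rcases lt_trichotomy z 0 with hz | hz | hz
  · nlinarith
  · exact hz
  · nlinarith

lemma scalar_reps (q : ℕ) (hq : 0 < q) :
    ∃ c : Fin (q ^ d) → Zd d,
      Function.Bijective (repsMap (Mq d q) (q ^ d) c) ∧
      ∀ m : ℕ, (⋃ i, (fun y => Mq d q y + c i) '' box d m) = box d (q * m) := by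
  classical
  haveI : Fintype ↥(box d q) := (box_finite q).fintype
  have hcard : Fintype.card ↥(box d q) = q ^ d := by
    rw [← Nat.card_eq_fintype_card, Nat.card_coe_set_eq, box_ncard]
  let e : ↥(box d q) ≃ Fin (q ^ d) := Fintype.equivFinOfCardEq hcard
  refine ⟨fun i => (e.symm i).val, ?_, ?_⟩
  · constructor
    · intro i i' h
      have hmem : (e.symm i).val - (e.symm i').val ∈ (Mq d q).range :=
        (QuotientAddGroup.eq_iff_sub_mem).mp h
      obtain ⟨z, hz⟩ := AddMonoidHom.mem_range.mp hmem
      have hvals : (e.symm i).val = (e.symm i').val := by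
        funext j
        have hj : (q : ℤ) * z j = (e.symm i).val j - (e.symm i').val j := by
          have h2 := congr_fun hz j
          rw [Mq_apply] at h2
          simpa [Pi.sub_apply] using h2
        have hb1 := (e.symm i).2 j
        have hb2 := (e.symm i').2 j
        have hz0 : z j = 0 := int_eq_zero_of_mul_bounds (by exact_mod_cast hq) hj
          (by omega) (by omega)
        rw [hz0, mul_zero] at hj
        omega
      exact e.symm.injective (Subtype.ext hvals)
    · intro x
      obtain ⟨x, rfl⟩ := QuotientAddGroup.mk_surjective x
      refine ⟨e ⟨fun j => x j % q, fun j => ⟨Int.emod_nonneg _ (by exact_mod_cast hq.ne'),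
        Int.emod_lt_of_pos _ (by exact_mod_cast hq)⟩⟩, ?_⟩
      show QuotientAddGroup.mk ((e.symm (e _)).val) = QuotientAddGroup.mk x
      rw [e.symm_apply_apply]
      rw [QuotientAddGroup.eq_iff_sub_mem]
      refine ⟨fun j => -(x j / q), ?_⟩
      funext j
      show (q : ℤ) * -(x j / q) = _
      have h3 := Int.mul_ediv_add_emod (x j) (q : ℤ)
      have h4 : ((fun j => x j % q) - x) j = x j % q - x j := rfl
      rw [h4]
      linarith
  · intro mm
    ext x
    simp only [Set.mem_iUnion, Set.mem_image]
    constructor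
    · rintro ⟨i, y, hy, rfl⟩
      intro j
      have hb := hy j
      have hcb := (e.symm i).2 j
      have happ : (Mq d q y + (e.symm i).val) j = (q : ℤ) * y j + (e.symm i).val j := by
        rw [Pi.add_apply, Mq_apply]
      rw [happ]
      have hq' : (0 : ℤ) ≤ (q : ℤ) := by positivity
      have hle : (q : ℤ) * (y j + 1) ≤ (q : ℤ) * mm :=
        mul_le_mul_of_nonneg_left (by omega) hq'
      constructor
      · nlinarith
      · push_cast
        nlinarith
    · intro hx
      refine ⟨e ⟨fun j => x j % q, fun j => ⟨Int.emod_nonneg _ (by exact_mod_cast hq.ne'),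
        Int.emod_lt_of_pos _ (by exact_mod_cast hq)⟩⟩, fun j => x j / q, ?_, ?_⟩
      · intro j
        constructor
        · exact Int.ediv_nonneg (hx j).1 (by positivity)
        · rw [Int.ediv_lt_iff_lt_mul (by exact_mod_cast hq)]
          have := (hx j).2
          push_cast at this ⊢
          linarith
      · rw [Equiv.symm_apply_apply]
        funext j
        have h5 : (Mq d q (fun j => x j / q) + fun j => x j % q) j
            = (q : ℤ) * (x j / q) + x j % q := by
          rw [Pi.add_apply, Mq_apply]
        rw [h5]
        have h3 := Int.mul_ediv_add_emod (x j) (q : ℤ)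
        linarith

end

end EPerm

namespace EPerm

noncomputable section

variable {d : ℕ}

lemma le_entropy (hd : 1 ≤ d) (A : Set (Zd d)) (hA : A.Finite) {x : ℝ}
    (h : ∀ m, 1 ≤ m → x ≤ avals A m) : x ≤ entropy d A := by
  rw [entropy_eq]
  refine Filter.le_limsup_of_frequently_le ?_ (avals_bdd hd A hA)
  exact ((Filter.eventually_ge_atTop 1).mono h).frequently

lemma scalar_le (hd : 1 ≤ d) (A : Set (Zd d)) (hA : A.Finite) (q : ℕ) (hq : 0 < q) :
    entropy d A ≤ entropy d (⇑(Mq d q) '' A) := by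
  obtain ⟨c, hc, hunion⟩ := scalar_reps (d := d) q hq
  have hkey : ∀ m : ℕ, 1 ≤ m → avals (⇑(Mq d q) '' A) (q * m) = avals A m := by
    intro m hm
    unfold avals
    rw [← hunion m, npat_prod (Mq d q) A (box d m) hA (box_finite m) (Mq_inj hq) hc]
    have hq' : ((q : ℝ)) ^ d ≠ 0 := by positivity
    have hm' : ((m : ℝ)) ^ d ≠ 0 := by positivity
    push_cast
    rw [Real.log_pow, mul_pow]
    push_cast
    field_simp
  rw [entropy_eq, entropy_eq]
  have h1 : limsup (avals A) atTop = limsup ((avals (⇑(Mq d q) '' A)) ∘ fun m => q * m) atTop := by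
    apply Filter.limsup_congr
    filter_upwards [Filter.eventually_ge_atTop 1] with m hm
    exact (hkey m hm).symm
  rw [h1]
  have hφ : Filter.Tendsto (fun m : ℕ => q * m) atTop atTop :=
    Filter.tendsto_atTop_mono (fun m => Nat.le_mul_of_pos_left m hq) Filter.tendsto_id
  haveI : (Filter.map (fun m : ℕ => q * m) atTop).NeBot := Filter.map_neBot
  have h3 : limsup ((avals (⇑(Mq d q) '' A)) ∘ fun m => q * m) atTop
      = limsup (avals (⇑(Mq d q) '' A)) (Filter.map (fun m : ℕ => q * m) atTop) := by
    simp only [Filter.limsup, Filter.map_map]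
  rw [h3]
  exact Filter.limsup_le_limsup_of_le hφ
    (Filter.isCoboundedUnder_le_of_le _ fun n => avals_nonneg _ n)
    (avals_bdd hd _ (hA.image _))

lemma exists_left_inverse (M : Zd d →+ Zd d) (hM : Function.Injective ⇑M) {k : ℕ}
    (hk : 0 < k) (hidx : (AddMonoidHom.range M).index = k) :
    ∃ M'' : Zd d →+ Zd d, Function.Injective ⇑M'' ∧ (∀ x, M'' (M x) = k • x) ∧
      (AddMonoidHom.range M'').index ≠ 0 := by
  have hmem : ∀ x : Zd d, k • x ∈ M.range := by
    intro x
    have h := AddSubgroup.nsmul_index_mem M.range x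
    rwa [hidx] at h
  have hMg : ∀ x : Zd d, M (Function.invFun ⇑M (k • x)) = k • x := fun x =>
    Function.invFun_eq (AddMonoidHom.mem_range.mp (hmem x))
  have hadd : ∀ a b : Zd d, Function.invFun ⇑M (k • (a + b))
      = Function.invFun ⇑M (k • a) + Function.invFun ⇑M (k • b) := by
    intro a b
    apply hM
    rw [map_add, hMg, hMg, hMg, smul_add]
  set M'' : Zd d →+ Zd d := AddMonoidHom.mk' (fun x => Function.invFun ⇑M (k • x)) hadd with hM''
  have hcomp : ∀ x, M'' (M x) = k • x := by
    intro x
    show Function.invFun ⇑M (k • M x) = k • x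
    rw [← map_nsmul, Function.leftInverse_invFun hM]
  refine ⟨M'', ?_, hcomp, ?_⟩
  · intro a b h
    have h2 : k • a = k • b := by
      rw [← hMg a, ← hMg b]
      exact congrArg ⇑M h
    funext j
    have h3 := congr_fun h2 j
    simp only [Pi.smul_apply, nsmul_eq_mul] at h3
    exact mul_left_cancel₀ (by exact_mod_cast hk.ne' : (k : ℤ) ≠ 0) h3
  · obtain ⟨c, hc, -⟩ := scalar_reps (d := d) k hk
    have hidxq : (AddMonoidHom.range (Mq d k)).index = k ^ d := by
      show Nat.card (Zd d ⧸ (Mq d k).range) = k ^ d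
      rw [← Nat.card_eq_of_bijective _ hc]
      simp
    have hle : (Mq d k).range ≤ M''.range := by
      rintro z ⟨x, rfl⟩
      refine ⟨M x, ?_⟩
      rw [hcomp]
      rfl
    intro h0
    have hdvd := AddSubgroup.index_dvd_of_le hle
    rw [h0, hidxq] at hdvd
    exact (pow_ne_zero d hk.ne') (zero_dvd_iff.mp hdvd)

end

end EPerm

namespace EPerm

noncomputable section

variable {d : ℕ}

lemma ncard_biUnion {ι α : Type*} (T : Finset ι) (S : ι → Set α) (hfin : ∀ t, (S t).Finite)
    (hdisj : ∀ t ∈ T, ∀ t' ∈ T, t ≠ t' → Disjoint (S t) (S t')) :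
    (⋃ t ∈ T, S t).ncard = ∑ t ∈ T, (S t).ncard := by
  classical
  induction T using Finset.induction with
  | empty => simp
  | @insert a T ha ih =>
    rw [Finset.set_biUnion_insert, Finset.sum_insert ha]
    have hdisj2 : Disjoint (S a) (⋃ t ∈ T, S t) := by
      rw [Set.disjoint_iUnion₂_right]
      intro t ht
      exact hdisj a (Finset.mem_insert_self a T) t (Finset.mem_insert_of_mem ht)
        (fun h => ha (h ▸ ht))
    rw [Set.ncard_union_eq hdisj2 (hfin a) (Set.Finite.biUnion T.finite_toSet fun t _ => hfin t)]
    rw [ih fun t ht t' ht' hne => hdisj t (Finset.mem_insert_of_mem ht) t'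
      (Finset.mem_insert_of_mem ht') hne]

lemma entropy_image_le (hd : 1 ≤ d) (A : Set (Zd d)) (hA : A.Finite) (M : Zd d →+ Zd d)
    (hM : Function.Injective ⇑M) (hidx : (AddMonoidHom.range M).index ≠ 0)
    (m : ℕ) (hm : 1 ≤ m) :
    entropy d (⇑M '' A) ≤ Real.log (npat d A (box d m)) / (m : ℝ) ^ d := by
  classical
  -- coset representatives
  haveI hqfin : Finite (Zd d ⧸ M.range) := Nat.finite_of_card_ne_zero hidx
  haveI := Fintype.ofFinite (Zd d ⧸ M.range)
  set K := (AddMonoidHom.range M).index with hK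
  have hcard : Fintype.card (Zd d ⧸ M.range) = K := by
    rw [← Nat.card_eq_fintype_card]
    rfl
  let e : (Zd d ⧸ M.range) ≃ Fin K := Fintype.equivFinOfCardEq hcard
  let c : Fin K → Zd d := fun i => (e.symm i).out
  have hc : Function.Bijective (repsMap M K c) := by
    have hre : repsMap M K c = fun i => e.symm i := by
      funext i
      exact QuotientAddGroup.out_eq' (e.symm i)
    rw [hre]
    exact e.symm.bijective
  set W := ⋃ i, (fun y => M y + c i) '' box d m with hWdef
  have hWfin : W.Finite := Set.finite_iUnion fun i => (box_finite m).image _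
  -- |W| = K * m^d
  have hWcard : W.ncard = K * m ^ d := by
    have hWu : W = ⋃ i ∈ (Finset.univ : Finset (Fin K)), (fun y => M y + c i) '' box d m := by
      simp [hWdef]
    rw [hWu, ncard_biUnion _ _ (fun i => (box_finite m).image _) ?_]
    · have hone : ∀ i : Fin K, ((fun y => M y + c i) '' box d m).ncard = m ^ d := by
        intro i
        rw [Set.ncard_image_of_injOn (fun a _ b _ h => hM (add_right_cancel h)), box_ncard]
      rw [Finset.sum_congr rfl fun i _ => hone i, Finset.sum_const, smul_eq_mul,
        Finset.card_univ, Fintype.card_fin]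
    · intro i _ j _ hij
      rw [Set.disjoint_left]
      rintro a ⟨y, hy, rfl⟩ ⟨y', hy', heq⟩
      apply hij
      apply hc.1
      show QuotientAddGroup.mk (c i) = QuotientAddGroup.mk (c j)
      rw [QuotientAddGroup.eq_iff_sub_mem]
      refine ⟨y' - y, ?_⟩
      rw [map_sub]
      linear_combination heq
  -- uniform bound on W
  obtain ⟨D, hD⟩ : ∃ D : ℕ, ∀ w ∈ W, ∀ j, -(D : ℤ) ≤ w j ∧ w j ≤ (D : ℤ) := by
    set D := hWfin.toFinset.sup fun w => Finset.univ.sup fun j => (w j).natAbs with hDdef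
    refine ⟨D, ?_⟩
    intro w hw j
    have h1 : (w j).natAbs ≤ hWfin.toFinset.sup fun w => Finset.univ.sup fun j => (w j).natAbs :=
      le_trans (Finset.le_sup (f := fun j => (w j).natAbs) (Finset.mem_univ j))
        (Finset.le_sup (f := fun w => Finset.univ.sup fun j => (w j).natAbs)
          (hWfin.mem_toFinset.mpr hw))
    have h2 : |w j| ≤ (D : ℤ) := by
      rw [Int.abs_eq_natAbs]
      exact_mod_cast h1
    exact abs_le.mp h2
  -- tiles
  set tile : Zd d → Set (Zd d) := fun t => (fun u => u + M (m • t)) '' W with htile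
  have htile_fin : ∀ t, (tile t).Finite := fun t => hWfin.image _
  have htile_card : ∀ t, (tile t).ncard = K * m ^ d := by
    intro t
    rw [htile]
    show ((fun u => u + M (m • t)) '' W).ncard = _
    rw [Set.ncard_image_of_injOn fun a _ b _ h => by simpa using h]
    exact hWcard
  have hcover : ∀ x : Zd d, ∃ t : Zd d, x ∈ tile t := by
    intro x
    set i : Fin K := e (QuotientAddGroup.mk x) with hi
    have hci : (QuotientAddGroup.mk (c i) : Zd d ⧸ M.range) = QuotientAddGroup.mk x := by
      show QuotientAddGroup.mk ((e.symm i).out) = _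
      rw [QuotientAddGroup.out_eq' (e.symm i), hi, e.symm_apply_apply]
    have hmem : x - c i ∈ M.range := (QuotientAddGroup.eq_iff_sub_mem).mp hci.symm
    obtain ⟨y, hy⟩ := AddMonoidHom.mem_range.mp hmem
    refine ⟨fun j => y j / m, M (fun j => y j % m) + c i, ?_, ?_⟩
    · refine Set.mem_iUnion.mpr ⟨i, ⟨fun j => y j % m, fun j => ⟨?_, ?_⟩, rfl⟩⟩
      · exact Int.emod_nonneg _ (by exact_mod_cast Nat.one_le_iff_ne_zero.mp hm)
      · exact Int.emod_lt_of_pos _ (by exact_mod_cast hm)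
    · have hsplit : (fun j => y j % m) + m • (fun j => y j / m) = y := by
        funext j
        show y j % m + m • (y j / m) = y j
        rw [nsmul_eq_mul]
        have := Int.mul_ediv_add_emod (y j) (m : ℤ)
        linarith
      calc M (fun j => y j % m) + c i + M (m • fun j => y j / m)
          = M ((fun j => y j % m) + m • (fun j => y j / m)) + c i := by
            rw [map_add]
            abel
        _ = M y + c i := by rw [hsplit]
        _ = x := by rw [hy]; abel
  have hdisj : ∀ t t', t ≠ t' → Disjoint (tile t) (tile t') := by
    intro t t' hne
    rw [Set.disjoint_left]
    rintro u ⟨w, hw, hwu⟩ ⟨w', hw', hwu'⟩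
    obtain ⟨i, hi⟩ := Set.mem_iUnion.mp (show w ∈ ⋃ i, (fun y => M y + c i) '' box d m from hw)
    obtain ⟨y, hy, rfl⟩ := hi
    obtain ⟨i', hi'⟩ := Set.mem_iUnion.mp (show w' ∈ ⋃ i, (fun y => M y + c i) '' box d m from hw')
    obtain ⟨y', hy', rfl⟩ := hi'
    have heq : M (y + m • t) + c i = M (y' + m • t') + c i' := by
      rw [map_add, map_add]
      have h1 : M y + c i + M (m • t) = M y' + c i' + M (m • t') := hwu.trans hwu'.symm
      linear_combination h1
    have hii : i = i' := by
      apply hc.1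
      show QuotientAddGroup.mk (c i) = QuotientAddGroup.mk (c i')
      rw [QuotientAddGroup.eq_iff_sub_mem]
      refine ⟨(y' + m • t') - (y + m • t), ?_⟩
      rw [map_sub]
      linear_combination -heq
    subst hii
    have hyy : y + m • t = y' + m • t' := hM (add_right_cancel heq)
    apply hne
    funext j
    have hj := congr_fun hyy j
    simp only [Pi.add_apply, Pi.smul_apply] at hj
    simp only [nsmul_eq_mul] at hj
    have hbj := hy j
    have hbj' := hy' j
    have hmz : (m : ℤ) * (t' j - t j) = y j - y' j := by push_cast at hj ⊢; linarith
    have h0 : t' j - t j = 0 := int_eq_zero_of_mul_bounds (by exact_mod_cast hm) hmz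
      (by omega) (by omega)
    omega
  -- the per-n estimate
  set L : ℝ := Real.log (npat d A (box d m)) with hL
  have hL0 : 0 ≤ L := log_nat_nonneg _
  have hnpatW : npat d (⇑M '' A) W = npat d A (box d m) ^ K :=
    npat_prod M A (box d m) hA (box_finite m) hM hc
  have key : ∀ n : ℕ, 1 ≤ n → avals (⇑M '' A) n
      ≤ (((n : ℝ) + 4 * D) / n) ^ d * (L / (m : ℝ) ^ d) := by
    intro n hn
    set Tset : Set (Zd d) := {t | (tile t ∩ box d n).Nonempty} with hTset
    have hTfin : Tset.Finite := by
      rw [← Set.finite_coe_iff]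
      haveI : Finite ↥(box d n) := box_finite n
      have hwit : ∀ t : ↥Tset, ∃ x, x ∈ tile t.val ∩ box d n := fun t => t.2
      choose wit hwitmem using hwit
      refine Finite.of_injective (fun t => (⟨wit t, (hwitmem t).2⟩ : ↥(box d n))) ?_
      intro t t' h
      have hval : wit t = wit t' := congrArg Subtype.val h
      refine Subtype.ext ?_
      by_contra htt
      exact Set.disjoint_left.mp (hdisj t.val t'.val htt) (hwitmem t).1
        (hval ▸ (hwitmem t').1)
    set T := hTfin.toFinset with hT
    have hcover' : box d n ⊆ ⋃ t ∈ T, tile t := by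
      intro x hx
      obtain ⟨t, ht⟩ := hcover x
      exact Set.mem_biUnion (hTfin.mem_toFinset.mpr ⟨x, ht, hx⟩) ht
    -- cardinality bound on T
    have hsum : ∑ t ∈ T, (tile t).ncard ≤ (n + 4 * D) ^ d := by
      rw [← ncard_biUnion T tile htile_fin fun t _ t' _ hne => hdisj t t' hne]
      have hsubset : (⋃ t ∈ T, tile t)
          ⊆ (fun u => u + fun _ : Fin d => -(2 * (D : ℤ))) '' box d (n + 4 * D) := by
        intro u hu
        obtain ⟨t, ht, hut⟩ := Set.mem_iUnion₂.mp hu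
        obtain ⟨x₀, hx₀tile, hx₀box⟩ := hTfin.mem_toFinset.mp ht
        obtain ⟨w, hw, hwu⟩ := hut
        obtain ⟨w', hw', hwx₀⟩ := hx₀tile
        refine ⟨u + fun _ => 2 * (D : ℤ), ?_, ?_⟩
        · intro j
          have h1 := hD w hw j
          have h2 := hD w' hw' j
          have h3 := hx₀box j
          have h4 : u j - x₀ j = w j - w' j := by
            rw [← hwu, ← hwx₀]
            show w j + (M (m • t)) j - (w' j + (M (m • t)) j) = w j - w' j
            ring
          constructor
          · show (0 : ℤ) ≤ u j + 2 * (D : ℤ)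
            omega
          · show u j + 2 * (D : ℤ) < ((n + 4 * D : ℕ) : ℤ)
            push_cast
            omega
        · funext j
          show u j + 2 * (D : ℤ) + -(2 * D) = u j
          ring
      calc (⋃ t ∈ T, tile t).ncard
          ≤ ((fun u => u + fun _ : Fin d => -(2 * (D : ℤ))) '' box d (n + 4 * D)).ncard :=
            Set.ncard_le_ncard hsubset ((box_finite _).image _)
        _ = (n + 4 * D) ^ d := by
            rw [Set.ncard_image_of_injOn fun a _ b _ h => by simpa using h, box_ncard]
    have hTcard : T.card * (K * m ^ d) ≤ (n + 4 * D) ^ d := by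
      calc T.card * (K * m ^ d) = ∑ t ∈ T, (tile t).ncard := by
            rw [Finset.sum_congr rfl fun t _ => htile_card t, Finset.sum_const, smul_eq_mul]
        _ ≤ _ := hsum
    -- pattern-count bound
    have hmain : npat d (⇑M '' A) (box d n) ≤ npat d A (box d m) ^ (K * T.card) := by
      calc npat d (⇑M '' A) (box d n)
          ≤ npat d (⇑M '' A) (⋃ t ∈ T, tile t) :=
            npat_mono _ (hA.image _) (T.finite_toSet.biUnion fun t _ => htile_fin t) hcover'
        _ ≤ ∏ t ∈ T, npat d (⇑M '' A) (tile t) :=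
            npat_biUnion_le _ (hA.image _) T tile htile_fin
        _ = npat d (⇑M '' A) W ^ T.card := by
            rw [Finset.prod_congr rfl fun t _ => ?_, Finset.prod_const]
            show npat d (⇑M '' A) (tile t) = npat d (⇑M '' A) W
            rw [htile]
            exact npat_translate (⇑M '' A) W (M (m • t))
        _ = (npat d A (box d m) ^ K) ^ T.card := by rw [hnpatW]
        _ = npat d A (box d m) ^ (K * T.card) := by rw [← pow_mul]
    have hlog : Real.log (npat d (⇑M '' A) (box d n)) ≤ (K * T.card : ℕ) * L := by
      calc Real.log (npat d (⇑M '' A) (box d n))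
          ≤ Real.log ((npat d A (box d m) ^ (K * T.card) : ℕ)) := log_nat_mono hmain
        _ = (K * T.card : ℕ) * L := by
            push_cast
            rw [Real.log_pow]
            push_cast
            ring
    have hn' : (0 : ℝ) < (n : ℝ) ^ d := by positivity
    have hm' : (0 : ℝ) < (m : ℝ) ^ d := by positivity
    have hKT : ((K * T.card : ℕ) : ℝ) * (m : ℝ) ^ d ≤ ((n : ℝ) + 4 * D) ^ d := by
      have hc1 : ((T.card * (K * m ^ d) : ℕ) : ℝ) ≤ (((n + 4 * D) ^ d : ℕ) : ℝ) := by
        exact_mod_cast hTcard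
      push_cast at hc1 ⊢
      nlinarith [hc1]
    show Real.log (npat d (⇑M '' A) (box d n)) / (n : ℝ) ^ d ≤ _
    rw [div_le_iff₀ hn']
    calc Real.log (npat d (⇑M '' A) (box d n)) ≤ ((K * T.card : ℕ) : ℝ) * L := hlog
      _ ≤ (((n : ℝ) + 4 * D) ^ d / (m : ℝ) ^ d) * L := by
          apply mul_le_mul_of_nonneg_right _ hL0
          rw [le_div_iff₀ hm']
          exact hKT
      _ = ((((n : ℝ) + 4 * D) / n) ^ d * (L / (m : ℝ) ^ d)) * (n : ℝ) ^ d := by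
          rw [div_pow]
          field_simp
  -- limsup step
  have hD0 : (0 : ℝ) ≤ 4 * D := by positivity
  have htend : Filter.Tendsto
      (fun n : ℕ => (((n : ℝ) + 4 * D) / n) ^ d * (L / (m : ℝ) ^ d)) atTop
      (nhds (L / (m : ℝ) ^ d)) := by
    have h1 : Filter.Tendsto (fun n : ℕ => ((n : ℝ) + 4 * D) / n) atTop (nhds 1) := by
      have h2 : Filter.Tendsto (fun n : ℕ => 1 + (4 * D : ℝ) / n) atTop (nhds 1) := by
        have h3 := tendsto_const_div_atTop_nhds_zero_nat (4 * D : ℝ)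
        have h4 : Filter.Tendsto (fun _ : ℕ => (1 : ℝ)) atTop (nhds 1) := tendsto_const_nhds
        simpa using h4.add h3
      apply h2.congr'
      filter_upwards [Filter.eventually_ge_atTop 1] with n hn
      have hn0 : (n : ℝ) ≠ 0 := by
        have : 0 < n := hn
        positivity
      field_simp
    have h5 := (h1.pow d).mul_const (L / (m : ℝ) ^ d)
    simpa using h5
  rw [entropy_eq]
  have hle : limsup (avals (⇑M '' A)) atTop
      ≤ limsup (fun n : ℕ => (((n : ℝ) + 4 * D) / n) ^ d * (L / (m : ℝ) ^ d)) atTop := by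
    apply Filter.limsup_le_limsup
    · filter_upwards [Filter.eventually_ge_atTop 1] with n hn
      exact key n hn
    · exact Filter.isCoboundedUnder_le_of_le _ fun n => avals_nonneg _ n
    · exact htend.isBoundedUnder_le
  rw [htend.limsup_eq] at hle
  exact hle


end

end EPerm

/-- for an injective additive endomorphism `M` of `ℤ^d` whose range has
finite index `k`, there is a bijection `Φ : Ω(M(A)) → Ω(A)^k` intertwining the
conjugation action of the translation `τ_{Mm}` on `Ω(M(A))` with the (diagonal)
conjugation action of `τ_m` on `Ω(A)^k`; in particular `h(Ω(A)) = h(Ω(M(A)))`. -/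
theorem endomorphism_image_conjugacy
    (d : ℕ) (hd : 1 ≤ d) (A : Set (Zd d)) (hA : A.Finite)
    (M : Zd d →+ Zd d) (hM : Function.Injective M)
    (k : ℕ) (hk : 0 < k) (hidx : (AddMonoidHom.range M).index = k) :
    (∃ Φ : (Zd d → Zd d) → (Fin k → Zd d → Zd d),
      Set.BijOn Φ (Omega d (⇑M '' A)) {f : Fin k → Zd d → Zd d | ∀ i, f i ∈ Omega d A} ∧
      ∀ π ∈ Omega d (⇑M '' A), ∀ m : Zd d, ∀ i : Fin k,
        Φ (fun x => π (x - M m) + M m) i = fun x => Φ π i (x - m) + m) ∧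
    entropy d A = entropy d (⇑M '' A) := by
  classical
  haveI hqfin : Finite (Zd d ⧸ M.range) :=
    Nat.finite_of_card_ne_zero (by rw [show Nat.card (Zd d ⧸ M.range) = k from hidx]; exact hk.ne')
  haveI := Fintype.ofFinite (Zd d ⧸ M.range)
  have hcard : Fintype.card (Zd d ⧸ M.range) = k := by
    rw [← Nat.card_eq_fintype_card]
    exact hidx
  let e : (Zd d ⧸ M.range) ≃ Fin k := Fintype.equivFinOfCardEq hcard
  let c : Fin k → Zd d := fun i => (e.symm i).out
  have hc : Function.Bijective (EPerm.repsMap M k c) := by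
    have hre : EPerm.repsMap M k c = fun i => e.symm i := by
      funext i
      exact QuotientAddGroup.out_eq' (e.symm i)
    rw [hre]
    exact e.symm.bijective
  constructor
  · exact ⟨EPerm.Phi M k c, EPerm.bijOn_phi hM hc,
      fun π hπ m i => EPerm.phi_equivariant hM hπ m i⟩
  · apply le_antisymm
    · -- h(A) ≤ h(MA)
      obtain ⟨M'', hM''inj, hcomp, hidx''⟩ := EPerm.exists_left_inverse M hM hk hidx
      have himg : ⇑M'' '' (⇑M '' A) = ⇑(EPerm.Mq d k) '' A := by
        rw [← Set.image_comp]
        exact Set.image_congr' fun x => hcomp x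
      have h1 : entropy d A ≤ entropy d (⇑(EPerm.Mq d k) '' A) := EPerm.scalar_le hd A hA k hk
      rw [← himg] at h1
      refine h1.trans ?_
      rw [EPerm.entropy_eq (⇑M '' A)]
      refine Filter.le_limsup_of_frequently_le ?_ (EPerm.avals_bdd hd _ (hA.image _))
      refine ((Filter.eventually_ge_atTop 1).mono ?_).frequently
      intro m hm
      exact EPerm.entropy_image_le hd (⇑M '' A) (hA.image _) M'' hM''inj hidx'' m hm
    · -- h(MA) ≤ h(A)
      rw [EPerm.entropy_eq A]
      refine Filter.le_limsup_of_frequently_le ?_ (EPerm.avals_bdd hd A hA)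
      refine ((Filter.eventually_ge_atTop 1).mono ?_).frequently
      intro m hm
      exact EPerm.entropy_image_le hd A hA M hM (by rw [hidx]; exact hk.ne') m hm
end

section
/- Let A_⊕ = {(0,0),(1,0),(−1,0),(0,1),(0,−1)} ⊆ ℤ². Let n₁, n₂ ≥ 1, let U = {0,…,n₁−1} × {0,…,n₂−1} ⊆ ℤ², and let f : U → ℤ² satisfy f(u) − u ∈ A_⊕ for all u ∈ U. Then there exists π ∈ Ω(A_⊕) with π(u) = f(u) for all u ∈ U if and only if f is injective and Int(U, A_⊕) := {u ∈ U : u − a ∈ U for every a ∈ A_⊕} is contained in the image f(U). -/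
/-- The restricting set `A_⊕ = {(0,0),(1,0),(−1,0),(0,1),(0,−1)} ⊆ ℤ²`. -/
def A_oplus : Set (ℤ × ℤ) := {(0, 0), (1, 0), (-1, 0), (0, 1), (0, -1)}

/-- `Ω(A)`: bijections `π : ℤ² → ℤ²` with `π x − x ∈ A` for all `x`. -/
def Omega2 (A : Set (ℤ × ℤ)) : Set ((ℤ × ℤ) → (ℤ × ℤ)) :=
  {π | Function.Bijective π ∧ ∀ x : ℤ × ℤ, π x - x ∈ A}

/-- The box `{0,…,n₁−1} × {0,…,n₂−1} ⊆ ℤ²`. -/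
def box2 (n₁ n₂ : ℕ) : Set (ℤ × ℤ) :=
  {x | 0 ≤ x.1 ∧ x.1 < (n₁ : ℤ) ∧ 0 ≤ x.2 ∧ x.2 < (n₂ : ℤ)}

/-- The interior of `U` with respect to `A`: `{u ∈ U : u − a ∈ U for all a ∈ A}`. -/
def interior2 (U A : Set (ℤ × ℤ)) : Set (ℤ × ℤ) :=
  {u ∈ U | ∀ a ∈ A, u - a ∈ U}


namespace Glob

abbrev Cell := ℤ × ℤ

/-- a unit step (in one of the four directions) -/
def ustep (x y : Cell) : Prop :=
  (y.1 - x.1 = 1 ∧ y.2 = x.2) ∨ (y.1 - x.1 = -1 ∧ y.2 = x.2) ∨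
  (y.2 - x.2 = 1 ∧ y.1 = x.1) ∨ (y.2 - x.2 = -1 ∧ y.1 = x.1)

/-- membership in the open box `[0,W) × [0,H)` -/
def inU (W H : ℤ) (c : Cell) : Prop := 0 ≤ c.1 ∧ c.1 < W ∧ 0 ≤ c.2 ∧ c.2 < H

instance (W H : ℤ) (c : Cell) : Decidable (inU W H c) := by unfold inU; infer_instance

/-- the cell at "radial level `r`" over boundary position `p` -/
def rad (W H r p : ℤ) : Cell :=
  if p < W then (p, -r)
  else if p < W + H then (W - 1 + r, p - W)
  else if p < 2*W + H then (2*W + H - 1 - p, H - 1 + r)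
  else (-r, 2*W + 2*H - 1 - p)

/-- parametrization of the `r`-th ring around the box -/
def rho (W H r t : ℤ) : Cell :=
  if t < W + 2*r then (t - r, -r)
  else if t < W + H + 4*r - 1 then (W - 1 + r, t - W - 3*r + 1)
  else if t < 2*W + H + 6*r - 2 then (2*W + H + 5*r - 3 - t, H - 1 + r)
  else (-r, 2*W + 2*H + 7*r - 4 - t)

/-- the ring-`r` parameter of the radial shadow of boundary position `p` -/
def sh (W H r p : ℤ) : ℤ :=
  if p < W then p + r
  else if p < W + H then p + 3*r - 1
  else if p < 2*W + H then p + 5*r - 2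
  else p + 7*r - 3

/-- the boundary cell of the box at boundary position `p` -/
def innerC (W H p : ℤ) : Cell :=
  if p < W then (p, 0)
  else if p < W + H then (W - 1, p - W)
  else if p < 2*W + H then (2*W + H - 1 - p, H - 1)
  else (0, 2*W + 2*H - 1 - p)

def onRing (W H r : ℤ) (c : Cell) : Prop :=
  (c.1 = -r ∨ c.1 = W - 1 + r ∨ c.2 = -r ∨ c.2 = H - 1 + r) ∧
  -r ≤ c.1 ∧ c.1 ≤ W - 1 + r ∧ -r ≤ c.2 ∧ c.2 ≤ H - 1 + r

def proper (W H p : ℤ) : Prop := 0 ≤ p ∧ p < 2*W + 2*H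

/-- number of cells on ring `r` -/
def per (W H r : ℤ) : ℤ := 2*W + 2*H + 8*r - 4

section lemmas
variable {W H : ℤ}

lemma rho_sh {r p : ℤ} (hW : 1 ≤ W) (hH : 1 ≤ H) (hr : 1 ≤ r) (hp : proper W H p) :
    rho W H r (sh W H r p) = rad W H r p := by
  unfold rho sh rad proper at *
  split_ifs <;> simp [Prod.ext_iff] <;> omega

lemma sh_lt {r p p' : ℤ} (hW : 1 ≤ W) (hH : 1 ≤ H) (hr : 1 ≤ r) (hp : proper W H p) (hp' : proper W H p')
    (h : p < p') : sh W H r p < sh W H r p' := by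
  unfold sh proper at *
  split_ifs <;> omega

lemma sh_range {r p : ℤ} (hW : 1 ≤ W) (hH : 1 ≤ H) (hr : 1 ≤ r) (hp : proper W H p) :
    0 ≤ sh W H r p ∧ sh W H r p ≤ per W H r - 1 := by
  unfold sh per proper at *
  split_ifs <;> omega

lemma rho_inj {r t t' : ℤ} (hW : 1 ≤ W) (hH : 1 ≤ H) (hr : 1 ≤ r) (ht0 : 0 ≤ t) (ht1 : t ≤ per W H r - 1)
    (ht0' : 0 ≤ t') (ht1' : t' ≤ per W H r - 1) (h : rho W H r t = rho W H r t') :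
    t = t' := by
  unfold rho per at *
  split_ifs at h <;> simp [Prod.ext_iff] at h <;> omega

lemma onRing_rho {r t : ℤ} (hW : 1 ≤ W) (hH : 1 ≤ H) (hr : 1 ≤ r) (ht0 : 0 ≤ t) (ht1 : t ≤ per W H r - 1) :
    onRing W H r (rho W H r t) := by
  unfold rho per onRing at *
  split_ifs <;> simp <;> omega

lemma onRing_rad {r p : ℤ} (hW : 1 ≤ W) (hH : 1 ≤ H) (hr : 1 ≤ r) (hp : proper W H p) :
    onRing W H r (rad W H r p) := by
  unfold rad onRing proper at *
  split_ifs <;> simp <;> omega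

lemma onRing_eq {r r' : ℤ} {c : Cell} (hW : 1 ≤ W) (hH : 1 ≤ H) (hr : 1 ≤ r) (hr' : 1 ≤ r')
    (h : onRing W H r c) (h' : onRing W H r' c) : r = r' := by
  unfold onRing at *
  obtain ⟨d1, d2⟩ := h; obtain ⟨d1', d2'⟩ := h'
  rcases d1 with h|h|h|h <;> rcases d1' with h'|h'|h'|h' <;> omega

lemma rad_inj {r p p' : ℤ} (hW : 1 ≤ W) (hH : 1 ≤ H) (hr : 1 ≤ r) (hp : proper W H p) (hp' : proper W H p')
    (h : rad W H r p = rad W H r p') : p = p' := by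
  unfold rad proper at *
  split_ifs at h <;> simp [Prod.ext_iff] at h <;> omega

lemma onRing_not_inU {r : ℤ} {c : Cell} (hW : 1 ≤ W) (hH : 1 ≤ H) (hr : 1 ≤ r) (h : onRing W H r c) :
    ¬ inU W H c := by
  unfold onRing inU at *
  obtain ⟨d1, d2⟩ := h
  rcases d1 with h|h|h|h <;> omega

lemma inner_inU {p : ℤ} (hW : 1 ≤ W) (hH : 1 ≤ H) (hp : proper W H p) : inU W H (innerC W H p) := by
  unfold innerC inU proper at *
  split_ifs <;> simp <;> omega

lemma step_rad {r p : ℤ} (hW : 1 ≤ W) (hH : 1 ≤ H) (hr : 1 ≤ r) (hp : proper W H p) :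
    ustep (rad W H r p) (rad W H (r+1) p) := by
  unfold rad ustep proper at *
  split_ifs <;> simp <;> omega

lemma step_rho {r t : ℤ} (hW : 1 ≤ W) (hH : 1 ≤ H) (hr : 1 ≤ r) (ht0 : 0 ≤ t) (ht1 : t + 1 ≤ per W H r - 1) :
    ustep (rho W H r t) (rho W H r (t+1)) := by
  unfold rho ustep per at *
  split_ifs <;> simp <;> omega

lemma step_inner {p : ℤ} (hW : 1 ≤ W) (hH : 1 ≤ H) (hp : proper W H p) : ustep (rad W H 1 p) (innerC W H p) := by
  unfold rad innerC ustep proper at *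
  split_ifs <;> simp <;> omega

lemma rho_eq_rad {r t p : ℤ} (hW : 1 ≤ W) (hH : 1 ≤ H) (hr : 1 ≤ r) (hp : proper W H p) (ht0 : 0 ≤ t)
    (ht1 : t ≤ per W H r - 1) (h : rho W H r t = rad W H r p) : t = sh W H r p := by
  have h1 := rho_sh (W := W) (H := H) hW hH hr hp
  have h2 := sh_range (W := W) (H := H) hW hH hr hp
  exact rho_inj hW hH hr ht0 ht1 h2.1 h2.2 (h.trans h1.symm)

end lemmas


lemma ustep_symm {x y : Cell} (h : ustep x y) : ustep y x := by
  unfold ustep at *; omega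

-- generic list helpers
lemma head?_range_map {n : ℕ} {g : ℕ → Cell} (h : 0 < n) :
    ((List.range n).map g).head? = some (g 0) := by
  cases n with
  | zero => omega
  | succ m => simp [List.range_succ_eq_map]

lemma getLast?_range_map {n : ℕ} {g : ℕ → Cell} (h : 0 < n) :
    ((List.range n).map g).getLast? = some (g (n-1)) := by
  cases n with
  | zero => omega
  | succ m =>
    rw [List.range_succ, List.map_append]
    simp

lemma chain'_range_map {n : ℕ} {g : ℕ → Cell}
    (h : ∀ i : ℕ, i + 1 < n → ustep (g i) (g (i+1))) :
    List.Chain' ustep ((List.range n).map g) := by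
  unfold List.Chain'
  rw [List.isChain_map]
  cases n with
  | zero => simp
  | succ m =>
    rw [List.isChain_range_succ]
    intro i hi
    exact h i (by omega)

lemma nodup_range_map {n : ℕ} {g : ℕ → Cell}
    (h : ∀ i < n, ∀ j < n, g i = g j → i = j) :
    (((List.range n).map g)).Nodup := by
  apply List.Nodup.map_on _ List.nodup_range
  intro i hi j hj hg
  exact h i (by simpa using hi) j (by simpa using hj) hg

lemma mem_range_map {n : ℕ} {g : ℕ → Cell} {c : Cell} :
    c ∈ (List.range n).map g ↔ ∃ i < n, c = g i := by
  simp [eq_comm]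

section mk
variable {W H : ℤ}

def spokeL (W H r p : ℤ) : List Cell :=
  (List.range (r-1).toNat).map (fun i : ℕ => rad W H ((i : ℤ)+1) p)

def walkL (W H r a b : ℤ) : List Cell :=
  if a ≤ b then (List.range (b-a+1).toNat).map (fun i : ℕ => rho W H r (a+(i:ℤ)))
  else (List.range (a-b+1).toNat).map (fun i : ℕ => rho W H r (a-(i:ℤ)))

def mkChain (W H r pd pt : ℤ) : List Cell :=
  spokeL W H r pd ++ walkL W H r (sh W H r pd) (sh W H r pt) ++
    (spokeL W H r pt).reverse ++ [innerC W H pt]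


lemma head?_walk {r a b : ℤ} : (walkL W H r a b).head? = some (rho W H r a) := by
  unfold walkL
  split_ifs with h
  · rw [head?_range_map (by omega)]; simp
  · rw [head?_range_map (by omega)]; simp

lemma walk_ne_nil {r a b : ℤ} : walkL W H r a b ≠ [] := by
  intro h
  have := head?_walk (W := W) (H := H) (r := r) (a := a) (b := b)
  rw [h] at this
  simp at this

lemma getLast?_walk {r a b : ℤ} : (walkL W H r a b).getLast? = some (rho W H r b) := by
  unfold walkL
  split_ifs with h
  · rw [getLast?_range_map (by omega)]
    congr 1; congr 1; omega
  · rw [getLast?_range_map (by omega)]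
    congr 1; congr 1; omega

lemma mem_walk {r a b c} (h : c ∈ walkL W H r a b) :
    ∃ t : ℤ, min a b ≤ t ∧ t ≤ max a b ∧ c = rho W H r t := by
  unfold walkL at h
  split_ifs at h with hab <;> rw [mem_range_map] at h <;> obtain ⟨i, hi, rfl⟩ := h
  · exact ⟨a + i, by omega, by omega, rfl⟩
  · exact ⟨a - i, by omega, by omega, rfl⟩

lemma chain'_walk {r a b : ℤ} (hW : 1 ≤ W) (hH : 1 ≤ H) (hr : 1 ≤ r)
    (ha : 0 ≤ a) (ha' : a ≤ per W H r - 1) (hb : 0 ≤ b) (hb' : b ≤ per W H r - 1) :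
    List.Chain' ustep (walkL W H r a b) := by
  unfold walkL
  split_ifs with hab
  · apply chain'_range_map
    intro i hi
    have hs := step_rho (W := W) (H := H) hW hH hr (t := a + i) (by omega) (by omega)
    convert hs using 2 <;> push_cast <;> ring
  · apply chain'_range_map
    intro i hi
    have hs := step_rho (W := W) (H := H) hW hH hr (t := a - i - 1) (by omega) (by omega)
    have h1 : a - ((i:ℕ)+1:ℕ) = a - (i:ℤ) - 1 := by push_cast; ring
    rw [h1]
    apply ustep_symm
    convert hs using 2
    omega

lemma nodup_walk {r a b : ℤ} (hW : 1 ≤ W) (hH : 1 ≤ H) (hr : 1 ≤ r)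
    (ha : 0 ≤ a) (ha' : a ≤ per W H r - 1) (hb : 0 ≤ b) (hb' : b ≤ per W H r - 1) :
    (walkL W H r a b).Nodup := by
  unfold walkL
  split_ifs with hab <;> apply nodup_range_map <;> intro i hi j hj hg
  · have := rho_inj hW hH hr (t := a + i) (t' := a + j) (by omega) (by omega) (by omega) (by omega) hg
    omega
  · have := rho_inj hW hH hr (t := a - i) (t' := a - j) (by omega) (by omega) (by omega) (by omega) hg
    omega

lemma mem_spoke {r p c} (h : c ∈ spokeL W H r p) :
    ∃ i : ℤ, 1 ≤ i ∧ i ≤ r - 1 ∧ c = rad W H i p := by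
  unfold spokeL at h
  rw [mem_range_map] at h
  obtain ⟨i, hi, rfl⟩ := h
  exact ⟨(i:ℤ)+1, by omega, by omega, rfl⟩

lemma chain'_spoke {r p : ℤ} (hW : 1 ≤ W) (hH : 1 ≤ H) (hp : proper W H p) :
    List.Chain' ustep (spokeL W H r p) := by
  apply chain'_range_map
  intro i hi
  have hs := step_rad (W := W) (H := H) hW hH (r := (i:ℤ)+1) (by omega) hp
  push_cast
  exact hs

lemma nodup_spoke {r p : ℤ} (hW : 1 ≤ W) (hH : 1 ≤ H) (hp : proper W H p) :
    (spokeL W H r p).Nodup := by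
  apply nodup_range_map
  intro i hi j hj hg
  have h1 := onRing_rad hW hH (r := (i:ℤ)+1) (by omega) hp
  have h2 := onRing_rad hW hH (r := (j:ℤ)+1) (by omega) hp
  rw [hg] at h1
  have := onRing_eq hW hH (by omega) (by omega) h1 h2
  omega

end mk

section mk2
variable {W H : ℤ}

lemma chain'_reverse_ustep {l : List Cell} (h : List.Chain' ustep l) :
    List.Chain' ustep l.reverse := by
  unfold List.Chain' at *
  rw [List.isChain_reverse]
  exact h.imp (fun a b hab => ustep_symm hab)

lemma head?_spoke {r p : ℤ} (hr : 2 ≤ r) :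
    (spokeL W H r p).head? = some (rad W H 1 p) := by
  unfold spokeL
  rw [head?_range_map (by omega)]
  norm_num

lemma getLast?_spoke {r p : ℤ} (hr : 2 ≤ r) :
    (spokeL W H r p).getLast? = some (rad W H (r-1) p) := by
  unfold spokeL
  rw [getLast?_range_map (by omega)]
  congr 2
  omega

lemma spoke_nil {r p : ℤ} (hr : r ≤ 1) : spokeL W H r p = [] := by
  unfold spokeL
  have : (r-1).toNat = 0 := by omega
  simp [this]

lemma mem_mkChain {r pd pt : ℤ} {c : Cell} (h : c ∈ mkChain W H r pd pt) :
    (∃ i : ℤ, 1 ≤ i ∧ i ≤ r - 1 ∧ (c = rad W H i pd ∨ c = rad W H i pt)) ∨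
    (∃ t : ℤ, min (sh W H r pd) (sh W H r pt) ≤ t ∧
      t ≤ max (sh W H r pd) (sh W H r pt) ∧ c = rho W H r t) ∨
    c = innerC W H pt := by
  unfold mkChain at h
  simp only [List.mem_append, List.mem_reverse, List.mem_singleton] at h
  rcases h with (((h|h)|h)|h)
  · obtain ⟨i,h1,h2,h3⟩ := mem_spoke h; exact Or.inl ⟨i,h1,h2,Or.inl h3⟩
  · exact Or.inr (Or.inl (mem_walk h))
  · obtain ⟨i,h1,h2,h3⟩ := mem_spoke h; exact Or.inl ⟨i,h1,h2,Or.inr h3⟩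
  · exact Or.inr (Or.inr h)

lemma head?_mkChain (hW : 1 ≤ W) (hH : 1 ≤ H) {r pd pt : ℤ} (hr : 1 ≤ r)
    (hpd : proper W H pd) :
    (mkChain W H r pd pt).head? = some (rad W H 1 pd) := by
  unfold mkChain
  rcases eq_or_lt_of_le hr with h1 | h2
  · rw [spoke_nil (by omega)]
    simp only [List.nil_append]
    rw [List.append_assoc, List.head?_append_of_ne_nil _ walk_ne_nil]
    rw [head?_walk, ← h1, rho_sh hW hH (le_refl 1) hpd]
  · have hsp : spokeL W H r pd ≠ [] := by
      unfold spokeL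
      simp [List.map_eq_nil_iff, List.range_eq_nil]
      omega
    rw [List.append_assoc, List.append_assoc]
    rw [List.head?_append_of_ne_nil _ hsp]
    exact head?_spoke (by omega)

lemma getLast?_mkChain {r pd pt : ℤ} :
    (mkChain W H r pd pt).getLast? = some (innerC W H pt) := by
  unfold mkChain
  simp [List.getLast?_append]

lemma length_mkChain {r pd pt : ℤ} : 2 ≤ (mkChain W H r pd pt).length := by
  unfold mkChain
  simp only [List.length_append, List.length_singleton]
  have := walk_ne_nil (W := W) (H := H) (r := r) (a := sh W H r pd) (b := sh W H r pt)
  have : 0 < (walkL W H r (sh W H r pd) (sh W H r pt)).length := List.length_pos_iff.mpr this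
  omega

lemma chain'_mkChain (hW : 1 ≤ W) (hH : 1 ≤ H) {r pd pt : ℤ} (hr : 1 ≤ r)
    (hpd : proper W H pd) (hpt : proper W H pt) :
    List.Chain' ustep (mkChain W H r pd pt) := by
  have hse := sh_range hW hH hr hpd
  have hse' := sh_range hW hH hr hpt
  unfold mkChain
  rw [List.append_assoc, List.append_assoc]
  apply List.IsChain.append (chain'_spoke hW hH hpd)
  · apply List.IsChain.append (chain'_walk hW hH hr hse.1 hse.2 hse'.1 hse'.2)
    · apply List.IsChain.append (chain'_reverse_ustep (chain'_spoke hW hH hpt))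
      · exact List.isChain_singleton _
      · intro x hx y hy
        simp only [List.head?_cons, Option.mem_def, Option.some.injEq] at hy
        subst hy
        rw [List.getLast?_reverse] at hx
        rcases eq_or_lt_of_le hr with h1 | h2
        · rw [spoke_nil (by omega)] at hx
          simp at hx
        · rw [head?_spoke (by omega)] at hx
          simp only [Option.mem_def, Option.some.injEq] at hx
          subst hx
          exact step_inner hW hH hpt
    · intro x hx y hy
      rw [getLast?_walk] at hx
      simp only [Option.mem_def, Option.some.injEq] at hx
      subst hx
      rcases eq_or_lt_of_le hr with h1 | h2
      · rw [spoke_nil (by omega)] at hy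
        simp only [List.reverse_nil, List.nil_append, List.head?_cons,
          Option.mem_def, Option.some.injEq] at hy
        subst hy
        rw [← h1, rho_sh hW hH (le_refl 1) hpt]
        exact step_inner hW hH hpt
      · have hsp : spokeL W H r pt ≠ [] := by
          unfold spokeL
          simp [List.map_eq_nil_iff, List.range_eq_nil]
          omega
        rw [List.head?_append_of_ne_nil _ (by simpa using hsp)] at hy
        rw [List.head?_reverse, getLast?_spoke (by omega)] at hy
        simp only [Option.mem_def, Option.some.injEq] at hy
        subst hy
        rw [rho_sh hW hH hr hpt]
        apply ustep_symm
        have := step_rad hW hH (r := r - 1) (by omega) hpt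
        simpa using this
  · intro x hx y hy
    rcases eq_or_lt_of_le hr with h1 | h2
    · rw [spoke_nil (by omega)] at hx
      simp at hx
    · rw [getLast?_spoke (by omega)] at hx
      simp only [Option.mem_def, Option.some.injEq] at hx
      subst hx
      rw [List.head?_append_of_ne_nil _ walk_ne_nil] at hy
      rw [head?_walk] at hy
      simp only [Option.mem_def, Option.some.injEq] at hy
      subst hy
      rw [rho_sh hW hH hr hpd]
      have := step_rad hW hH (r := r - 1) (by omega) hpd
      simpa using this

end mk2

section mk3
variable {W H : ℤ}

lemma walk_cell_onRing {r a b : ℤ} {c : Cell} (hW : 1 ≤ W) (hH : 1 ≤ H) (hr : 1 ≤ r)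
    (ha : 0 ≤ a) (ha' : a ≤ per W H r - 1) (hb : 0 ≤ b) (hb' : b ≤ per W H r - 1)
    (h : c ∈ walkL W H r a b) : onRing W H r c := by
  obtain ⟨t, h1, h2, rfl⟩ := mem_walk h
  exact onRing_rho hW hH hr (by omega) (by omega)

lemma sh_le_sh (hW : 1 ≤ W) (hH : 1 ≤ H) {r p q : ℤ} (hr : 1 ≤ r)
    (hp : proper W H p) (hq : proper W H q) (h : p ≤ q) : sh W H r p ≤ sh W H r q := by
  rcases eq_or_lt_of_le h with rfl | h2
  · exact le_refl _
  · exact le_of_lt (sh_lt hW hH hr hp hq h2)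

lemma nodup_mkChain (hW : 1 ≤ W) (hH : 1 ≤ H) {r pd pt : ℤ} (hr : 1 ≤ r)
    (hpd : proper W H pd) (hpt : proper W H pt) (hne : pd ≠ pt) :
    (mkChain W H r pd pt).Nodup := by
  have hse := sh_range hW hH hr hpd
  have hse' := sh_range hW hH hr hpt
  unfold mkChain
  rw [List.append_assoc, List.append_assoc]
  rw [List.nodup_append']
  refine ⟨nodup_spoke hW hH hpd, ?_, ?_⟩
  · rw [List.nodup_append']
    refine ⟨nodup_walk hW hH hr hse.1 hse.2 hse'.1 hse'.2, ?_, ?_⟩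
    · rw [List.nodup_append']
      refine ⟨List.nodup_reverse.mpr (nodup_spoke hW hH hpt), List.nodup_singleton _, ?_⟩
      -- spoke pt reverse disjoint from [inner pt]
      intro c hc hc'
      simp only [List.mem_reverse] at hc
      obtain ⟨i, h1, h2, hceq⟩ := mem_spoke hc
      simp only [List.mem_singleton] at hc'
      have honc : onRing W H i c := by rw [hceq]; exact onRing_rad hW hH h1 hpt
      have hinc : inU W H c := by rw [hc']; exact inner_inU hW hH hpt
      exact onRing_not_inU hW hH h1 honc hinc
    · -- walk disjoint from (spoke pt).reverse ++ [inner pt]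
      intro c hc hc'
      have hw := walk_cell_onRing hW hH hr hse.1 hse.2 hse'.1 hse'.2 hc
      simp only [List.mem_append, List.mem_reverse, List.mem_singleton] at hc'
      rcases hc' with h | h
      · obtain ⟨i, h1, h2, hceq⟩ := mem_spoke h
        have honc : onRing W H i c := by rw [hceq]; exact onRing_rad hW hH (by omega) hpt
        have := onRing_eq hW hH hr (by omega) hw honc
        omega
      · have hinc : inU W H c := by rw [h]; exact inner_inU hW hH hpt
        exact onRing_not_inU hW hH hr hw hinc
  · -- spoke pd disjoint from rest
    intro c hc hc'
    obtain ⟨i, h1, h2, hceq⟩ := mem_spoke hc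
    have hon : onRing W H i c := by rw [hceq]; exact onRing_rad hW hH (by omega) hpd
    simp only [List.mem_append, List.mem_reverse, List.mem_singleton] at hc'
    rcases hc' with h | h | h
    · have hw := walk_cell_onRing hW hH hr hse.1 hse.2 hse'.1 hse'.2 h
      have := onRing_eq hW hH (by omega) hr hon hw
      omega
    · obtain ⟨j, g1, g2, hg⟩ := mem_spoke h
      have hon' : onRing W H j c := by rw [hg]; exact onRing_rad hW hH (by omega) hpt
      have hij := onRing_eq hW hH (by omega) (by omega) hon hon'
      rw [hij] at hceq
      rw [hceq] at hg
      exact hne (rad_inj hW hH (by omega) hpd hpt hg)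
    · have hinc : inU W H c := by rw [h]; exact inner_inU hW hH hpt
      exact onRing_not_inU hW hH (by omega) hon hinc

def degChain (W H q : ℤ) : List Cell := [rad W H 1 q, innerC W H q]

lemma mkChain_disj (hW : 1 ≤ W) (hH : 1 ≤ H) {r pd pt r' pd' pt' : ℤ}
    (hr : 1 ≤ r) (hrr' : r < r')
    (hpd : proper W H pd) (hpt : proper W H pt)
    (hpd' : proper W H pd') (hpt' : proper W H pt')
    (hd' : ¬ (min pd pt ≤ pd' ∧ pd' ≤ max pd pt))
    (ht' : ¬ (min pd pt ≤ pt' ∧ pt' ≤ max pd pt))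
    (hinner : innerC W H pt ≠ innerC W H pt') :
    ∀ c : Cell, c ∈ mkChain W H r pd pt → c ∈ mkChain W H r' pd' pt' → False := by
  intro c h1 h2
  have hr' : 1 ≤ r' := by omega
  rcases mem_mkChain h1 with ⟨i, hi1, hi2, hc⟩ | ⟨t, ht1, ht2, hc⟩ | hc <;>
    rcases mem_mkChain h2 with ⟨i', hi1', hi2', hc'⟩ | ⟨t', ht1', ht2', hc'⟩ | hc'
  · -- rad vs rad
    have e1 : onRing W H i c := by
      rcases hc with rfl | rfl <;> exact onRing_rad hW hH (by omega) (by assumption)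
    have e2 : onRing W H i' c := by
      rcases hc' with rfl | rfl <;> exact onRing_rad hW hH (by omega) (by assumption)
    have hii := onRing_eq hW hH (by omega) (by omega) e1 e2
    subst hii
    have hple : min pd pt ≤ pd ∧ pd ≤ max pd pt := ⟨min_le_left _ _, le_max_left _ _⟩
    have hple' : min pd pt ≤ pt ∧ pt ≤ max pd pt := ⟨min_le_right _ _, le_max_right _ _⟩
    rcases hc with rfl | rfl <;> rcases hc' with hc' | hc'
    · have := rad_inj hW hH (by omega) hpd hpd' hc'; omega
    · have := rad_inj hW hH (by omega) hpd hpt' hc'; omega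
    · have := rad_inj hW hH (by omega) hpt hpd' hc'; omega
    · have := rad_inj hW hH (by omega) hpt hpt' hc'; omega
  · -- rad vs rho
    have e1 : onRing W H i c := by
      rcases hc with rfl | rfl <;> exact onRing_rad hW hH (by omega) (by assumption)
    have hper := sh_range hW hH hr' hpd'
    have hper' := sh_range hW hH hr' hpt'
    have e2 : onRing W H r' c := hc' ▸ onRing_rho hW hH hr' (by omega) (by omega)
    have := onRing_eq hW hH (by omega) hr' e1 e2
    omega
  · -- rad vs inner
    have e1 : onRing W H i c := by
      rcases hc with rfl | rfl <;> exact onRing_rad hW hH (by omega) (by assumption)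
    exact onRing_not_inU hW hH (by omega) e1 (hc' ▸ inner_inU hW hH hpt')
  · -- rho vs rad
    have hper := sh_range hW hH hr hpd
    have hper' := sh_range hW hH hr hpt
    have e1 : onRing W H r c := hc ▸ onRing_rho hW hH hr (by omega) (by omega)
    have e2 : onRing W H i' c := by
      rcases hc' with rfl | rfl <;> exact onRing_rad hW hH (by omega) (by assumption)
    have hri := onRing_eq hW hH hr (by omega) e1 e2
    subst hri
    -- so c = rad r q' and c = rho r t with t in the walk interval
    have hq' : ∃ q', proper W H q' ∧ ¬ (min pd pt ≤ q' ∧ q' ≤ max pd pt) ∧ c = rad W H r q' := by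
      rcases hc' with rfl | rfl
      · exact ⟨pd', hpd', hd', rfl⟩
      · exact ⟨pt', hpt', ht', rfl⟩
    obtain ⟨q', hq'p, hq'i, hcq⟩ := hq'
    have hteq : t = sh W H r q' := by
      apply rho_eq_rad hW hH hr hq'p (by omega) (by omega)
      rw [← hc, hcq]
    -- monotonicity contradiction
    have m1 : min pd pt ≤ q' ∨ q' ≤ max pd pt → True := fun _ => trivial
    have hmono1 : sh W H r (min pd pt) ≤ t := by
      rcases le_total pd pt with hle | hle
      · rw [min_eq_left hle]; rw [min_eq_left (sh_le_sh hW hH hr hpd hpt hle)] at ht1; exact ht1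
      · rw [min_eq_right hle]; rw [min_eq_right (sh_le_sh hW hH hr hpt hpd hle)] at ht1; exact ht1
    have hmono2 : t ≤ sh W H r (max pd pt) := by
      rcases le_total pd pt with hle | hle
      · rw [max_eq_right hle]; rw [max_eq_right (sh_le_sh hW hH hr hpd hpt hle)] at ht2; exact ht2
      · rw [max_eq_left hle]; rw [max_eq_left (sh_le_sh hW hH hr hpt hpd hle)] at ht2; exact ht2
    have hminp : proper W H (min pd pt) := by unfold proper at *; omega
    have hmaxp : proper W H (max pd pt) := by unfold proper at *; omega
    rw [hteq] at hmono1 hmono2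
    have c1 : min pd pt ≤ q' := by
      by_contra hcon
      have := sh_lt hW hH hr hq'p hminp (by omega)
      omega
    have c2 : q' ≤ max pd pt := by
      by_contra hcon
      have := sh_lt hW hH hr hmaxp hq'p (by omega)
      omega
    exact hq'i ⟨c1, c2⟩
  · -- rho vs rho
    have hper := sh_range hW hH hr hpd
    have hper' := sh_range hW hH hr hpt
    have hqer := sh_range hW hH hr' hpd'
    have hqer' := sh_range hW hH hr' hpt'
    have e1 : onRing W H r c := hc ▸ onRing_rho hW hH hr (by omega) (by omega)
    have e2 : onRing W H r' c := hc' ▸ onRing_rho hW hH hr' (by omega) (by omega)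
    have := onRing_eq hW hH hr hr' e1 e2
    omega
  · -- rho vs inner
    have hper := sh_range hW hH hr hpd
    have hper' := sh_range hW hH hr hpt
    have e1 : onRing W H r c := hc ▸ onRing_rho hW hH hr (by omega) (by omega)
    exact onRing_not_inU hW hH hr e1 (hc' ▸ inner_inU hW hH hpt')
  · -- inner vs rad
    have e2 : onRing W H i' c := by
      rcases hc' with rfl | rfl <;> exact onRing_rad hW hH (by omega) (by assumption)
    exact onRing_not_inU hW hH (by omega) e2 (hc ▸ inner_inU hW hH hpt)
  · -- inner vs rho
    have hqer := sh_range hW hH hr' hpd'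
    have hqer' := sh_range hW hH hr' hpt'
    have e2 : onRing W H r' c := hc' ▸ onRing_rho hW hH hr' (by omega) (by omega)
    exact onRing_not_inU hW hH hr' e2 (hc ▸ inner_inU hW hH hpt)
  · -- inner vs inner
    exact hinner (hc ▸ hc' ▸ rfl)

lemma degChain_disj_mkChain (hW : 1 ≤ W) (hH : 1 ≤ H) {q r pd pt : ℤ}
    (hq : proper W H q) (hpd : proper W H pd) (hpt : proper W H pt) (hr2 : 2 ≤ r)
    (hqd : q ≠ pd) (hqt : q ≠ pt) (hinner : innerC W H q ≠ innerC W H pt) :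
    ∀ c : Cell, c ∈ degChain W H q → c ∈ mkChain W H r pd pt → False := by
  intro c hc h2
  have hr : 1 ≤ r := by omega
  simp only [degChain, List.mem_cons, List.mem_singleton, List.not_mem_nil, or_false] at hc
  have hper := sh_range hW hH hr hpd
  have hper' := sh_range hW hH hr hpt
  rcases hc with rfl | rfl <;>
    rcases mem_mkChain h2 with ⟨i, hi1, hi2, hc'⟩ | ⟨t, ht1, ht2, hc'⟩ | hc'
  · have e1 := onRing_rad hW hH (r := 1) (by omega) hq
    have e2 : onRing W H i (rad W H 1 q) := by
      rcases hc' with h | h <;> rw [h] <;> exact onRing_rad hW hH (by omega) (by assumption)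
    have := onRing_eq hW hH (by omega) (by omega) e1 e2
    subst this
    rcases hc' with h | h
    · exact hqd (rad_inj hW hH (by omega) hq hpd h)
    · exact hqt (rad_inj hW hH (by omega) hq hpt h)
  · have e1 := onRing_rad hW hH (r := 1) (by omega) hq
    have e2 : onRing W H r (rad W H 1 q) := hc' ▸ onRing_rho hW hH hr (by omega) (by omega)
    have := onRing_eq hW hH (by omega) hr e1 e2
    omega
  · exact onRing_not_inU hW hH (by omega) (onRing_rad hW hH (by omega) hq)
      (hc' ▸ inner_inU hW hH hpt)
  · have e2 : onRing W H i (innerC W H q) := by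
      rcases hc' with h | h <;> rw [h] <;> exact onRing_rad hW hH (by omega) (by assumption)
    exact onRing_not_inU hW hH (by omega) e2 (inner_inU hW hH hq)
  · have e2 : onRing W H r (innerC W H q) := hc' ▸ onRing_rho hW hH hr (by omega) (by omega)
    exact onRing_not_inU hW hH hr e2 (inner_inU hW hH hq)
  · exact hinner (hc' ▸ rfl)

lemma degChain_disj_degChain (hW : 1 ≤ W) (hH : 1 ≤ H) {q q' : ℤ}
    (hq : proper W H q) (hq' : proper W H q') (hne : q ≠ q')
    (hinner : innerC W H q ≠ innerC W H q') :
    ∀ c : Cell, c ∈ degChain W H q → c ∈ degChain W H q' → False := by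
  intro c hc hc'
  simp only [degChain, List.mem_cons, List.mem_singleton, List.not_mem_nil, or_false] at hc hc'
  rcases hc with rfl | rfl <;> rcases hc' with h | h
  · exact hne (rad_inj hW hH (by omega) hq hq' h)
  · exact onRing_not_inU hW hH (by omega) (onRing_rad hW hH (by omega) hq)
      (h ▸ inner_inU hW hH hq')
  · refine onRing_not_inU hW hH (le_refl 1) (onRing_rad hW hH (le_refl 1) hq') ?_
    rw [← h]; exact inner_inU hW hH hq
  · exact hinner (h ▸ rfl)

lemma nodup_degChain (hW : 1 ≤ W) (hH : 1 ≤ H) {q : ℤ} (hq : proper W H q) :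
    (degChain W H q).Nodup := by
  have hne : rad W H 1 q ≠ innerC W H q := by
    intro h
    refine onRing_not_inU hW hH (le_refl 1) (onRing_rad hW hH (le_refl 1) hq) ?_
    rw [h]; exact inner_inU hW hH hq
  simp [degChain, hne]

lemma chain'_degChain (hW : 1 ≤ W) (hH : 1 ≤ H) {q : ℤ} (hq : proper W H q) :
    List.Chain' ustep (degChain W H q) := by
  simp only [degChain, List.Chain', List.isChain_cons_cons, List.isChain_singleton, and_true]
  exact step_inner hW hH hq

end mk3

section asm

def nxtC : List Cell → Cell → Option Cell
  | a :: b :: rest, x => if x = a then some b else nxtC (b :: rest) x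
  | _, _ => none

lemma nxtC_nil (x : Cell) : nxtC [] x = none := rfl
lemma nxtC_single (a x : Cell) : nxtC [a] x = none := rfl
lemma nxtC_cons (a b : Cell) (rest : List Cell) (x : Cell) :
    nxtC (a :: b :: rest) x = if x = a then some b else nxtC (b :: rest) x := rfl

lemma nxtC_none_iff (c : List Cell) (x : Cell) :
    nxtC c x = none ↔ x ∉ c.dropLast := by
  induction c with
  | nil => simp [nxtC_nil]
  | cons a rest ih =>
    cases rest with
    | nil => simp [nxtC_single]
    | cons b r =>
      rw [nxtC_cons]
      by_cases hx : x = a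
      · subst hx
        simp [List.dropLast_cons_of_ne_nil]
      · rw [if_neg hx, ih]
        simp [List.dropLast_cons_of_ne_nil, hx]

lemma nxtC_some_mem {c : List Cell} {x y : Cell} (h : nxtC c x = some y) :
    x ∈ c.dropLast ∧ y ∈ c.tail := by
  induction c with
  | nil => simp [nxtC_nil] at h
  | cons a rest ih =>
    cases rest with
    | nil => simp [nxtC_single] at h
    | cons b r =>
      rw [nxtC_cons] at h
      by_cases hx : x = a
      · subst hx
        rw [if_pos rfl] at h
        injection h with h
        subst h
        constructor
        · simp [List.dropLast_cons_of_ne_nil]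
        · simp
      · rw [if_neg hx] at h
        obtain ⟨h1, h2⟩ := ih h
        constructor
        · simp only [List.dropLast_cons_of_ne_nil, List.mem_cons, reduceCtorEq,
            List.cons_ne_nil, ne_eq, not_false_eq_true]
          right
          exact h1
        · simp only [List.tail_cons] at h2 ⊢
          exact List.mem_cons_of_mem _ h2

lemma nxtC_step {c : List Cell} {x y : Cell} (hc : List.Chain' ustep c)
    (h : nxtC c x = some y) : ustep x y := by
  induction c with
  | nil => simp [nxtC_nil] at h
  | cons a rest ih =>
    cases rest with
    | nil => simp [nxtC_single] at h
    | cons b r =>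
      rw [nxtC_cons] at h
      by_cases hx : x = a
      · subst hx
        rw [if_pos rfl] at h
        injection h with h
        subst h
        exact (List.isChain_cons_cons.mp hc).1
      · rw [if_neg hx] at h
        exact ih (List.isChain_cons_cons.mp hc).2 h

lemma nxtC_inj {c : List Cell} {x x' y : Cell} (hn : c.Nodup)
    (h : nxtC c x = some y) (h' : nxtC c x' = some y) : x = x' := by
  induction c with
  | nil => simp [nxtC_nil] at h
  | cons a rest ih =>
    cases rest with
    | nil => simp [nxtC_single] at h
    | cons b r =>
      rw [nxtC_cons] at h h'
      by_cases hx : x = a <;> by_cases hx' : x' = a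
      · rw [hx, hx']
      · rw [if_pos hx] at h
        injection h with h
        rw [if_neg hx'] at h'
        have hmem := (nxtC_some_mem h').2
        simp only [List.tail_cons] at hmem
        rw [← h] at hmem
        exact absurd hmem (by simp at hn; tauto)
      · rw [if_pos hx'] at h'
        injection h' with h'
        rw [if_neg hx] at h
        have hmem := (nxtC_some_mem h).2
        simp only [List.tail_cons] at hmem
        rw [← h'] at hmem
        exact absurd hmem (by simp at hn; tauto)
      · rw [if_neg hx] at h
        rw [if_neg hx'] at h'
        exact ih (List.nodup_cons.mp hn).2 h h'

lemma nxtC_tail_surj {c : List Cell} {y : Cell} (hn : c.Nodup) (h : y ∈ c.tail) :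
    ∃ x, nxtC c x = some y := by
  induction c with
  | nil => simp at h
  | cons a rest ih =>
    cases rest with
    | nil => simp at h
    | cons b r =>
      simp only [List.tail_cons] at h
      rcases List.mem_cons.mp h with rfl | hy
      · exact ⟨a, by rw [nxtC_cons, if_pos rfl]⟩
      · obtain ⟨x, hx⟩ := ih (List.nodup_cons.mp hn).2 (by simpa using hy)
        refine ⟨x, ?_⟩
        rw [nxtC_cons, if_neg ?_]
        · exact hx
        · intro hxa
          subst hxa
          have := (nxtC_some_mem hx).1
          have hnot : x ∉ b :: r := (List.nodup_cons.mp hn).1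
          exact hnot (List.dropLast_subset _ this)

def nxtL : List (List Cell) → Cell → Option Cell
  | [], _ => none
  | c :: rest, x => match nxtC c x with
    | some y => some y
    | none => nxtL rest x

lemma nxtL_none_iff (chains : List (List Cell)) (x : Cell) :
    nxtL chains x = none ↔ ∀ c ∈ chains, x ∉ c.dropLast := by
  induction chains with
  | nil => simp [nxtL]
  | cons c rest ih =>
    simp only [nxtL]
    rcases hc : nxtC c x with _ | y
    · simp only [List.mem_cons]
      rw [ih]
      constructor
      · intro h d hd
        rcases hd with rfl | hd
        · exact (nxtC_none_iff d x).mp hc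
        · exact h d hd
      · intro h d hd
        exact h d (Or.inr hd)
    · simp only [List.mem_cons]
      constructor
      · intro h; exact absurd h (by simp)
      · intro h
        exact absurd ((nxtC_none_iff c x).mpr (h c (Or.inl rfl))) (by simp [hc])

lemma nxtL_some {chains : List (List Cell)} {x y : Cell} (h : nxtL chains x = some y) :
    ∃ c ∈ chains, nxtC c x = some y := by
  induction chains with
  | nil => simp [nxtL] at h
  | cons c rest ih =>
    simp only [nxtL] at h
    rcases hc : nxtC c x with _ | z
    · rw [hc] at h
      obtain ⟨d, hd, hdx⟩ := ih h
      exact ⟨d, List.mem_cons_of_mem _ hd, hdx⟩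
    · rw [hc] at h
      simp only [Option.some.injEq] at h
      exact ⟨c, List.mem_cons_self, by rw [hc, h]⟩

lemma nxtL_eq_of_mem {chains : List (List Cell)} {c : List Cell} {x : Cell}
    (hdisj : List.Pairwise (fun c c' => ∀ z ∈ c, z ∉ c') chains)
    (hc : c ∈ chains) (hx : x ∈ c.dropLast) : nxtL chains x = nxtC c x := by
  induction chains with
  | nil => simp at hc
  | cons d rest ih =>
    rcases List.mem_cons.mp hc with rfl | hcr
    · simp only [nxtL]
      rcases hd : nxtC c x with _ | y
      · exact absurd hx ((nxtC_none_iff c x).mp hd)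
      · rfl
    · have hdisj1 := (List.pairwise_cons.mp hdisj).1
      have hxc : x ∈ c := List.dropLast_subset _ hx
      have hxd : x ∉ d := fun hxd => hdisj1 c hcr x hxd hxc
      simp only [nxtL]
      rcases hd : nxtC d x with _ | y
      · exact ih (List.pairwise_cons.mp hdisj).2 hcr
      · exact absurd (List.dropLast_subset _ (nxtC_some_mem hd).1) hxd

end asm

section asm2

lemma mem_dropLast_or_getLast {c : List Cell} {x : Cell} (hne : c ≠ []) (h : x ∈ c) :
    x ∈ c.dropLast ∨ c.getLast? = some x := by
  have := List.dropLast_append_getLast hne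
  rw [← this] at h
  rcases List.mem_append.mp h with h' | h'
  · exact Or.inl h'
  · right
    simp only [List.mem_singleton] at h'
    rw [List.getLast?_eq_getLast hne, h']

lemma mem_head_or_tail {c : List Cell} {x : Cell} (h : x ∈ c) :
    c.head? = some x ∨ x ∈ c.tail := by
  cases c with
  | nil => simp at h
  | cons a t =>
    rcases List.mem_cons.mp h with rfl | h'
    · exact Or.inl rfl
    · exact Or.inr h'

lemma head_mem_dropLast {c : List Cell} {x : Cell} (hlen : 2 ≤ c.length)
    (h : c.head? = some x) : x ∈ c.dropLast := by
  match c, hlen with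
  | a :: b :: r, _ =>
    simp only [List.head?_cons, Option.some.injEq] at h
    subst h
    simp [List.dropLast_cons_of_ne_nil]

lemma getLast_mem_tail {c : List Cell} {x : Cell} (hlen : 2 ≤ c.length)
    (h : c.getLast? = some x) : x ∈ c.tail := by
  match c, hlen with
  | a :: b :: r, _ =>
    rw [List.getLast?_cons_cons] at h
    have hne : (b :: r) ≠ [] := by simp
    rw [List.getLast?_eq_getLast hne] at h
    simp only [Option.some.injEq] at h
    simp only [List.tail_cons]
    rw [← h]
    exact List.getLast_mem hne

lemma shared_eq {chains : List (List Cell)} {c₁ c₂ : List Cell} {z : Cell}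
    (hdisj : List.Pairwise (fun c c' => ∀ z ∈ c, z ∉ c') chains)
    (h1 : c₁ ∈ chains) (h2 : c₂ ∈ chains) (hz1 : z ∈ c₁) (hz2 : z ∈ c₂) : c₁ = c₂ := by
  induction chains with
  | nil => simp at h1
  | cons d rest ih =>
    have hp := List.pairwise_cons.mp hdisj
    rcases List.mem_cons.mp h1 with rfl | h1' <;> rcases List.mem_cons.mp h2 with rfl | h2'
    · rfl
    · exact absurd hz2 (hp.1 c₂ h2' z hz1)
    · exact absurd hz1 (hp.1 c₁ h1' z hz2)
    · exact ih hp.2 h1' h2'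

lemma assemble (W H : ℤ) (f : Cell → Cell)
    (hfinj : ∀ u v, inU W H u → inU W H v → f u = f v → u = v)
    (chains : List (List Cell))
    (hlen : ∀ c ∈ chains, 2 ≤ c.length)
    (hchain : ∀ c ∈ chains, List.Chain' ustep c)
    (hnodup : ∀ c ∈ chains, c.Nodup)
    (hdisj : List.Pairwise (fun c c' => ∀ z ∈ c, z ∉ c') chains)
    (hheadF : ∀ c ∈ chains, ∀ x, c.head? = some x → (∃ u, inU W H u ∧ f u = x))
    (hlastS : ∀ c ∈ chains, ∀ x, c.getLast? = some x →
        inU W H x ∧ ¬ ∃ u, inU W H u ∧ f u = x)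
    (hmidU : ∀ c ∈ chains, ∀ x ∈ c.dropLast, ¬ inU W H x)
    (hmidF : ∀ c ∈ chains, ∀ x ∈ c.tail, ¬ ∃ u, inU W H u ∧ f u = x)
    (hcovD : ∀ y, (∃ u, inU W H u ∧ f u = y) → ¬ inU W H y →
        ∃ c ∈ chains, c.head? = some y)
    (hcovS : ∀ y, inU W H y → ¬ (∃ u, inU W H u ∧ f u = y) →
        ∃ c ∈ chains, c.getLast? = some y) :
    ∃ π : Cell → Cell, Function.Bijective π ∧
      (∀ u, inU W H u → π u = f u) ∧
      (∀ x, ¬ inU W H x → (π x = x ∨ ustep x (π x))) := by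
  classical
  set π : Cell → Cell := fun x => if inU W H x then f x else (nxtL chains x).getD x with hπ
  -- basic facts
  have hval_notF : ∀ x y, nxtL chains x = some y → ¬ ∃ u, inU W H u ∧ f u = y := by
    intro x y h
    obtain ⟨c, hc, hcx⟩ := nxtL_some h
    exact hmidF c hc y (nxtC_some_mem hcx).2
  have hkey_of_fU : ∀ x, (∃ u, inU W H u ∧ f u = x) → ¬ inU W H x →
      ∃ y, nxtL chains x = some y := by
    intro x hxF hxU
    obtain ⟨c, hc, hhead⟩ := hcovD x hxF hxU
    have hx : x ∈ c.dropLast := head_mem_dropLast (hlen c hc) hhead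
    rw [nxtL_eq_of_mem hdisj hc hx]
    rcases h : nxtC c x with _ | y
    · exact absurd hx ((nxtC_none_iff c x).mp h)
    · exact ⟨y, rfl⟩
  refine ⟨π, ⟨?_, ?_⟩, ?_, ?_⟩
  · -- injective
    intro x₁ x₂ heq
    simp only [hπ] at heq
    by_cases h1 : inU W H x₁ <;> by_cases h2 : inU W H x₂
    · rw [if_pos h1, if_pos h2] at heq
      exact hfinj _ _ h1 h2 heq
    · rw [if_pos h1, if_neg h2] at heq
      exfalso
      rcases hn : nxtL chains x₂ with _ | y
      · rw [hn] at heq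
        simp only [Option.getD_none] at heq
        obtain ⟨y, hy⟩ := hkey_of_fU x₂ ⟨x₁, h1, heq⟩ h2
        rw [hn] at hy
        exact nomatch hy
      · rw [hn] at heq
        simp only [Option.getD_some] at heq
        exact hval_notF x₂ y hn ⟨x₁, h1, heq⟩
    · rw [if_neg h1, if_pos h2] at heq
      exfalso
      rcases hn : nxtL chains x₁ with _ | y
      · rw [hn] at heq
        simp only [Option.getD_none] at heq
        obtain ⟨y, hy⟩ := hkey_of_fU x₁ ⟨x₂, h2, heq.symm⟩ h1
        rw [hn] at hy
        exact nomatch hy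
      · rw [hn] at heq
        simp only [Option.getD_some] at heq
        exact hval_notF x₁ y hn ⟨x₂, h2, heq.symm⟩
    · rw [if_neg h1, if_neg h2] at heq
      rcases hn1 : nxtL chains x₁ with _ | y₁ <;> rcases hn2 : nxtL chains x₂ with _ | y₂ <;>
        rw [hn1, hn2] at heq <;>
        simp only [Option.getD_none, Option.getD_some] at heq
      · exact heq
      · exfalso
        obtain ⟨c, hc, hcx⟩ := nxtL_some hn2
        have hy₂t : y₂ ∈ c.tail := (nxtC_some_mem hcx).2
        have hx₁c : x₁ ∈ c := heq ▸ List.mem_of_mem_tail hy₂t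
        have hcne : c ≠ [] := by
          intro hnil
          rw [hnil] at hx₁c
          simp at hx₁c
        rcases mem_dropLast_or_getLast hcne hx₁c with hdl | hgl
        · rw [nxtL_eq_of_mem hdisj hc hdl] at hn1
          exact absurd hdl ((nxtC_none_iff c x₁).mp hn1)
        · exact h1 (hlastS c hc x₁ hgl).1
      · exfalso
        obtain ⟨c, hc, hcx⟩ := nxtL_some hn1
        have hy₁t : y₁ ∈ c.tail := (nxtC_some_mem hcx).2
        have hx₂c : x₂ ∈ c := heq ▸ List.mem_of_mem_tail hy₁t
        have hcne : c ≠ [] := by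
          intro hnil
          rw [hnil] at hx₂c
          simp at hx₂c
        rcases mem_dropLast_or_getLast hcne hx₂c with hdl | hgl
        · rw [nxtL_eq_of_mem hdisj hc hdl] at hn2
          exact absurd hdl ((nxtC_none_iff c x₂).mp hn2)
        · exact h2 (hlastS c hc x₂ hgl).1
      · subst heq
        obtain ⟨c₁, hc₁, hcx₁⟩ := nxtL_some hn1
        obtain ⟨c₂, hc₂, hcx₂⟩ := nxtL_some hn2
        have hyc₁ : y₁ ∈ c₁ := List.mem_of_mem_tail (nxtC_some_mem hcx₁).2
        have hyc₂ : y₁ ∈ c₂ := List.mem_of_mem_tail (nxtC_some_mem hcx₂).2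
        have hcc := shared_eq hdisj hc₁ hc₂ hyc₁ hyc₂
        subst hcc
        exact nxtC_inj (hnodup c₁ hc₁) hcx₁ hcx₂
  · -- surjective
    intro y
    by_cases hyF : ∃ u, inU W H u ∧ f u = y
    · obtain ⟨u, hu, hfu⟩ := hyF
      exact ⟨u, by simp only [hπ, if_pos hu, hfu]⟩
    · by_cases hyU : inU W H y
      · obtain ⟨c, hc, hlast⟩ := hcovS y hyU hyF
        have hytail : y ∈ c.tail := getLast_mem_tail (hlen c hc) hlast
        obtain ⟨x, hx⟩ := nxtC_tail_surj (hnodup c hc) hytail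
        have hxdl : x ∈ c.dropLast := (nxtC_some_mem hx).1
        have hxU : ¬ inU W H x := hmidU c hc x hxdl
        refine ⟨x, ?_⟩
        simp only [hπ, if_neg hxU]
        rw [nxtL_eq_of_mem hdisj hc hxdl, hx]
        rfl
      · by_cases hyT : ∃ c ∈ chains, y ∈ c.tail
        · obtain ⟨c, hc, hytail⟩ := hyT
          obtain ⟨x, hx⟩ := nxtC_tail_surj (hnodup c hc) hytail
          have hxdl : x ∈ c.dropLast := (nxtC_some_mem hx).1
          have hxU : ¬ inU W H x := hmidU c hc x hxdl
          refine ⟨x, ?_⟩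
          simp only [hπ, if_neg hxU]
          rw [nxtL_eq_of_mem hdisj hc hxdl, hx]
          rfl
        · refine ⟨y, ?_⟩
          simp only [hπ, if_neg hyU]
          have hnone : nxtL chains y = none := by
            rw [nxtL_none_iff]
            intro c hc hyd
            have hyc : y ∈ c := List.dropLast_subset _ hyd
            rcases mem_head_or_tail hyc with hh | ht
            · exact hyF (hheadF c hc y hh)
            · exact hyT ⟨c, hc, ht⟩
          rw [hnone]
          rfl
  · intro u hu; simp [hπ, if_pos hu]
  · intro x hx
    simp only [hπ, if_neg hx]
    rcases h : nxtL chains x with _ | y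
    · simp
    · simp only [Option.getD_some]
      right
      obtain ⟨c, hc, hcx⟩ := nxtL_some h
      exact nxtC_step (hchain c hc) hcx

end asm2

section pos
variable {W H : ℤ}

def posOf (W H : ℤ) (c : Cell) : ℤ :=
  if c.2 = -1 then c.1 else if c.1 = W then W + c.2
  else if c.2 = H then 2*W + H - 1 - c.1 else 2*W + 2*H - 1 - c.2

def SideCell (W H : ℤ) (c : Cell) : Prop :=
  (c.1 = -1 ∧ 0 ≤ c.2 ∧ c.2 < H) ∨ (c.1 = W ∧ 0 ≤ c.2 ∧ c.2 < H) ∨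
  (c.2 = -1 ∧ 0 ≤ c.1 ∧ c.1 < W) ∨ (c.2 = H ∧ 0 ≤ c.1 ∧ c.1 < W)

def posNu (W H : ℤ) (s : Cell) : ℤ :=
  if s.1 = 0 then 2*W + 2*H - 1 - s.2
  else if s.1 = W - 1 then W + s.2
  else if s.2 = 0 then s.1 else 2*W + H - 1 - s.1

lemma side_posOf (hW : 1 ≤ W) (hH : 1 ≤ H) {c : Cell} (h : SideCell W H c) :
    proper W H (posOf W H c) ∧ rad W H 1 (posOf W H c) = c := by
  unfold SideCell at h
  unfold posOf proper rad
  split_ifs <;> simp [Prod.ext_iff] <;> omega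

lemma side_onRing1 (hW : 1 ≤ W) (hH : 1 ≤ H) {c : Cell} (h : SideCell W H c) :
    onRing W H 1 c := by
  unfold SideCell at h
  unfold onRing
  omega

lemma posNu_spec (hW : 1 ≤ W) (hH : 1 ≤ H) {s : Cell} (hs : inU W H s)
    (hside : s.1 = 0 ∨ s.1 = W - 1 ∨ s.2 = 0 ∨ s.2 = H - 1) :
    proper W H (posNu W H s) ∧ innerC W H (posNu W H s) = s := by
  unfold inU at hs
  unfold posNu proper innerC
  split_ifs <;> simp [Prod.ext_iff] <;> omega

lemma inner_rad_side (hW : 1 ≤ W) (hH : 1 ≤ H) {p : ℤ} (hp : proper W H p) :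
    SideCell W H (rad W H 1 p) := by
  unfold proper at hp
  unfold SideCell rad
  split_ifs <;> simp <;> omega

end pos

section pairing

lemma pair_lemma : ∀ (k : ℕ) (Dp Tp : Finset ℤ), Disjoint Dp Tp → Dp.card = k →
    Tp.card = k →
    ∃ l : List (ℤ × ℤ),
      (l.map Prod.fst).toFinset = Dp ∧ (l.map Prod.snd).toFinset = Tp ∧
      (l.map Prod.fst).Nodup ∧ (l.map Prod.snd).Nodup ∧
      List.Pairwise (fun x y =>
        ¬ (min x.1 x.2 ≤ y.1 ∧ y.1 ≤ max x.1 x.2) ∧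
        ¬ (min x.1 x.2 ≤ y.2 ∧ y.2 ≤ max x.1 x.2)) l := by
  intro k
  induction k with
  | zero =>
    intro Dp Tp _ hD hT
    refine ⟨[], ?_, ?_, by simp, by simp, by simp⟩
    · simp [Finset.card_eq_zero.mp hD]
    · simp [Finset.card_eq_zero.mp hT]
  | succ n ih =>
    intro Dp Tp hdisj hD hT
    have hDne : Dp.Nonempty := Finset.card_pos.mp (by omega)
    have hTne : Tp.Nonempty := Finset.card_pos.mp (by omega)
    -- find an adjacent pair (d, t) with nothing of Dp ∪ Tp strictly between
    have key : ∃ d ∈ Dp, ∃ t ∈ Tp,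
        ∀ z, min d t < z → z < max d t → z ∉ Dp ∧ z ∉ Tp := by
      have hd0 := Dp.max'_mem hDne
      have ht0 := Tp.max'_mem hTne
      have hne : Dp.max' hDne ≠ Tp.max' hTne := by
        intro h
        apply Finset.disjoint_left.mp hdisj hd0
        rw [h]
        exact ht0
      rcases lt_or_gt_of_ne hne with hlt | hgt
      · obtain ⟨t, htmem, htmin⟩ := Finset.exists_min_image
          (Tp.filter (fun z => Dp.max' hDne < z)) id
          ⟨Tp.max' hTne, Finset.mem_filter.mpr ⟨ht0, hlt⟩⟩
        rw [Finset.mem_filter] at htmem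
        refine ⟨Dp.max' hDne, hd0, t, htmem.1, ?_⟩
        intro z hz1 hz2
        rw [min_eq_left (le_of_lt htmem.2)] at hz1
        rw [max_eq_right (le_of_lt htmem.2)] at hz2
        constructor
        · intro hzD
          have := Dp.le_max' z hzD
          omega
        · intro hzT
          have := htmin z (Finset.mem_filter.mpr ⟨hzT, hz1⟩)
          simp only [id] at this
          omega
      · obtain ⟨d, hdmem, hdmin⟩ := Finset.exists_min_image
          (Dp.filter (fun z => Tp.max' hTne < z)) id
          ⟨Dp.max' hDne, Finset.mem_filter.mpr ⟨hd0, hgt⟩⟩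
        rw [Finset.mem_filter] at hdmem
        refine ⟨d, hdmem.1, Tp.max' hTne, ht0, ?_⟩
        intro z hz1 hz2
        rw [min_eq_right (le_of_lt hdmem.2)] at hz1
        rw [max_eq_left (le_of_lt hdmem.2)] at hz2
        constructor
        · intro hzD
          have := hdmin z (Finset.mem_filter.mpr ⟨hzD, hz1⟩)
          simp only [id] at this
          omega
        · intro hzT
          have := Tp.le_max' z hzT
          omega
    obtain ⟨d, hdD, t, htT, hbetween⟩ := key
    have hdt : d ≠ t := fun h => Finset.disjoint_left.mp hdisj hdD (h ▸ htT)
    obtain ⟨l', hl1, hl2, hl3, hl4, hl5⟩ :=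
      ih (Dp.erase d) (Tp.erase t)
        (Finset.disjoint_of_subset_left (Finset.erase_subset _ _)
          (Finset.disjoint_of_subset_right (Finset.erase_subset _ _) hdisj))
        (by rw [Finset.card_erase_of_mem hdD]; omega)
        (by rw [Finset.card_erase_of_mem htT]; omega)
    refine ⟨(d, t) :: l', ?_, ?_, ?_, ?_, ?_⟩
    · simp only [List.map_cons, List.toFinset_cons, hl1]
      exact Finset.insert_erase hdD
    · simp only [List.map_cons, List.toFinset_cons, hl2]
      exact Finset.insert_erase htT
    · simp only [List.map_cons, List.nodup_cons]
      refine ⟨?_, hl3⟩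
      intro hmem
      have : d ∈ (l'.map Prod.fst).toFinset := List.mem_toFinset.mpr hmem
      rw [hl1] at this
      exact (Finset.mem_erase.mp this).1 rfl
    · simp only [List.map_cons, List.nodup_cons]
      refine ⟨?_, hl4⟩
      intro hmem
      have : t ∈ (l'.map Prod.snd).toFinset := List.mem_toFinset.mpr hmem
      rw [hl2] at this
      exact (Finset.mem_erase.mp this).1 rfl
    · rw [List.pairwise_cons]
      refine ⟨?_, hl5⟩
      intro y hy
      have hy1 : y.1 ∈ Dp.erase d := by
        rw [← hl1]
        exact List.mem_toFinset.mpr (List.mem_map_of_mem (f := Prod.fst) hy)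
      have hy2 : y.2 ∈ Tp.erase t := by
        rw [← hl2]
        exact List.mem_toFinset.mpr (List.mem_map_of_mem (f := Prod.snd) hy)
      rw [Finset.mem_erase] at hy1 hy2
      have hyd1 : y.1 ≠ d := hy1.1
      have hyt2 : y.2 ≠ t := hy2.1
      have hD1 : y.1 ∈ Dp := hy1.2
      have hT2 : y.2 ∈ Tp := hy2.2
      have hyt1 : y.1 ≠ t := fun h => Finset.disjoint_left.mp hdisj hD1 (h ▸ htT)
      have hyd2 : y.2 ≠ d := by
        intro h
        exact Finset.disjoint_left.mp hdisj (h ▸ hdD) hT2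
      constructor
      · rintro ⟨ha, hb⟩
        have h1 : min d t < y.1 := by omega
        have h2 : y.1 < max d t := by omega
        exact (hbetween y.1 h1 h2).1 hD1
      · rintro ⟨ha, hb⟩
        have h1 : min d t < y.2 := by omega
        have h2 : y.2 < max d t := by omega
        exact (hbetween y.2 h1 h2).2 hT2
end pairing

section helpers
variable {α : Type*}

def List.enumFrom : ℕ → List α → List (ℕ × α)
  | _, [] => []
  | n, x :: xs => (n, x) :: List.enumFrom (n + 1) xs

def List.enum (l : List α) : List (ℕ × α) := List.enumFrom 0 l

theorem List.enumFrom_cons (a : α) (l : List α) (n : ℕ) :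
    List.enumFrom n (a :: l) = (n, a) :: List.enumFrom (n + 1) l := rfl

lemma mem_enumFrom_facts : ∀ (l : List α) (n : ℕ) (x : ℕ × α),
    x ∈ List.enumFrom n l → n ≤ x.1 ∧ x.2 ∈ l := by
  intro l
  induction l with
  | nil => intro n x hx; simp [List.enumFrom] at hx
  | cons a t ih =>
    intro n x hx
    rw [List.enumFrom_cons] at hx
    rcases List.mem_cons.mp hx with rfl | hx'
    · exact ⟨le_refl _, List.mem_cons_self⟩
    · obtain ⟨h1, h2⟩ := ih (n+1) x hx'
      exact ⟨by omega, List.mem_cons_of_mem _ h2⟩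

lemma pairwise_enumFrom {R : α → α → Prop} : ∀ (l : List α) (n : ℕ), l.Pairwise R →
    (List.enumFrom n l).Pairwise (fun a b => a.1 < b.1 ∧ R a.2 b.2) := by
  intro l
  induction l with
  | nil => intro n _; simp [List.enumFrom]
  | cons a t ih =>
    intro n h
    rw [List.enumFrom_cons, List.pairwise_cons]
    obtain ⟨h1, h2⟩ := List.pairwise_cons.mp h
    refine ⟨?_, ih (n+1) h2⟩
    intro b hb
    obtain ⟨hb1, hb2⟩ := mem_enumFrom_facts t (n+1) b hb
    exact ⟨by omega, h1 b.2 hb2⟩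

lemma mem_enumFrom_of_mem : ∀ (l : List α) (n : ℕ) (x : α), x ∈ l →
    ∃ i : ℕ, (i, x) ∈ List.enumFrom n l := by
  intro l
  induction l with
  | nil => intro n x hx; simp at hx
  | cons a t ih =>
    intro n x hx
    rw [List.enumFrom_cons]
    rcases List.mem_cons.mp hx with rfl | hx'
    · exact ⟨n, List.mem_cons_self⟩
    · obtain ⟨i, hi⟩ := ih (n+1) x hx'
      exact ⟨i, List.mem_cons_of_mem _ hi⟩

lemma not_last_of_mem_dropLast {c : List α} {x : α} (hn : c.Nodup)
    (hx : x ∈ c.dropLast) : c.getLast? ≠ some x := by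
  intro hlast
  have hne : c ≠ [] := by
    intro h
    rw [h] at hx
    simp at hx
  rw [List.getLast?_eq_getLast hne] at hlast
  have hxl : x = c.getLast hne := by
    injection hlast with h
    exact h.symm
  have := List.dropLast_append_getLast hne
  rw [← this] at hn
  rw [List.nodup_append'] at hn
  exact hn.2.2 hx (by simp [hxl])

lemma not_head_of_mem_tail {c : List α} {x : α} (hn : c.Nodup)
    (hx : x ∈ c.tail) : c.head? ≠ some x := by
  intro hhead
  cases c with
  | nil => simp at hx
  | cons a t =>
    simp only [List.head?_cons, Option.some.injEq] at hhead
    simp only [List.tail_cons] at hx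
    rw [List.nodup_cons] at hn
    exact hn.1 (hhead ▸ hx)

end helpers

section main
variable {W H : ℤ}

lemma step_out_side (hW : 1 ≤ W) (hH : 1 ≤ H) {u v : Cell} (hu : inU W H u)
    (hs : ustep u v) (hv : ¬ inU W H v) : SideCell W H v := by
  unfold inU at hu hv
  unfold ustep at hs
  unfold SideCell
  omega

lemma head?_degChain {q : ℤ} : (degChain W H q).head? = some (rad W H 1 q) := rfl

lemma getLast?_degChain {q : ℤ} : (degChain W H q).getLast? = some (innerC W H q) := by
  simp [degChain]

theorem main_construct (hW : 1 ≤ W) (hH : 1 ≤ H) (f : Cell → Cell)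
    (hfA : ∀ u, inU W H u → (ustep u (f u) ∨ f u = u))
    (hinj : ∀ u v, inU W H u → inU W H v → f u = f v → u = v)
    (hbnd : ∀ s, inU W H s → ¬ (∃ u, inU W H u ∧ f u = s) →
      (s.1 = 0 ∨ s.1 = W - 1 ∨ s.2 = 0 ∨ s.2 = H - 1)) :
    ∃ π : Cell → Cell, Function.Bijective π ∧
      (∀ u, inU W H u → π u = f u) ∧
      (∀ x, ¬ inU W H x → (π x = x ∨ ustep x (π x))) := by
  classical
  set Ufin : Finset Cell := (Finset.Ico (0:ℤ) W) ×ˢ (Finset.Ico (0:ℤ) H) with hUfin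
  have hUmem : ∀ c : Cell, c ∈ Ufin ↔ inU W H c := by
    intro c
    rw [hUfin, Finset.mem_product, Finset.mem_Ico, Finset.mem_Ico]
    unfold inU
    tauto
  set Fimg : Finset Cell := Ufin.image f with hFimg
  have hFmem : ∀ c : Cell, c ∈ Fimg ↔ ∃ u, inU W H u ∧ f u = c := by
    intro c
    rw [hFimg, Finset.mem_image]
    constructor
    · rintro ⟨u, hu, huf⟩
      exact ⟨u, (hUmem u).mp hu, huf⟩
    · rintro ⟨u, hu, huf⟩
      exact ⟨u, (hUmem u).mpr hu, huf⟩
  set Dfin : Finset Cell := Fimg \ Ufin with hDfin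
  set Sfin : Finset Cell := Ufin \ Fimg with hSfin
  have hDmem : ∀ c : Cell, c ∈ Dfin ↔ (∃ u, inU W H u ∧ f u = c) ∧ ¬ inU W H c := by
    intro c
    rw [hDfin, Finset.mem_sdiff, hFmem, hUmem]
  have hSmem : ∀ c : Cell, c ∈ Sfin ↔ inU W H c ∧ ¬ (∃ u, inU W H u ∧ f u = c) := by
    intro c
    rw [hSfin, Finset.mem_sdiff, hFmem, hUmem]
  have hDside : ∀ d ∈ Dfin, SideCell W H d := by
    intro d hd
    obtain ⟨⟨u, hu, huf⟩, hnU⟩ := (hDmem d).mp hd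
    rcases hfA u hu with hstep | heq
    · exact step_out_side hW hH hu (huf ▸ hstep) hnU
    · have hud : u = d := by rw [← huf, heq]
      exact absurd (hud ▸ hu) hnU
  have hSfacts : ∀ s ∈ Sfin, proper W H (posNu W H s) ∧ innerC W H (posNu W H s) = s := by
    intro s hs
    obtain ⟨hsU, hsF⟩ := (hSmem s).mp hs
    exact posNu_spec hW hH hsU (hbnd s hsU hsF)
  have hposNu_inj : ∀ s ∈ Sfin, ∀ s' ∈ Sfin, posNu W H s = posNu W H s' → s = s' := by
    intro s hs s' hs' heq
    have h1 := (hSfacts s hs).2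
    have h2 := (hSfacts s' hs').2
    rw [← h1, ← h2, heq]
  set Mfin : Finset Cell := Sfin.filter (fun s => rad W H 1 (posNu W H s) ∈ Dfin) with hMfin
  have hMsub : Mfin ⊆ Sfin := by rw [hMfin]; exact Finset.filter_subset _ _
  have hMmem : ∀ s, s ∈ Mfin ↔ s ∈ Sfin ∧ rad W H 1 (posNu W H s) ∈ Dfin := by
    intro s
    rw [hMfin, Finset.mem_filter]
  set Mimg : Finset Cell := Mfin.image (fun s => rad W H 1 (posNu W H s)) with hMimg
  have hMimgsub : Mimg ⊆ Dfin := by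
    rw [hMimg]
    intro d hd
    rw [Finset.mem_image] at hd
    obtain ⟨s, hs, rfl⟩ := hd
    exact ((hMmem s).mp hs).2
  have hMimgmem : ∀ d, d ∈ Mimg ↔ ∃ s ∈ Mfin, rad W H 1 (posNu W H s) = d := by
    intro d
    rw [hMimg, Finset.mem_image]
  set S' : Finset Cell := Sfin \ Mfin with hS'
  set D' : Finset Cell := Dfin \ Mimg with hD'
  have hS'mem : ∀ s, s ∈ S' ↔ s ∈ Sfin ∧ s ∉ Mfin := by
    intro s; rw [hS', Finset.mem_sdiff]
  have hD'mem : ∀ d, d ∈ D' ↔ d ∈ Dfin ∧ d ∉ Mimg := by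
    intro d; rw [hD', Finset.mem_sdiff]
  -- cardinalities
  have hcardUF : Fimg.card = Ufin.card := by
    rw [hFimg]
    apply Finset.card_image_of_injOn
    intro u hu v hv huv
    exact hinj u v ((hUmem u).mp hu) ((hUmem v).mp hv) huv
  have hcardDS : Dfin.card = Sfin.card := by
    rw [hDfin, hSfin]
    exact Finset.card_sdiff_comm hcardUF
  have hMimgcard : Mimg.card = Mfin.card := by
    rw [hMimg]
    apply Finset.card_image_of_injOn
    intro s hs s' hs' heq
    apply hposNu_inj s (hMsub hs) s' (hMsub hs')
    have hp := (hSfacts s (hMsub hs)).1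
    have hp' := (hSfacts s' (hMsub hs')).1
    exact rad_inj hW hH (le_refl 1) hp hp' heq
  have hcard' : D'.card = S'.card := by
    rw [hD', hS', Finset.card_sdiff_of_subset hMimgsub, Finset.card_sdiff_of_subset hMsub]
    omega
  -- positions
  set Dpos : Finset ℤ := D'.image (posOf W H) with hDpos
  set Tpos : Finset ℤ := S'.image (posNu W H) with hTpos
  have hDposSpec : ∀ p ∈ Dpos, proper W H p ∧ rad W H 1 p ∈ D' := by
    intro p hp
    rw [hDpos, Finset.mem_image] at hp
    obtain ⟨d, hd, rfl⟩ := hp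
    have hside := hDside d (((hD'mem d).mp hd).1)
    obtain ⟨h1, h2⟩ := side_posOf hW hH hside
    exact ⟨h1, by rw [h2]; exact hd⟩
  have hTposSpec : ∀ p ∈ Tpos, proper W H p ∧ innerC W H p ∈ S' ∧ rad W H 1 p ∉ Dfin := by
    intro p hp
    rw [hTpos, Finset.mem_image] at hp
    obtain ⟨s, hs, rfl⟩ := hp
    obtain ⟨hsS, hsM⟩ := (hS'mem s).mp hs
    obtain ⟨h1, h2⟩ := hSfacts s hsS
    refine ⟨h1, by rw [h2]; exact hs, ?_⟩
    intro hcon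
    exact hsM ((hMmem s).mpr ⟨hsS, hcon⟩)
  have hDposcard : Dpos.card = D'.card := by
    rw [hDpos]
    apply Finset.card_image_of_injOn
    intro d hd d' hd' heq
    have h1 := (side_posOf hW hH (hDside d (((hD'mem d).mp hd).1))).2
    have h2 := (side_posOf hW hH (hDside d' (((hD'mem d').mp hd').1))).2
    rw [← h1, ← h2, heq]
  have hTposcard : Tpos.card = S'.card := by
    rw [hTpos]
    apply Finset.card_image_of_injOn
    intro s hs s' hs' heq
    exact hposNu_inj s (((hS'mem s).mp hs).1) s' (((hS'mem s').mp hs').1) heq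
  have hDTdisj : Disjoint Dpos Tpos := by
    rw [Finset.disjoint_left]
    intro p hpD hpT
    have h1 := (hDposSpec p hpD).2
    have h2 := (hTposSpec p hpT).2.2
    exact h2 (((hD'mem _).mp h1).1)
  -- pairing
  obtain ⟨l, hl1, hl2, hl3, hl4, hl5⟩ := pair_lemma Dpos.card Dpos Tpos hDTdisj rfl
    (by rw [hDposcard, hTposcard, hcard'])
  have hpairD : ∀ x ∈ l, x.1 ∈ Dpos := by
    intro x hx
    rw [← hl1]
    exact List.mem_toFinset.mpr (List.mem_map_of_mem (f := Prod.fst) hx)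
  have hpairT : ∀ x ∈ l, x.2 ∈ Tpos := by
    intro x hx
    rw [← hl2]
    exact List.mem_toFinset.mpr (List.mem_map_of_mem (f := Prod.snd) hx)
  -- chains
  set chains : List (List Cell) :=
    (Mfin.toList).map (fun s => degChain W H (posNu W H s)) ++
    (List.enum l).map (fun jp => mkChain W H ((jp.1 : ℤ) + 2) jp.2.1 jp.2.2) with hchains
  have hchmem : ∀ c ∈ chains,
      (∃ s ∈ Mfin, c = degChain W H (posNu W H s)) ∨
      (∃ jp ∈ List.enum l, c = mkChain W H ((jp.1 : ℤ) + 2) jp.2.1 jp.2.2) := by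
    intro c hc
    rw [hchains, List.mem_append] at hc
    rcases hc with hc | hc
    · left
      rw [List.mem_map] at hc
      obtain ⟨s, hs, rfl⟩ := hc
      exact ⟨s, Finset.mem_toList.mp hs, rfl⟩
    · right
      rw [List.mem_map] at hc
      obtain ⟨jp, hjp, rfl⟩ := hc
      exact ⟨jp, hjp, rfl⟩
  have hpair_of_enum : ∀ jp ∈ List.enum l, jp.2.1 ∈ Dpos ∧ jp.2.2 ∈ Tpos := by
    intro jp hjp
    have := (mem_enumFrom_facts l 0 jp hjp).2
    exact ⟨hpairD _ this, hpairT _ this⟩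
  -- apply assemble
  refine Exists.imp (fun π h => h) (assemble W H f hinj chains
    ?_ ?_ ?_ ?_ ?_ ?_ ?_ ?_ ?_ ?_)
  · -- hlen
    intro c hc
    rcases hchmem c hc with ⟨s, hs, rfl⟩ | ⟨jp, hjp, rfl⟩
    · simp [degChain]
    · exact length_mkChain
  · -- hchain
    intro c hc
    rcases hchmem c hc with ⟨s, hs, rfl⟩ | ⟨jp, hjp, rfl⟩
    · exact chain'_degChain hW hH (hSfacts s (hMsub hs)).1
    · obtain ⟨h1, h2⟩ := hpair_of_enum jp hjp
      exact chain'_mkChain hW hH (by omega) (hDposSpec _ h1).1 (hTposSpec _ h2).1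
  · -- hnodup
    intro c hc
    rcases hchmem c hc with ⟨s, hs, rfl⟩ | ⟨jp, hjp, rfl⟩
    · exact nodup_degChain hW hH (hSfacts s (hMsub hs)).1
    · obtain ⟨h1, h2⟩ := hpair_of_enum jp hjp
      refine nodup_mkChain hW hH (by omega) (hDposSpec _ h1).1 (hTposSpec _ h2).1 ?_
      intro heq
      exact Finset.disjoint_left.mp hDTdisj h1 (heq ▸ h2)
  · -- hdisj
    rw [hchains, List.pairwise_append]
    refine ⟨?_, ?_, ?_⟩
    · rw [List.pairwise_map]
      have hnd : Mfin.toList.Nodup := Finset.nodup_toList Mfin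
      apply List.Pairwise.imp_of_mem ?_ hnd
      intro s s' hs hs' hne
      have hsS := hMsub (Finset.mem_toList.mp hs)
      have hs'S := hMsub (Finset.mem_toList.mp hs')
      intro z hz hz'
      refine degChain_disj_degChain hW hH (hSfacts s hsS).1 (hSfacts s' hs'S).1 ?_ ?_ z hz hz'
      · intro heq
        exact hne (hposNu_inj s hsS s' hs'S heq)
      · rw [(hSfacts s hsS).2, (hSfacts s' hs'S).2]
        exact hne
    · rw [List.pairwise_map]
      have hpe := pairwise_enumFrom l 0 hl5
      apply List.Pairwise.imp_of_mem ?_ hpe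
      intro jp jq hjp hjq hrel
      obtain ⟨hlt, hR1, hR2⟩ := hrel
      obtain ⟨hp1, hp2⟩ := hpair_of_enum jp hjp
      obtain ⟨hq1, hq2⟩ := hpair_of_enum jq hjq
      intro z hz hz'
      refine mkChain_disj hW hH (by omega) (by omega)
        (hDposSpec _ hp1).1 (hTposSpec _ hp2).1 (hDposSpec _ hq1).1 (hTposSpec _ hq2).1
        hR1 hR2 ?_ z hz hz'
      · intro heq
        have h1 := (hTposSpec _ hp2).2.1
        have h2 := (hTposSpec _ hq2).2.1
        have : jp.2.2 = jq.2.2 := by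
          have e1 : innerC W H jp.2.2 ∈ S' := h1
          have hpp := (hTposSpec _ hp2).1
          have hqq := (hTposSpec _ hq2).1
          -- innerC is injective on Tpos positions via S' membership
          have : jp.2.2 ∈ Tpos := hp2
          rw [hTpos, Finset.mem_image] at this
          obtain ⟨s, hsmem, hseq⟩ := this
          have : jq.2.2 ∈ Tpos := hq2
          rw [hTpos, Finset.mem_image] at this
          obtain ⟨s', hs'mem, hs'eq⟩ := this
          have i1 : innerC W H jp.2.2 = s := by
            rw [← hseq]; exact (hSfacts s (((hS'mem s).mp hsmem).1)).2
          have i2 : innerC W H jq.2.2 = s' := by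
            rw [← hs'eq]; exact (hSfacts s' (((hS'mem s').mp hs'mem).1)).2
          rw [heq, i2] at i1
          rw [← hseq, ← hs'eq, i1]
        have hmin : min jp.2.1 jp.2.2 ≤ jp.2.2 := min_le_right _ _
        have hmax : jp.2.2 ≤ max jp.2.1 jp.2.2 := le_max_right _ _
        exact hR2 ⟨this ▸ hmin, this ▸ hmax⟩
    · -- cross deg × mk
      intro c₁ hc₁ c₂ hc₂
      rw [List.mem_map] at hc₁ hc₂
      obtain ⟨s, hs, rfl⟩ := hc₁
      obtain ⟨jp, hjp, rfl⟩ := hc₂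
      have hsM := Finset.mem_toList.mp hs
      have hsS := hMsub hsM
      obtain ⟨hp1, hp2⟩ := hpair_of_enum jp hjp
      intro z hz hz'
      refine degChain_disj_mkChain hW hH (hSfacts s hsS).1
        (hDposSpec _ hp1).1 (hTposSpec _ hp2).1 (by omega) ?_ ?_ ?_ z hz hz'
      · -- posNu s ≠ jp.2.1
        intro heq
        have h1 : rad W H 1 (posNu W H s) ∈ Mimg :=
          (hMimgmem _).mpr ⟨s, hsM, rfl⟩
        have h2 := (hDposSpec _ hp1).2
        rw [← heq] at h2
        exact ((hD'mem _).mp h2).2 h1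
      · -- posNu s ≠ jp.2.2
        intro heq
        have h1 : rad W H 1 (posNu W H s) ∈ Dfin := ((hMmem s).mp hsM).2
        have h2 := (hTposSpec _ hp2).2.2
        rw [← heq] at h2
        exact h2 h1
      · -- inner cells differ
        rw [(hSfacts s hsS).2]
        have h2 := (hTposSpec _ hp2).2.1
        intro heq
        have : s ∈ S' := heq ▸ h2
        exact ((hS'mem s).mp this).2 hsM
  · -- hheadF
    intro c hc x hx
    rcases hchmem c hc with ⟨s, hs, rfl⟩ | ⟨jp, hjp, rfl⟩
    · rw [head?_degChain] at hx
      injection hx with hx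
      subst hx
      have hmem := ((hMmem s).mp hs).2
      rw [hDfin] at hmem
      exact (hFmem _).mp (Finset.mem_sdiff.mp hmem).1
    · obtain ⟨hp1, hp2⟩ := hpair_of_enum jp hjp
      rw [head?_mkChain hW hH (by omega) (hDposSpec _ hp1).1] at hx
      injection hx with hx
      subst hx
      have := (hDposSpec _ hp1).2
      have hd := ((hD'mem _).mp this).1
      rw [hDfin] at hd
      exact (hFmem _).mp (Finset.mem_sdiff.mp hd).1
  · -- hlastS
    intro c hc x hx
    rcases hchmem c hc with ⟨s, hs, rfl⟩ | ⟨jp, hjp, rfl⟩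
    · rw [getLast?_degChain] at hx
      injection hx with hx
      subst hx
      rw [(hSfacts s (hMsub hs)).2]
      exact (hSmem s).mp (hMsub hs)
    · obtain ⟨hp1, hp2⟩ := hpair_of_enum jp hjp
      rw [getLast?_mkChain] at hx
      injection hx with hx
      subst hx
      have := (hTposSpec _ hp2).2.1
      exact (hSmem _).mp (((hS'mem _).mp this).1)
  · -- hmidU
    intro c hc x hx
    rcases hchmem c hc with ⟨s, hs, rfl⟩ | ⟨jp, hjp, rfl⟩
    · have : x = rad W H 1 (posNu W H s) := by
        simpa [degChain] using hx
      subst this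
      exact onRing_not_inU hW hH (le_refl 1)
        (onRing_rad hW hH (le_refl 1) (hSfacts s (hMsub hs)).1)
    · obtain ⟨hp1, hp2⟩ := hpair_of_enum jp hjp
      have hproper1 := (hDposSpec _ hp1).1
      have hproper2 := (hTposSpec _ hp2).1
      have hnd : (mkChain W H ((jp.1:ℤ)+2) jp.2.1 jp.2.2).Nodup := by
        refine nodup_mkChain hW hH (by omega) hproper1 hproper2 ?_
        intro heq
        exact Finset.disjoint_left.mp hDTdisj hp1 (heq ▸ hp2)
      have hxc : x ∈ mkChain W H ((jp.1:ℤ)+2) jp.2.1 jp.2.2 := List.dropLast_subset _ hx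
      have hxlast := not_last_of_mem_dropLast hnd hx
      rw [getLast?_mkChain] at hxlast
      rcases mem_mkChain hxc with ⟨i, hi1, hi2, hceq⟩ | ⟨t, ht1, ht2, hceq⟩ | hceq
      · rcases hceq with rfl | rfl <;>
          exact onRing_not_inU hW hH (by omega) (onRing_rad hW hH (by omega) (by assumption))
      · have hper := sh_range hW hH (r := (jp.1:ℤ)+2) (by omega) hproper1
        have hper' := sh_range hW hH (r := (jp.1:ℤ)+2) (by omega) hproper2
        subst hceq
        exact onRing_not_inU hW hH (by omega)
          (onRing_rho hW hH (by omega) (by omega) (by omega))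
      · exact absurd (congrArg some hceq.symm) hxlast
  · -- hmidF
    intro c hc x hx
    rcases hchmem c hc with ⟨s, hs, rfl⟩ | ⟨jp, hjp, rfl⟩
    · have : x = innerC W H (posNu W H s) := by
        simpa [degChain] using hx
      subst this
      rw [(hSfacts s (hMsub hs)).2]
      exact ((hSmem s).mp (hMsub hs)).2
    · obtain ⟨hp1, hp2⟩ := hpair_of_enum jp hjp
      have hproper1 := (hDposSpec _ hp1).1
      have hproper2 := (hTposSpec _ hp2).1
      have hnd : (mkChain W H ((jp.1:ℤ)+2) jp.2.1 jp.2.2).Nodup := by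
        refine nodup_mkChain hW hH (by omega) hproper1 hproper2 ?_
        intro heq
        exact Finset.disjoint_left.mp hDTdisj hp1 (heq ▸ hp2)
      have hxc : x ∈ mkChain W H ((jp.1:ℤ)+2) jp.2.1 jp.2.2 := List.mem_of_mem_tail hx
      have hxhead := not_head_of_mem_tail hnd hx
      rw [head?_mkChain hW hH (by omega) hproper1] at hxhead
      intro hxF
      have hxFimg : x ∈ Fimg := (hFmem x).mpr hxF
      rcases mem_mkChain hxc with ⟨i, hi1, hi2, hceq⟩ | ⟨t, ht1, ht2, hceq⟩ | hceq
      · -- spoke cell in Fimg : must be on ring 1, i.e. a side cell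
        have honx : onRing W H i x := by
          rcases hceq with rfl | rfl <;> exact onRing_rad hW hH (by omega) (by assumption)
        have hxnU : ¬ inU W H x := onRing_not_inU hW hH (by omega) honx
        have hxD : x ∈ Dfin := by
          rw [hDmem]
          exact ⟨hxF, hxnU⟩
        have hon1 : onRing W H 1 x := side_onRing1 hW hH (hDside x hxD)
        have hi : i = 1 := onRing_eq hW hH (by omega) (le_refl 1) honx hon1
        subst hi
        rcases hceq with hceq | hceq
        · exact hxhead (congrArg some hceq.symm)
        · have := (hTposSpec _ hp2).2.2
          rw [← hceq] at this
          exact this hxD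
      · have hper := sh_range hW hH (r := (jp.1:ℤ)+2) (by omega) hproper1
        have hper' := sh_range hW hH (r := (jp.1:ℤ)+2) (by omega) hproper2
        have honx : onRing W H ((jp.1:ℤ)+2) x := by
          rw [hceq]
          exact onRing_rho hW hH (by omega) (by omega) (by omega)
        have hxnU : ¬ inU W H x := onRing_not_inU hW hH (by omega) honx
        have hxD : x ∈ Dfin := by
          rw [hDmem]
          exact ⟨hxF, hxnU⟩
        have hon1 : onRing W H 1 x := side_onRing1 hW hH (hDside x hxD)
        have := onRing_eq hW hH (by omega) (le_refl 1) honx hon1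
        omega
      · subst hceq
        have := (hTposSpec _ hp2).2.1
        exact ((hSmem _).mp (((hS'mem _).mp this).1)).2 hxF
  · -- hcovD
    intro y hyF hyU
    have hyD : y ∈ Dfin := by rw [hDmem]; exact ⟨hyF, hyU⟩
    by_cases hyM : y ∈ Mimg
    · obtain ⟨s, hsM, hseq⟩ := (hMimgmem y).mp hyM
      refine ⟨degChain W H (posNu W H s), ?_, ?_⟩
      · rw [hchains, List.mem_append]
        left
        exact List.mem_map_of_mem (Finset.mem_toList.mpr hsM)
      · rw [head?_degChain, hseq]
    · have hyD' : y ∈ D' := (hD'mem y).mpr ⟨hyD, hyM⟩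
      have hyp : posOf W H y ∈ Dpos := by
        rw [hDpos]
        exact Finset.mem_image_of_mem _ hyD'
      rw [← hl1, List.mem_toFinset, List.mem_map] at hyp
      obtain ⟨x, hxl, hxeq⟩ := hyp
      obtain ⟨i, hi⟩ := mem_enumFrom_of_mem l 0 x hxl
      refine ⟨mkChain W H ((i:ℤ)+2) x.1 x.2, ?_, ?_⟩
      · rw [hchains, List.mem_append]
        right
        rw [List.mem_map]
        exact ⟨(i, x), hi, rfl⟩
      · have hp1 : x.1 ∈ Dpos := hpairD x hxl
        rw [head?_mkChain hW hH (by omega) (hDposSpec _ hp1).1]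
        rw [hxeq, (side_posOf hW hH (hDside y hyD)).2]
  · -- hcovS
    intro y hyU hyF
    have hyS : y ∈ Sfin := by rw [hSmem]; exact ⟨hyU, hyF⟩
    by_cases hyM : y ∈ Mfin
    · refine ⟨degChain W H (posNu W H y), ?_, ?_⟩
      · rw [hchains, List.mem_append]
        left
        exact List.mem_map_of_mem (Finset.mem_toList.mpr hyM)
      · rw [getLast?_degChain, (hSfacts y hyS).2]
    · have hyS' : y ∈ S' := (hS'mem y).mpr ⟨hyS, hyM⟩
      have hyp : posNu W H y ∈ Tpos := by
        rw [hTpos]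
        exact Finset.mem_image_of_mem _ hyS'
      rw [← hl2, List.mem_toFinset, List.mem_map] at hyp
      obtain ⟨x, hxl, hxeq⟩ := hyp
      obtain ⟨i, hi⟩ := mem_enumFrom_of_mem l 0 x hxl
      refine ⟨mkChain W H ((i:ℤ)+2) x.1 x.2, ?_, ?_⟩
      · rw [hchains, List.mem_append]
        right
        rw [List.mem_map]
        exact ⟨(i, x), hi, rfl⟩
      · rw [getLast?_mkChain, hxeq, (hSfacts y hyS).2]

end main

end Glob

/-- for rectangular patterns and the restricting set `A_⊕`, local and
global admissibility coincide: a function `f` on the box `{0,…,n₁−1} × {0,…,n₂−1}`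
with displacements in `A_⊕` extends to some `π ∈ Ω(A_⊕)` if and only if `f` is
injective on the box and `Int(U, A_⊕) ⊆ f(U)`. -/
theorem globally_admissible_iff_A_oplus
    (n₁ n₂ : ℕ) (h₁ : 1 ≤ n₁) (h₂ : 1 ≤ n₂)
    (f : ℤ × ℤ → ℤ × ℤ)
    (hf : ∀ u ∈ box2 n₁ n₂, f u - u ∈ A_oplus) :
    (∃ π ∈ Omega2 A_oplus, ∀ u ∈ box2 n₁ n₂, π u = f u) ↔
      (Set.InjOn f (box2 n₁ n₂) ∧
        interior2 (box2 n₁ n₂) A_oplus ⊆ f '' (box2 n₁ n₂)) := by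
  have hbox : ∀ c : ℤ × ℤ, c ∈ box2 n₁ n₂ ↔ Glob.inU (n₁:ℤ) (n₂:ℤ) c := fun c => Iff.rfl
  have hW : (1:ℤ) ≤ (n₁:ℤ) := by exact_mod_cast h₁
  have hH : (1:ℤ) ≤ (n₂:ℤ) := by exact_mod_cast h₂
  constructor
  · rintro ⟨π, ⟨hbij, hA⟩, hext⟩
    constructor
    · intro u hu v hv huv
      apply hbij.1
      rw [hext u hu, hext v hv, huv]
    · intro u hu
      obtain ⟨huU, hintu⟩ := hu
      obtain ⟨v, hv⟩ := hbij.2 u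
      have hv_box : v ∈ box2 n₁ n₂ := by
        have ha := hA v
        have hveq : u - (π v - v) = v := by rw [hv]; ring
        rw [← hveq]
        exact hintu (π v - v) ha
      exact ⟨v, hv_box, by rw [← hext v hv_box, hv]⟩
  · rintro ⟨hinj, hint⟩
    have hfA : ∀ u, Glob.inU (n₁:ℤ) (n₂:ℤ) u → (Glob.ustep u (f u) ∨ f u = u) := by
      intro u hu
      have h5 := hf u ((hbox u).mpr hu)
      simp only [A_oplus, Set.mem_insert_iff, Set.mem_singleton_iff, Prod.ext_iff,
        Prod.fst_sub, Prod.snd_sub] at h5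
      unfold Glob.ustep
      simp only [Prod.ext_iff]
      omega
    have hinj' : ∀ u v, Glob.inU (n₁:ℤ) (n₂:ℤ) u → Glob.inU (n₁:ℤ) (n₂:ℤ) v →
        f u = f v → u = v := by
      intro u v hu hv huv
      exact hinj ((hbox u).mpr hu) ((hbox v).mpr hv) huv
    have hbnd : ∀ s, Glob.inU (n₁:ℤ) (n₂:ℤ) s →
        ¬ (∃ u, Glob.inU (n₁:ℤ) (n₂:ℤ) u ∧ f u = s) →
        (s.1 = 0 ∨ s.1 = (n₁:ℤ) - 1 ∨ s.2 = 0 ∨ s.2 = (n₂:ℤ) - 1) := by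
      intro s hsU hsF
      by_contra hcon
      push_neg at hcon
      have hsint : s ∈ interior2 (box2 n₁ n₂) A_oplus := by
        refine ⟨(hbox s).mpr hsU, ?_⟩
        intro a ha
        simp only [A_oplus, Set.mem_insert_iff, Set.mem_singleton_iff] at ha
        have hsU' : 0 ≤ s.1 ∧ s.1 < (n₁:ℤ) ∧ 0 ≤ s.2 ∧ s.2 < (n₂:ℤ) := hsU
        rcases ha with rfl|rfl|rfl|rfl|rfl <;>
          exact ⟨by simp; omega, by simp; omega, by simp; omega, by simp; omega⟩
      obtain ⟨u, hu, huf⟩ := hint hsint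
      exact hsF ⟨u, (hbox u).mp hu, huf⟩
    obtain ⟨π, hbij, hext, hmove⟩ := Glob.main_construct hW hH f hfA hinj' hbnd
    refine ⟨π, ⟨hbij, ?_⟩, fun u hu => hext u ((hbox u).mp hu)⟩
    intro x
    by_cases hx : Glob.inU (n₁:ℤ) (n₂:ℤ) x
    · rw [hext x hx]
      exact hf x ((hbox x).mpr hx)
    · rcases hmove x hx with h | h
      · rw [h]
        simp only [sub_self]
        left
        rfl
      · unfold Glob.ustep at h
        simp only [A_oplus, Set.mem_insert_iff, Set.mem_singleton_iff, Prod.ext_iff,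
          Prod.fst_sub, Prod.snd_sub]
        omega
end

section
/- Let A_L = {(0,0),(1,0),(0,1)} ⊆ ℤ². Let n₁, n₂ ≥ 1, let U = {0,…,n₁−1} × {0,…,n₂−1} ⊆ ℤ², and let f : U → ℤ² satisfy f(u) − u ∈ A_L for all u ∈ U. Then there exists π ∈ Ω(A_L) with π(u) = f(u) for all u ∈ U if and only if f is injective and Int(U, A_L) := {u ∈ U : u − a ∈ U for every a ∈ A_L} is contained in the image f(U). -/
/-- The restricting set `A_L = {(0,0),(1,0),(0,1)} ⊆ ℤ²`. -/
def A_L : Set (ℤ × ℤ) := {(0, 0), (1, 0), (0, 1)}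

lemma mem_A_L {x : ℤ × ℤ} : x ∈ A_L ↔ x = (0, 0) ∨ x = (1, 0) ∨ x = (0, 1) := by
  simp [A_L]

lemma mem_box2 {n₁ n₂ : ℕ} {x : ℤ × ℤ} :
    x ∈ box2 n₁ n₂ ↔ 0 ≤ x.1 ∧ x.1 < (n₁ : ℤ) ∧ 0 ≤ x.2 ∧ x.2 < (n₂ : ℤ) := Iff.rfl

section Ext

variable (n₁ n₂ : ℕ) (f : ℤ × ℤ → ℤ × ℤ)

open Classical in
/-- The extension of `f` to a permutation of `ℤ²`. -/
noncomputable def piExt (p : ℤ × ℤ) : ℤ × ℤ :=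
  if p ∈ box2 n₁ n₂ then f p
  else if 0 ≤ p.1 ∧ p.1 < (n₁:ℤ) ∧ p.2 < 0 ∧ (p.1, (0:ℤ)) ∉ f '' box2 n₁ n₂ then (p.1, p.2+1)
  else if p.1 < 0 ∧ 1 ≤ p.2 ∧ p.2 < (n₂:ℤ) ∧ ((0:ℤ), p.2) ∉ f '' box2 n₁ n₂ then (p.1+1, p.2)
  else if 0 ≤ p.1 ∧ p.1 < (n₁:ℤ) ∧ (n₂:ℤ) ≤ p.2 ∧ (p.1, (n₂:ℤ)) ∈ f '' box2 n₁ n₂ then (p.1, p.2+1)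
  else if (n₁:ℤ) ≤ p.1 ∧ 0 ≤ p.2 ∧ p.2 < (n₂:ℤ) ∧ ((n₁:ℤ), p.2) ∈ f '' box2 n₁ n₂ then (p.1+1, p.2)
  else p

open Classical in
/-- The inverse of `piExt`. -/
noncomputable def sigmaExt (q : ℤ × ℤ) : ℤ × ℤ :=
  if q ∈ f '' box2 n₁ n₂ then Function.invFunOn f (box2 n₁ n₂) q
  else if q ∈ box2 n₁ n₂ then (if q.2 = 0 then (q.1, -1) else (q.1 - 1, q.2))
  else if 0 ≤ q.1 ∧ q.1 < (n₁:ℤ) ∧ q.2 < 0 ∧ (q.1, (0:ℤ)) ∉ f '' box2 n₁ n₂ then (q.1, q.2-1)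
  else if q.1 < 0 ∧ 1 ≤ q.2 ∧ q.2 < (n₂:ℤ) ∧ ((0:ℤ), q.2) ∉ f '' box2 n₁ n₂ then (q.1-1, q.2)
  else if 0 ≤ q.1 ∧ q.1 < (n₁:ℤ) ∧ (n₂:ℤ) ≤ q.2 ∧ (q.1, (n₂:ℤ)) ∈ f '' box2 n₁ n₂ then (q.1, q.2-1)
  else if (n₁:ℤ) ≤ q.1 ∧ 0 ≤ q.2 ∧ q.2 < (n₂:ℤ) ∧ ((n₁:ℤ), q.2) ∈ f '' box2 n₁ n₂ then (q.1-1, q.2)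
  else q

variable {n₁ n₂ f}

/-- Coordinate bounds for points in the image of the box. -/
lemma img_bounds (hf : ∀ u ∈ box2 n₁ n₂, f u - u ∈ A_L) {q : ℤ × ℤ}
    (hq : q ∈ f '' box2 n₁ n₂) :
    0 ≤ q.1 ∧ q.1 ≤ (n₁:ℤ) ∧ 0 ≤ q.2 ∧ q.2 ≤ (n₂:ℤ) ∧ q.1 + q.2 < (n₁:ℤ) + (n₂:ℤ) := by
  obtain ⟨u, hu, rfl⟩ := hq
  have h := (mem_A_L).mp (hf u hu)
  have h' : (f u).1 - u.1 = 0 ∧ (f u).2 - u.2 = 0 ∨ (f u).1 - u.1 = 1 ∧ (f u).2 - u.2 = 0 ∨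
      (f u).1 - u.1 = 0 ∧ (f u).2 - u.2 = 1 := by
    simpa [Prod.ext_iff] using h
  rw [mem_box2] at hu
  omega

lemma left_inv (h₁ : 1 ≤ n₁) (h₂ : 1 ≤ n₂) (hf : ∀ u ∈ box2 n₁ n₂, f u - u ∈ A_L)
    (hinj : Set.InjOn f (box2 n₁ n₂)) :
    ∀ p, sigmaExt n₁ n₂ f (piExt n₁ n₂ f p) = p := by
  intro p
  by_cases hU : p ∈ box2 n₁ n₂
  · rw [piExt, if_pos hU, sigmaExt, if_pos ⟨p, hU, rfl⟩]
    exact hinj.leftInvOn_invFunOn hU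
  · rw [piExt, if_neg hU]
    by_cases h1 : 0 ≤ p.1 ∧ p.1 < (n₁:ℤ) ∧ p.2 < 0 ∧ (p.1, (0:ℤ)) ∉ f '' box2 n₁ n₂
    · rw [if_pos h1]
      by_cases hz : p.2 + 1 = 0
      · have hqU : ((p.1, p.2+1) : ℤ × ℤ) ∈ box2 n₁ n₂ := by
          rw [mem_box2]; dsimp; omega
        have hqf : ((p.1, p.2+1) : ℤ × ℤ) ∉ f '' box2 n₁ n₂ := by
          rw [show ((p.1, p.2+1) : ℤ × ℤ) = (p.1, (0:ℤ)) by rw [hz]]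
          exact h1.2.2.2
        rw [sigmaExt, if_neg hqf, if_pos hqU, if_pos hz]
        exact Prod.ext rfl (by omega)
      · have hqf : ((p.1, p.2+1) : ℤ × ℤ) ∉ f '' box2 n₁ n₂ := fun h =>
          absurd (img_bounds hf h).2.2.1 (by dsimp; omega)
        have hqU : ((p.1, p.2+1) : ℤ × ℤ) ∉ box2 n₁ n₂ := by
          rw [mem_box2]; dsimp; omega
        have hc : 0 ≤ p.1 ∧ p.1 < (n₁:ℤ) ∧ p.2 + 1 < 0 ∧ (p.1, (0:ℤ)) ∉ f '' box2 n₁ n₂ :=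
          ⟨h1.1, h1.2.1, by omega, h1.2.2.2⟩
        rw [sigmaExt, if_neg hqf, if_neg hqU, if_pos hc]
        exact Prod.ext rfl (by dsimp; omega)
    · rw [if_neg h1]
      by_cases h2 : p.1 < 0 ∧ 1 ≤ p.2 ∧ p.2 < (n₂:ℤ) ∧ ((0:ℤ), p.2) ∉ f '' box2 n₁ n₂
      · rw [if_pos h2]
        by_cases hz : p.1 + 1 = 0
        · have hqU : ((p.1+1, p.2) : ℤ × ℤ) ∈ box2 n₁ n₂ := by
            rw [mem_box2]; dsimp; omega
          have hqf : ((p.1+1, p.2) : ℤ × ℤ) ∉ f '' box2 n₁ n₂ := by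
            rw [show ((p.1+1, p.2) : ℤ × ℤ) = ((0:ℤ), p.2) by rw [hz]]
            exact h2.2.2.2
          rw [sigmaExt, if_neg hqf, if_pos hqU, if_neg (by dsimp; omega : ¬((p.1+1, p.2) : ℤ × ℤ).2 = 0)]
          exact Prod.ext (by dsimp; omega) rfl
        · have hqf : ((p.1+1, p.2) : ℤ × ℤ) ∉ f '' box2 n₁ n₂ := fun h =>
            absurd (img_bounds hf h).1 (by dsimp; omega)
          have hqU : ((p.1+1, p.2) : ℤ × ℤ) ∉ box2 n₁ n₂ := by
            rw [mem_box2]; dsimp; omega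
          have hc3 : ¬(0 ≤ ((p.1+1, p.2) : ℤ × ℤ).1 ∧ ((p.1+1, p.2) : ℤ × ℤ).1 < (n₁:ℤ) ∧ ((p.1+1, p.2) : ℤ × ℤ).2 < 0 ∧ (((p.1+1, p.2) : ℤ × ℤ).1, (0:ℤ)) ∉ f '' box2 n₁ n₂) := by
            dsimp; omega
          have hc : p.1 + 1 < 0 ∧ 1 ≤ p.2 ∧ p.2 < (n₂:ℤ) ∧ ((0:ℤ), p.2) ∉ f '' box2 n₁ n₂ :=
            ⟨by omega, h2.2.1, h2.2.2.1, h2.2.2.2⟩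
          rw [sigmaExt, if_neg hqf, if_neg hqU, if_neg hc3, if_pos hc]
          exact Prod.ext (by dsimp; omega) rfl
      · rw [if_neg h2]
        by_cases h3 : 0 ≤ p.1 ∧ p.1 < (n₁:ℤ) ∧ (n₂:ℤ) ≤ p.2 ∧ (p.1, (n₂:ℤ)) ∈ f '' box2 n₁ n₂
        · rw [if_pos h3]
          have hqf : ((p.1, p.2+1) : ℤ × ℤ) ∉ f '' box2 n₁ n₂ := fun h =>
            absurd (img_bounds hf h).2.2.2.1 (by dsimp; omega)
          have hqU : ((p.1, p.2+1) : ℤ × ℤ) ∉ box2 n₁ n₂ := by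
            rw [mem_box2]; dsimp; omega
          rw [sigmaExt, if_neg hqf, if_neg hqU, if_neg (by dsimp; omega),
            if_neg (by dsimp; omega),
            if_pos (show 0 ≤ p.1 ∧ p.1 < (n₁:ℤ) ∧ (n₂:ℤ) ≤ p.2 + 1 ∧ (p.1, (n₂:ℤ)) ∈ f '' box2 n₁ n₂ from ⟨h3.1, h3.2.1, by omega, h3.2.2.2⟩)]
          exact Prod.ext rfl (by dsimp; omega)
        · rw [if_neg h3]
          by_cases h4 : (n₁:ℤ) ≤ p.1 ∧ 0 ≤ p.2 ∧ p.2 < (n₂:ℤ) ∧ ((n₁:ℤ), p.2) ∈ f '' box2 n₁ n₂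
          · rw [if_pos h4]
            have hqf : ((p.1+1, p.2) : ℤ × ℤ) ∉ f '' box2 n₁ n₂ := fun h =>
              absurd (img_bounds hf h).2.1 (by dsimp; omega)
            have hqU : ((p.1+1, p.2) : ℤ × ℤ) ∉ box2 n₁ n₂ := by
              rw [mem_box2]; dsimp; omega
            rw [sigmaExt, if_neg hqf, if_neg hqU, if_neg (by dsimp; omega),
              if_neg (by dsimp; omega), if_neg (by dsimp; omega),
              if_pos (show (n₁:ℤ) ≤ p.1 + 1 ∧ 0 ≤ p.2 ∧ p.2 < (n₂:ℤ) ∧ ((n₁:ℤ), p.2) ∈ f '' box2 n₁ n₂ from ⟨by omega, h4.2.1, h4.2.2.1, h4.2.2.2⟩)]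
            exact Prod.ext (by dsimp; omega) rfl
          · rw [if_neg h4]
            have hpf : p ∉ f '' box2 n₁ n₂ := by
              intro hp
              have hb := img_bounds hf hp
              rw [mem_box2] at hU
              rcases (by omega : p.1 = (n₁:ℤ) ∧ p.2 < (n₂:ℤ) ∨ p.2 = (n₂:ℤ) ∧ p.1 < (n₁:ℤ)) with ⟨he, hl⟩ | ⟨he, hl⟩
              · exact h4 ⟨le_of_eq he.symm, hb.2.2.1, hl, by rw [← he]; exact hp⟩
              · exact h3 ⟨hb.1, hl, le_of_eq he.symm, by rw [← he]; exact hp⟩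
            rw [sigmaExt, if_neg hpf, if_neg hU, if_neg h1, if_neg h2, if_neg h3, if_neg h4]

lemma right_inv (hf : ∀ u ∈ box2 n₁ n₂, f u - u ∈ A_L)
    (hint : interior2 (box2 n₁ n₂) A_L ⊆ f '' (box2 n₁ n₂)) :
    ∀ q, piExt n₁ n₂ f (sigmaExt n₁ n₂ f q) = q := by
  intro q
  by_cases hqf : q ∈ f '' box2 n₁ n₂
  · rw [sigmaExt, if_pos hqf]
    obtain ⟨u, hu, rfl⟩ := hqf
    have hmem := Function.invFunOn_mem (f := f) ⟨u, hu, rfl⟩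
    rw [piExt, if_pos hmem]
    exact Function.invFunOn_eq (f := f) ⟨u, hu, rfl⟩
  · rw [sigmaExt, if_neg hqf]
    by_cases hU : q ∈ box2 n₁ n₂
    · rw [if_pos hU]
      have hub := mem_box2.mp hU
      have hbd : q.1 = 0 ∨ q.2 = 0 := by
        by_contra hc
        push_neg at hc
        apply hqf
        apply hint
        refine ⟨hU, ?_⟩
        intro a ha
        rcases mem_A_L.mp ha with rfl | rfl | rfl <;>
          · rw [mem_box2]
            simp only [Prod.fst_sub, Prod.snd_sub]
            omega
      by_cases hz : q.2 = 0
      · rw [if_pos hz]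
        have hqU : ((q.1, (-1:ℤ)) : ℤ × ℤ) ∉ box2 n₁ n₂ := by rw [mem_box2]; dsimp; omega
        have hq0 : ((q.1, (0:ℤ)) : ℤ × ℤ) ∉ f '' box2 n₁ n₂ := by
          rw [show ((q.1, (0:ℤ)) : ℤ × ℤ) = q from Prod.ext rfl hz.symm]; exact hqf
        rw [piExt, if_neg hqU, if_pos (show 0 ≤ ((q.1, (-1:ℤ)) : ℤ × ℤ).1 ∧ ((q.1, (-1:ℤ)) : ℤ × ℤ).1 < (n₁:ℤ) ∧ ((q.1, (-1:ℤ)) : ℤ × ℤ).2 < 0 ∧ (((q.1, (-1:ℤ)) : ℤ × ℤ).1, (0:ℤ)) ∉ f '' box2 n₁ n₂ from ⟨hub.1, hub.2.1, by norm_num, hq0⟩)]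
        exact Prod.ext rfl (by dsimp; omega)
      · rw [if_neg hz]
        have hq1 : q.1 = 0 := by rcases hbd with h | h; exact h; exact absurd h hz
        have hqU : ((q.1 - 1, q.2) : ℤ × ℤ) ∉ box2 n₁ n₂ := by rw [mem_box2]; dsimp; omega
        have hq0 : (((0:ℤ), q.2) : ℤ × ℤ) ∉ f '' box2 n₁ n₂ := by
          rw [show (((0:ℤ), q.2) : ℤ × ℤ) = q from Prod.ext hq1.symm rfl]; exact hqf
        rw [piExt, if_neg hqU, if_neg (by dsimp; omega),
          if_pos (show ((q.1 - 1, q.2) : ℤ × ℤ).1 < 0 ∧ 1 ≤ ((q.1 - 1, q.2) : ℤ × ℤ).2 ∧ ((q.1 - 1, q.2) : ℤ × ℤ).2 < (n₂:ℤ) ∧ ((0:ℤ), ((q.1 - 1, q.2) : ℤ × ℤ).2) ∉ f '' box2 n₁ n₂ from ⟨by dsimp; omega, by dsimp; omega, hub.2.2.2, hq0⟩)]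
        exact Prod.ext (by dsimp; omega) rfl
    · rw [if_neg hU]
      by_cases h1 : 0 ≤ q.1 ∧ q.1 < (n₁:ℤ) ∧ q.2 < 0 ∧ (q.1, (0:ℤ)) ∉ f '' box2 n₁ n₂
      · rw [if_pos h1]
        have hqU : ((q.1, q.2 - 1) : ℤ × ℤ) ∉ box2 n₁ n₂ := by rw [mem_box2]; dsimp; omega
        rw [piExt, if_neg hqU,
          if_pos (show 0 ≤ q.1 ∧ q.1 < (n₁:ℤ) ∧ q.2 - 1 < 0 ∧ (q.1, (0:ℤ)) ∉ f '' box2 n₁ n₂ from ⟨h1.1, h1.2.1, by omega, h1.2.2.2⟩)]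
        exact Prod.ext rfl (by dsimp; omega)
      · rw [if_neg h1]
        by_cases h2 : q.1 < 0 ∧ 1 ≤ q.2 ∧ q.2 < (n₂:ℤ) ∧ ((0:ℤ), q.2) ∉ f '' box2 n₁ n₂
        · rw [if_pos h2]
          have hqU : ((q.1 - 1, q.2) : ℤ × ℤ) ∉ box2 n₁ n₂ := by rw [mem_box2]; dsimp; omega
          rw [piExt, if_neg hqU, if_neg (by dsimp; omega),
            if_pos (show ((q.1 - 1, q.2) : ℤ × ℤ).1 < 0 ∧ 1 ≤ ((q.1 - 1, q.2) : ℤ × ℤ).2 ∧ ((q.1 - 1, q.2) : ℤ × ℤ).2 < (n₂:ℤ) ∧ ((0:ℤ), ((q.1 - 1, q.2) : ℤ × ℤ).2) ∉ f '' box2 n₁ n₂ from ⟨by dsimp; omega, h2.2.1, h2.2.2.1, h2.2.2.2⟩)]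
          exact Prod.ext (by dsimp; omega) rfl
        · rw [if_neg h2]
          by_cases h3 : 0 ≤ q.1 ∧ q.1 < (n₁:ℤ) ∧ (n₂:ℤ) ≤ q.2 ∧ (q.1, (n₂:ℤ)) ∈ f '' box2 n₁ n₂
          · rw [if_pos h3]
            have hne : q.2 ≠ (n₂:ℤ) := by
              intro he
              exact hqf (by rw [show q = ((q.1, (n₂:ℤ)) : ℤ × ℤ) from Prod.ext rfl he]; exact h3.2.2.2)
            have hqU : ((q.1, q.2 - 1) : ℤ × ℤ) ∉ box2 n₁ n₂ := by rw [mem_box2]; dsimp; omega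
            rw [piExt, if_neg hqU, if_neg (by dsimp; omega), if_neg (by dsimp; omega),
              if_pos (show 0 ≤ q.1 ∧ q.1 < (n₁:ℤ) ∧ (n₂:ℤ) ≤ q.2 - 1 ∧ (q.1, (n₂:ℤ)) ∈ f '' box2 n₁ n₂ from ⟨h3.1, h3.2.1, by omega, h3.2.2.2⟩)]
            exact Prod.ext rfl (by dsimp; omega)
          · rw [if_neg h3]
            by_cases h4 : (n₁:ℤ) ≤ q.1 ∧ 0 ≤ q.2 ∧ q.2 < (n₂:ℤ) ∧ ((n₁:ℤ), q.2) ∈ f '' box2 n₁ n₂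
            · rw [if_pos h4]
              have hne : q.1 ≠ (n₁:ℤ) := by
                intro he
                exact hqf (by rw [show q = (((n₁:ℤ), q.2) : ℤ × ℤ) from Prod.ext he rfl]; exact h4.2.2.2)
              have hqU : ((q.1 - 1, q.2) : ℤ × ℤ) ∉ box2 n₁ n₂ := by rw [mem_box2]; dsimp; omega
              rw [piExt, if_neg hqU, if_neg (by dsimp; omega), if_neg (by dsimp; omega),
                if_neg (by dsimp; omega),
                if_pos (show (n₁:ℤ) ≤ q.1 - 1 ∧ 0 ≤ q.2 ∧ q.2 < (n₂:ℤ) ∧ ((n₁:ℤ), q.2) ∈ f '' box2 n₁ n₂ from ⟨by omega, h4.2.1, h4.2.2.1, h4.2.2.2⟩)]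
              exact Prod.ext (by dsimp; omega) rfl
            · rw [if_neg h4]
              rw [piExt, if_neg hU, if_neg h1, if_neg h2, if_neg h3, if_neg h4]

end Ext

/-- for rectangular patterns and the restricting set `A_L`, local and
global admissibility coincide: a function `f` on the box `{0,…,n₁−1} × {0,…,n₂−1}`
with displacements in `A_L` extends to some `π ∈ Ω(A_L)` if and only if `f` is
injective on the box and `Int(U, A_L) ⊆ f(U)`. -/
theorem globally_admissible_iff_A_L
    (n₁ n₂ : ℕ) (h₁ : 1 ≤ n₁) (h₂ : 1 ≤ n₂)
    (f : ℤ × ℤ → ℤ × ℤ)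
    (hf : ∀ u ∈ box2 n₁ n₂, f u - u ∈ A_L) :
    (∃ π ∈ Omega2 A_L, ∀ u ∈ box2 n₁ n₂, π u = f u) ↔
      (Set.InjOn f (box2 n₁ n₂) ∧
        interior2 (box2 n₁ n₂) A_L ⊆ f '' (box2 n₁ n₂)) := by
  constructor
  · rintro ⟨π, ⟨hbij, hdisp⟩, hagree⟩
    constructor
    · intro u hu v hv huv
      apply hbij.1
      rw [hagree u hu, hagree v hv, huv]
    · rintro u ⟨hu, hint⟩
      obtain ⟨v, hv⟩ := hbij.2 u
      have ha := mem_A_L.mp (hdisp v)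
      have hvmem : v ∈ box2 n₁ n₂ := by
        rcases ha with h | h | h
        · have : v = u - (0, 0) := by rw [← hv, ← h]; abel
          rw [this]; exact hint _ (by simp [A_L])
        · have : v = u - (1, 0) := by rw [← hv, ← h]; abel
          rw [this]; exact hint _ (by simp [A_L])
        · have : v = u - (0, 1) := by rw [← hv, ← h]; abel
          rw [this]; exact hint _ (by simp [A_L])
      exact ⟨v, hvmem, by rw [← hagree v hvmem, hv]⟩
  · rintro ⟨hinj, hint⟩
    refine ⟨piExt n₁ n₂ f, ⟨?_, ?_⟩, ?_⟩
    · exact Function.bijective_iff_has_inverse.mpr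
        ⟨sigmaExt n₁ n₂ f, left_inv h₁ h₂ hf hinj, right_inv hf hint⟩
    · intro x
      rw [piExt]
      split_ifs with h0 h1 h2 h3 h4
      · exact hf x h0
      · rw [mem_A_L]; right; right; exact Prod.ext (by dsimp; omega) (by dsimp; omega)
      · rw [mem_A_L]; right; left; exact Prod.ext (by dsimp; omega) (by dsimp; omega)
      · rw [mem_A_L]; right; right; exact Prod.ext (by dsimp; omega) (by dsimp; omega)
      · rw [mem_A_L]; right; left; exact Prod.ext (by dsimp; omega) (by dsimp; omega)
      · rw [mem_A_L]; left; exact Prod.ext (by dsimp; omega) (by dsimp; omega)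
    · intro u hu
      rw [piExt, if_pos hu]
end
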